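/- arXiv:2212.12080 — 8 statements merged into one kernel-verified Lean document; each statement's English description precedes it below -/
import Mathlib

section
/- Let μ > 0 and p > 1 be real numbers, and let (x_j), (p_j), (A_j), (y_j) be nonnegative sequences indexed by a countable set J, with (y_j) summable, satisfying: (1) Σ_j p_j = 1; (2) y_j ≥ x_j for all j; (3) (1 − p_j) x_j ≤ 2 Σ_{k ≠ j} x_k for all j; (4) A_j ≤ x_j(1 − p_j) + p_j^{1/p} (Σ_{k ≠ j} x_k^p)^{1/p} (1 − p_j)^{1/p'} for all j, where p' = p/(p−1). Then there exists a constant C_0 depending only on p and μ such that for every C ≥ C_0, Σ_j μ A_j^p + Σ_j μ C^{(p−1)/p} A_j y_j^{p−1} ≤ C ( (Σ_j y_j)^p − Σ_j y_j^p ). -/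
universe u

section aux

variable {J : Type u} [DecidableEq J]

lemma aux_tne (f : J → ℝ) (j : J) :
    (∑' k : {k : J // k ≠ j}, f k) = ∑' k, if k = j then 0 else f k := by
  classical
  rw [show (∑' k : {k : J // k ≠ j}, f (k : J)) = ∑' k : ({k : J | k ≠ j} : Set J), f k from rfl,
    tsum_subtype]
  refine tsum_congr fun k => ?_
  by_cases h : k = j <;> simp [Set.indicator, h]

lemma aux_tne_eq {f : J → ℝ} (hf : Summable f) (j : J) :
    (∑' k : {k : J // k ≠ j}, f k) = (∑' k, f k) - f j := by
  classical
  rw [aux_tne]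
  have h := Summable.tsum_eq_add_tsum_ite hf j
  linarith

lemma aux_rpow_split {a : ℝ} (ha : 0 ≤ a) {p : ℝ} (hp : 1 < p) :
    a ^ p = a ^ (p - 1) * a := by
  rcases eq_or_lt_of_le ha with h | h
  · rw [← h, Real.zero_rpow (by linarith), mul_zero]
  · rw [← Real.rpow_add_one (ne_of_gt h) (p - 1), sub_add_cancel]

lemma aux_bernoulli {a b p : ℝ} (ha : 0 ≤ a) (hab : a ≤ b) (hp : 1 < p) :
    a ^ p + b ^ p + (p - 1) * (a * b ^ (p - 1)) ≤ (a + b) ^ p := by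
  have hb : 0 ≤ b := ha.trans hab
  rcases eq_or_lt_of_le hb with h | hbpos
  · have ha0 : a = 0 := le_antisymm (hab.trans h.symm.le) ha
    simp [ha0, ← h, Real.zero_rpow (by linarith : p ≠ 0)]
  · have key : b ^ p + p * (a * b ^ (p - 1)) ≤ (a + b) ^ p := by
      have hdiv : (0:ℝ) ≤ a / b := by positivity
      have hber : 1 + p * (a / b) ≤ (1 + a / b) ^ p :=
        one_add_mul_self_le_rpow_one_add (by linarith) hp.le
      have h1 : (a + b) ^ p = b ^ p * (1 + a / b) ^ p := by
        rw [← Real.mul_rpow hb (by positivity)]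
        congr 1
        field_simp
        ring
      have h2 : b ^ p * (1 + p * (a / b)) ≤ b ^ p * (1 + a / b) ^ p :=
        mul_le_mul_of_nonneg_left hber (Real.rpow_nonneg hb p)
      have h3 : b ^ p * (1 + p * (a / b)) = b ^ p + p * (a * b ^ (p - 1)) := by
        rw [aux_rpow_split hb hp]
        field_simp
      rw [h1]
      linarith
    have hap : a ^ p ≤ a * b ^ (p - 1) := by
      rw [aux_rpow_split ha hp]
      exact mul_le_mul_of_nonneg_right
        (Real.rpow_le_rpow ha hab (by linarith)) ha |>.trans_eq (mul_comm _ _)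
    linarith

lemma aux_add_pow {a b p : ℝ} (ha : 0 ≤ a) (hb : 0 ≤ b) (hp : 1 < p) :
    (a + b) ^ p ≤ 2 ^ p * (a ^ p + b ^ p) := by
  have h1 : a + b ≤ 2 * max a b := by
    rcases le_total a b with h | h
    · rw [max_eq_right h]; linarith
    · rw [max_eq_left h]; linarith
  have h2 : (a + b) ^ p ≤ (2 * max a b) ^ p :=
    Real.rpow_le_rpow (by linarith) h1 (by linarith)
  have h3 : (2 * max a b) ^ p = 2 ^ p * (max a b) ^ p :=
    Real.mul_rpow (by norm_num) (le_max_of_le_left ha)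
  have h4 : (max a b) ^ p ≤ a ^ p + b ^ p := by
    rcases le_total a b with h | h
    · rw [max_eq_right h]
      have := Real.rpow_nonneg ha p
      linarith
    · rw [max_eq_left h]
      have := Real.rpow_nonneg hb p
      linarith
  calc (a + b) ^ p ≤ 2 ^ p * (max a b) ^ p := by rw [← h3]; exact h2
    _ ≤ 2 ^ p * (a ^ p + b ^ p) :=
        mul_le_mul_of_nonneg_left h4 (Real.rpow_nonneg (by norm_num) p)

end aux
set_option maxHeartbeats 3200000 in
/-- **Numerical theorem.** Let `μ > 0` and `p > 1`, and let `(x_j), (p_j), (A_j), (y_j)` be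
nonnegative sequences indexed by a countable set `J`, with `(y_j)` summable, satisfying
`∑ p_j = 1`, `y_j ≥ x_j`, the non-singularity condition
`(1 - p_j) x_j ≤ 2 ∑_{k ≠ j} x_k`, and
`A_j ≤ x_j (1 - p_j) + p_j^{1/p} (∑_{k ≠ j} x_k^p)^{1/p} (1 - p_j)^{1/p'}` where
`p' = p/(p-1)` (so `1/p' = (p-1)/p`). Then there is `C₀ = C₀(p, μ)` such that for all
`C ≥ C₀`, `∑_j μ A_j^p + ∑_j μ C^{(p-1)/p} A_j y_j^{p-1} ≤ C ((∑_j y_j)^p - ∑_j y_j^p)`. -/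
theorem numerical_theorem (μ p : ℝ) (hμ : 0 < μ) (hp : 1 < p) :
    ∃ C₀ : ℝ, ∀ (J : Type u) [Countable J] (x pj A y : J → ℝ),
      (∀ j, 0 ≤ x j) → (∀ j, 0 ≤ pj j) → (∀ j, 0 ≤ A j) → (∀ j, 0 ≤ y j) →
      Summable y →
      (∑' j, pj j) = 1 →
      (∀ j, x j ≤ y j) →
      (∀ j, (1 - pj j) * x j ≤ 2 * ∑' k : {k : J // k ≠ j}, x k) →
      (∀ j, A j ≤ x j * (1 - pj j)
          + pj j ^ (1 / p) * (∑' k : {k : J // k ≠ j}, x k ^ p) ^ (1 / p)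
            * (1 - pj j) ^ ((p - 1) / p)) →
      ∀ C : ℝ, C₀ ≤ C →
        (∑' j, μ * A j ^ p) + (∑' j, μ * C ^ ((p - 1) / p) * A j * y j ^ (p - 1))
          ≤ C * ((∑' j, y j) ^ p - ∑' j, y j ^ p) := by
  classical
  have hp1 : (0:ℝ) < p - 1 := by linarith
  have hppos : (0:ℝ) < p := by linarith
  have hp0' : p ≠ 0 := ne_of_gt hppos
  have h2p1 : (1:ℝ) < (2:ℝ) ^ (p - 1) := by
    have := Real.rpow_lt_rpow_left_iff (x := (2:ℝ)) (y := 0) (z := p - 1) (by norm_num)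
    simpa using this.mpr (by linarith)
  set c2 : ℝ := 2 ^ (p-1) - 1 with hc2def
  have hc2 : 0 < c2 := by rw [hc2def]; linarith
  set K₁ : ℝ := c2⁻¹ + (p-1)⁻¹ with hK₁def
  have hK₁ : 0 < K₁ := by positivity
  have h2ppos : (0:ℝ) < 2 ^ p := Real.rpow_pos_of_pos (by norm_num) p
  set KI : ℝ := 2 ^ p * (2 ^ p * K₁ + 2 * K₁) with hKIdef
  have hKI : 0 < KI := by rw [hKIdef]; positivity
  set KII : ℝ := 5*K₁ + (p-1)⁻¹ with hKIIdef
  have hKII : 0 < KII := by rw [hKIIdef]; positivity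
  set K : ℝ := μ * (KI + KII) + 1 with hKdef
  have hK : 0 < K := by rw [hKdef]; positivity
  clear_value c2 K₁ KI KII K
  refine ⟨max 1 ((2*K)^p), ?_⟩
  intro J _ x pj A y hx0 hpj0 hA0 hy0 hysum hpsum hxy hns hA C hC
  set S : ℝ := ∑' j, y j with hSdef
  set T : ℝ := ∑' j, y j ^ p with hTdef
  set D : ℝ := S ^ p - T with hDdef
  set R : J → ℝ := fun j => S - y j with hRdef
  set m : J → ℝ := fun j => min (y j) (R j) with hmdef
  clear_value S T D R m
  -- basic facts
  have hyle : ∀ j, y j ≤ S := fun j => hSdef ▸ Summable.le_tsum hysum j fun k _ => hy0 k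
  have hS0 : 0 ≤ S := hSdef ▸ tsum_nonneg hy0
  have hR0 : ∀ j, 0 ≤ R j := fun j => by
    simp only [hRdef]; exact sub_nonneg.2 (hyle j)
  have hyp_bound : ∀ j, y j ^ p ≤ S^(p-1) * y j := by
    intro j
    rw [aux_rpow_split (hy0 j) hp]
    exact mul_le_mul_of_nonneg_right
      (Real.rpow_le_rpow (hy0 j) (hyle j) (by linarith)) (hy0 j)
  have hypsum : Summable (fun j => y j ^ p) :=
    Summable.of_nonneg_of_le (fun j => Real.rpow_nonneg (hy0 j) p) hyp_bound (hysum.mul_left _)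
  have hxsum : Summable x := hysum.of_nonneg_of_le hx0 hxy
  have hxple : ∀ j, x j ^ p ≤ y j ^ p := fun j => Real.rpow_le_rpow (hx0 j) (hxy j) hppos.le
  have hxpsum : Summable (fun j => x j ^ p) :=
    hypsum.of_nonneg_of_le (fun j => Real.rpow_nonneg (hx0 j) p) hxple
  have hpjsum : Summable pj := by
    by_contra h
    rw [tsum_eq_zero_of_not_summable h] at hpsum; norm_num at hpsum
  have hpj1 : ∀ j, pj j ≤ 1 := fun j => hpsum ▸ Summable.le_tsum hpjsum j fun k _ => hpj0 k
  have h1p0 : ∀ j, 0 ≤ 1 - pj j := fun j => sub_nonneg.2 (hpj1 j)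
  have hyRk : ∀ (j k : J), k ≠ j → y k ≤ R j := by
    intro j k hkj
    have hsum := Summable.sum_le_tsum ({k, j} : Finset J) (fun i _ => hy0 i) hysum
    rw [Finset.sum_pair hkj] at hsum
    simp only [hRdef]
    rw [← hSdef] at hsum
    linarith
  have hRsub : ∀ j, (∑' k : {k : J // k ≠ j}, y (k:J)) = R j := by
    intro j
    simp only [hRdef]
    rw [aux_tne_eq hysum j, ← hSdef]
  have hsub_y_summ : ∀ j : J, Summable (fun k : {k : J // k ≠ j} => y (k:J)) :=
    fun j => hysum.subtype _
  have hsub_x_summ : ∀ j : J, Summable (fun k : {k : J // k ≠ j} => x (k:J)) :=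
    fun j => hxsum.subtype _
  have hsubxle : ∀ j, (∑' k : {k : J // k ≠ j}, x (k:J)) ≤ R j := by
    intro j
    rw [← hRsub j]
    exact Summable.tsum_le_tsum (fun k => hxy k) (hsub_x_summ j) (hsub_y_summ j)
  have hx2R : ∀ j, (1 - pj j) * x j ≤ 2 * R j := by
    intro j
    refine (hns j).trans ?_
    have := hsubxle j
    linarith
  have haux_min : ∀ j, x j * (1 - pj j) ≤ 2 * m j := by
    intro j
    have h1 : x j * (1 - pj j) ≤ y j := by
      have : x j * (1 - pj j) ≤ x j * 1 :=
        mul_le_mul_of_nonneg_left (by linarith [hpj0 j]) (hx0 j)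
      rw [mul_one] at this
      exact this.trans (hxy j)
    have h2 : x j * (1 - pj j) ≤ 2 * R j := by rw [mul_comm]; exact hx2R j
    simp only [hmdef]
    rcases le_total (y j) (R j) with h | h
    · rw [min_eq_left h]; linarith [hy0 j]
    · rw [min_eq_right h]; linarith
  have hm0 : ∀ j, 0 ≤ m j := fun j => by
    simp only [hmdef]; exact le_min (hy0 j) (hR0 j)
  have hmy : ∀ j, m j ≤ y j := fun j => by simp only [hmdef]; exact min_le_left _ _
  -- the excluded sums of x^p
  set X : ℝ := ∑' j, x j ^ p with hXdef
  clear_value X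
  have hX0 : 0 ≤ X := hXdef ▸ tsum_nonneg fun j => Real.rpow_nonneg (hx0 j) p
  have hQteq : ∀ j, (∑' k : {k : J // k ≠ j}, x (k:J) ^ p) = X - x j ^ p := by
    intro j
    rw [aux_tne_eq hxpsum j, ← hXdef]
  have hQt0 : ∀ j, 0 ≤ (∑' k : {k : J // k ≠ j}, x (k:J) ^ p) :=
    fun j => tsum_nonneg fun k => Real.rpow_nonneg (hx0 k) p
  have hQtle : ∀ j, (∑' k : {k : J // k ≠ j}, x (k:J) ^ p) ≤ R j ^ p := by
    intro j
    have hpt : ∀ k : {k : J // k ≠ j}, x (k:J) ^ p ≤ R j ^ (p-1) * x (k:J) := by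
      intro k
      rw [aux_rpow_split (hx0 k) hp]
      exact mul_le_mul_of_nonneg_right
        (Real.rpow_le_rpow (hx0 k) ((hxy k).trans (hyRk j k k.2)) (by linarith)) (hx0 k)
    calc (∑' k : {k : J // k ≠ j}, x (k:J) ^ p)
        ≤ ∑' k : {k : J // k ≠ j}, R j ^ (p-1) * x (k:J) := by
          refine Summable.tsum_le_tsum hpt ?_ ((hsub_x_summ j).mul_left _)
          exact (hxpsum.subtype _)
      _ = R j ^ (p-1) * ∑' k : {k : J // k ≠ j}, x (k:J) := tsum_mul_left
      _ ≤ R j ^ (p-1) * R j :=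
          mul_le_mul_of_nonneg_left (hsubxle j) (Real.rpow_nonneg (hR0 j) _)
      _ = R j ^ p := (aux_rpow_split (hR0 j) hp).symm
  have hQR : ∀ j, (∑' k : {k : J // k ≠ j}, x (k:J) ^ p) ^ (1/p) ≤ R j := by
    intro j
    calc (∑' k : {k : J // k ≠ j}, x (k:J) ^ p) ^ (1/p)
        ≤ (R j ^ p) ^ (1/p) := Real.rpow_le_rpow (hQt0 j) (hQtle j) (by positivity)
      _ = R j := by
          rw [← Real.rpow_mul (hR0 j), mul_one_div, div_self hp0', Real.rpow_one]
  -- per-j lower bound on D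
  have hyRS : ∀ j, y j + R j = S := by intro j; simp only [hRdef]; ring
  have hTj : ∀ j, T ≤ y j ^ p + R j ^ p := by
    intro j
    have h1 : (∑' k : {k : J // k ≠ j}, y (k:J) ^ p) = T - y j ^ p := by
      rw [aux_tne_eq hypsum j, ← hTdef]
    have h2 : (∑' k : {k : J // k ≠ j}, y (k:J) ^ p) ≤ R j ^ p := by
      have hpt : ∀ k : {k : J // k ≠ j}, y (k:J) ^ p ≤ R j ^ (p-1) * y (k:J) := by
        intro k
        rw [aux_rpow_split (hy0 k) hp]
        exact mul_le_mul_of_nonneg_right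
          (Real.rpow_le_rpow (hy0 k) (hyRk j k k.2) (by linarith)) (hy0 k)
      calc (∑' k : {k : J // k ≠ j}, y (k:J) ^ p)
          ≤ ∑' k : {k : J // k ≠ j}, R j ^ (p-1) * y (k:J) :=
            Summable.tsum_le_tsum hpt (hypsum.subtype _) ((hsub_y_summ j).mul_left _)
        _ = R j ^ (p-1) * ∑' k : {k : J // k ≠ j}, y (k:J) := tsum_mul_left
        _ ≤ R j ^ (p-1) * R j :=
            mul_le_mul_of_nonneg_left (le_of_eq (hRsub j)) (Real.rpow_nonneg (hR0 j) _)
        _ = R j ^ p := (aux_rpow_split (hR0 j) hp).symm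
    linarith
  have hDj : ∀ j, (p-1) * (m j * (max (y j) (R j)) ^ (p-1)) ≤ D := by
    intro j
    have hb := aux_bernoulli (hm0 j)
      (show m j ≤ max (y j) (R j) by simp only [hmdef]; exact min_le_max) hp
    have hmM : m j + max (y j) (R j) = S := by
      simp only [hmdef]; rw [min_add_max]; exact hyRS j
    have hpow : m j ^ p + (max (y j) (R j)) ^ p = y j ^ p + R j ^ p := by
      simp only [hmdef]
      rcases le_total (y j) (R j) with h | h
      · rw [min_eq_left h, max_eq_right h]
      · rw [min_eq_right h, max_eq_left h]; ring
    have hT := hTj j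
    rw [hmM] at hb
    rw [hDdef]
    simp only [hmdef] at hpow hb ⊢
    linarith
  -- the identity for D
  have hptw : ∀ j, y j * (S^(p-1) - y j^(p-1)) = y j * S^(p-1) - y j ^ p := by
    intro j
    rw [aux_rpow_split (hy0 j) hp]; ring
  have hDsummand : Summable (fun j => y j * (S^(p-1) - y j^(p-1))) :=
    (((hysum.mul_right (S^(p-1)))).sub hypsum).congr (fun j => (hptw j).symm)
  have hDeq : (∑' j, y j * (S^(p-1) - y j ^ (p-1))) = D := by
    calc (∑' j, y j * (S^(p-1) - y j ^ (p-1)))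
        = ∑' j, (y j * S^(p-1) - y j ^ p) := tsum_congr hptw
      _ = (∑' j, y j * S^(p-1)) - T := by
          rw [Summable.tsum_sub (hysum.mul_right _) hypsum, ← hTdef]
      _ = S * S^(p-1) - T := by rw [tsum_mul_right, ← hSdef]
      _ = D := by rw [hDdef, aux_rpow_split hS0 hp]; ring
  have hD0 : 0 ≤ D := by
    rw [← hDeq]
    exact tsum_nonneg fun j => mul_nonneg (hy0 j)
      (sub_nonneg.2 (Real.rpow_le_rpow (hy0 j) (hyle j) (by linarith)))
  -- the exceptional-term function psi
  set psi : J → ℝ := fun j => if R j < y j then D/(p-1) else 0 with hpsidef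
  clear_value psi
  have hpsi0 : ∀ j, 0 ≤ psi j := by
    intro j
    simp only [hpsidef]
    split
    · positivity
    · exact le_rfl
  have hbig_uniq : ∀ i j, R i < y i → R j < y j → i = j := by
    intro i j hi hj
    by_contra hij
    have h1 : y i ≤ R j := hyRk j i hij
    have h2 : y j ≤ R i := hyRk i j (Ne.symm hij)
    linarith
  have hpsisum : Summable psi := by
    by_cases hex : ∃ j, R j < y j
    · obtain ⟨j₀, hj₀⟩ := hex
      refine summable_of_ne_finset_zero (s := {j₀}) ?_
      intro b hb
      simp only [hpsidef]
      exact if_neg fun hbig => (Finset.notMem_singleton.mp hb) (hbig_uniq b j₀ hbig hj₀)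
    · push_neg at hex
      have hz : psi = fun _ => 0 := funext fun j => by
        simp only [hpsidef]; exact if_neg (not_lt.mpr (hex j))
      rw [hz]; exact summable_zero
  have hpsile : (∑' j, psi j) ≤ D / (p-1) := by
    by_cases hex : ∃ j, R j < y j
    · obtain ⟨j₀, hj₀⟩ := hex
      have hz : ∀ b, b ≠ j₀ → psi b = 0 := by
        intro b hb
        simp only [hpsidef]
        exact if_neg fun hbig => hb (hbig_uniq b j₀ hbig hj₀)
      rw [tsum_eq_single j₀ hz]
      simp only [hpsidef]
      split <;> first
      | exact le_rfl
      | exact div_nonneg hD0 hp1.le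
    · push_neg at hex
      have hz : psi = fun _ => 0 := funext fun j => by
        simp only [hpsidef]; exact if_neg (not_lt.mpr (hex j))
      rw [hz, tsum_zero]
      positivity
  -- Lemma A
  have hym_sum : Summable (fun j => y j ^ (p-1) * m j) :=
    Summable.of_nonneg_of_le
      (fun j => mul_nonneg (Real.rpow_nonneg (hy0 j) _) (hm0 j))
      (fun j => mul_le_mul (Real.rpow_le_rpow (hy0 j) (hyle j) (by linarith)) (hmy j)
        (hm0 j) (Real.rpow_nonneg hS0 _))
      (hysum.mul_left (S^(p-1)))
  have LemA : (∑' j, y j ^ (p-1) * m j) ≤ K₁ * D := by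
    have hpt : ∀ j, y j ^ (p-1) * m j ≤ c2⁻¹ * (y j * (S^(p-1) - y j^(p-1))) + psi j := by
      intro j
      by_cases hbj : R j < y j
      · have hmj : m j = R j := by simp only [hmdef]; exact min_eq_right hbj.le
        have hMx : max (y j) (R j) = y j := max_eq_left hbj.le
        have hD := hDj j
        rw [hmj, hMx] at hD
        have hpsij : psi j = D / (p-1) := by simp only [hpsidef]; exact if_pos hbj
        have h1 : y j ^ (p-1) * m j ≤ D/(p-1) := by
          rw [hmj, le_div_iff₀ hp1]
          nlinarith [hD]
        have h2 : 0 ≤ c2⁻¹ * (y j * (S^(p-1) - y j^(p-1))) :=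
          mul_nonneg (inv_nonneg.2 hc2.le) (mul_nonneg (hy0 j)
            (sub_nonneg.2 (Real.rpow_le_rpow (hy0 j) (hyle j) (by linarith))))
        rw [hpsij]
        linarith
      · push_neg at hbj
        have hmj : m j = y j := by simp only [hmdef]; exact min_eq_left hbj
        have hpsij : psi j = 0 := by
          simp only [hpsidef]; exact if_neg (not_lt.mpr hbj)
        have h2y : 2 * y j ≤ S := by
          have := hyRS j
          linarith
        have h3 : (2:ℝ)^(p-1) * y j^(p-1) ≤ S^(p-1) := by
          rw [← Real.mul_rpow (by norm_num) (hy0 j)]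
          exact Real.rpow_le_rpow (by linarith [hy0 j]) h2y (by linarith)
        have h4 : c2 * (y j^(p-1) * y j) ≤ y j * (S^(p-1) - y j^(p-1)) := by
          rw [hc2def]
          nlinarith [mul_le_mul_of_nonneg_right h3 (hy0 j)]
        have h5 : y j ^ (p-1) * m j ≤ c2⁻¹ * (y j * (S^(p-1) - y j^(p-1))) := by
          rw [hmj]
          have := mul_le_mul_of_nonneg_left h4 (inv_nonneg.2 hc2.le)
          rwa [← mul_assoc, inv_mul_cancel₀ (ne_of_gt hc2), one_mul] at this
        rw [hpsij]
        linarith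
    have hsumRHS : Summable (fun j => c2⁻¹ * (y j * (S^(p-1) - y j^(p-1))) + psi j) :=
      (hDsummand.mul_left _).add hpsisum
    calc (∑' j, y j ^ (p-1) * m j)
        ≤ ∑' j, (c2⁻¹ * (y j * (S^(p-1) - y j^(p-1))) + psi j) :=
          Summable.tsum_le_tsum hpt hym_sum hsumRHS
      _ = c2⁻¹ * D + ∑' j, psi j := by
          rw [Summable.tsum_add (hDsummand.mul_left _) hpsisum, tsum_mul_left, hDeq]
      _ ≤ c2⁻¹ * D + D/(p-1) := by linarith [hpsile]
      _ = K₁ * D := by rw [hK₁def, div_eq_mul_inv]; ring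
  -- sum of x^p (1 - pj)
  have hxp1p : ∀ j, x j ^ p * (1 - pj j) ≤ 2*(y j ^ (p-1) * m j) := by
    intro j
    have h1 : x j ^ p * (1-pj j) = x j^(p-1) * (x j * (1-pj j)) := by
      rw [aux_rpow_split (hx0 j) hp]; ring
    rw [h1]
    calc x j^(p-1) * (x j*(1-pj j)) ≤ y j^(p-1) * (2 * m j) :=
        mul_le_mul (Real.rpow_le_rpow (hx0 j) (hxy j) (by linarith)) (haux_min j)
          (mul_nonneg (hx0 j) (h1p0 j)) (Real.rpow_nonneg (hy0 j) _)
      _ = 2*(y j^(p-1) * m j) := by ring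
  have hxp1psum : Summable (fun j => x j ^ p * (1-pj j)) :=
    Summable.of_nonneg_of_le
      (fun j => mul_nonneg (Real.rpow_nonneg (hx0 j) p) (h1p0 j))
      hxp1p (hym_sum.mul_left 2)
  have SumXP : (∑' j, x j ^ p * (1-pj j)) ≤ 2*(K₁*D) := by
    refine (Summable.tsum_le_tsum hxp1p hxp1psum (hym_sum.mul_left 2)).trans ?_
    rw [tsum_mul_left]
    exact mul_le_mul_of_nonneg_left LemA (by norm_num)
  -- sum of pj * Qt
  have hpx : Summable (fun j => pj j * x j ^ p) :=
    Summable.of_nonneg_of_le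
      (fun j => mul_nonneg (hpj0 j) (Real.rpow_nonneg (hx0 j) p))
      (fun j => by
        have := mul_le_mul_of_nonneg_right (hpj1 j) (Real.rpow_nonneg (hx0 j) p)
        rwa [one_mul] at this)
      hxpsum
  have SumPQ : (∑' j, pj j * (∑' k : {k : J // k ≠ j}, x (k:J) ^ p)) ≤ 2*(K₁*D) := by
    have heq : (∑' j, pj j * (∑' k : {k : J // k ≠ j}, x (k:J) ^ p))
        = ∑' j, (pj j * X - pj j * x j ^ p) :=
      tsum_congr fun j => by rw [hQteq j]; ring
    have heq2 : (∑' j, x j ^ p * (1-pj j)) = X - (∑' j, pj j * x j ^ p) := by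
      have : (fun j => x j ^ p * (1-pj j)) = fun j => x j ^ p - pj j * x j ^ p :=
        funext fun j => by ring
      rw [this, Summable.tsum_sub hxpsum hpx, ← hXdef]
    rw [heq, Summable.tsum_sub (hpjsum.mul_right X) hpx, tsum_mul_right, hpsum, one_mul]
    linarith [SumXP, heq2]
  have hQtX : ∀ j, (∑' k : {k : J // k ≠ j}, x (k:J) ^ p) ≤ X := by
    intro j
    rw [hQteq j]
    have := Real.rpow_nonneg (hx0 j) p
    linarith
  have hpjQtsum : Summable (fun j => pj j * (∑' k : {k : J // k ≠ j}, x (k:J) ^ p)) :=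
    Summable.of_nonneg_of_le
      (fun j => mul_nonneg (hpj0 j) (hQt0 j))
      (fun j => mul_le_mul_of_nonneg_left (hQtX j) (hpj0 j))
      (hpjsum.mul_right X)
  -- Young's inequality facts
  have hpq : Real.HolderConjugate p (p/(p-1)) :=
    (Real.holderConjugate_iff_eq_conjExponent hp).2 rfl
  have hupow : ∀ j, (pj j ^ (1/p) * (∑' k : {k : J // k ≠ j}, x (k:J) ^ p) ^ (1/p)) ^ p
      = pj j * (∑' k : {k : J // k ≠ j}, x (k:J) ^ p) := by
    intro j
    rw [Real.mul_rpow (Real.rpow_nonneg (hpj0 j) _) (Real.rpow_nonneg (hQt0 j) _),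
      ← Real.rpow_mul (hpj0 j), ← Real.rpow_mul (hQt0 j),
      one_div_mul_cancel hp0', Real.rpow_one, Real.rpow_one]
  have hvpow : ∀ j, ((1-pj j) ^ ((p-1)/p) * y j ^ (p-1)) ^ (p/(p-1))
      = (1-pj j) * y j ^ p := by
    intro j
    rw [Real.mul_rpow (Real.rpow_nonneg (h1p0 j) _) (Real.rpow_nonneg (hy0 j) _),
      ← Real.rpow_mul (h1p0 j), ← Real.rpow_mul (hy0 j),
      show (p-1)/p*(p/(p-1)) = 1 by field_simp,
      show (p-1)*(p/(p-1)) = p by field_simp, Real.rpow_one]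
  -- pointwise bound for b_j y_j^{p-1}
  have hbyp : ∀ j, (pj j ^ (1/p) * (∑' k : {k : J // k ≠ j}, x (k:J) ^ p) ^ (1/p)
        * (1-pj j) ^ ((p-1)/p)) * y j ^ (p-1)
      ≤ pj j * (∑' k : {k : J // k ≠ j}, x (k:J) ^ p) + (y j ^ (p-1) * m j + psi j) := by
    intro j
    have hQv0 : 0 ≤ (∑' k : {k : J // k ≠ j}, x (k:J) ^ p) ^ (1/p) :=
      Real.rpow_nonneg (hQt0 j) _
    by_cases hbj : R j < y j
    · have hb1 : pj j ^ (1/p) ≤ 1 := Real.rpow_le_one (hpj0 j) (hpj1 j) (by positivity)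
      have hb2 : (1-pj j) ^ ((p-1)/p) ≤ 1 :=
        Real.rpow_le_one (h1p0 j) (by linarith [hpj0 j]) (by positivity)
      have e1 : pj j ^ (1/p) * (∑' k : {k : J // k ≠ j}, x (k:J) ^ p) ^ (1/p)
          ≤ (∑' k : {k : J // k ≠ j}, x (k:J) ^ p) ^ (1/p) :=
        mul_le_of_le_one_left hQv0 hb1
      have e2 : pj j ^ (1/p) * (∑' k : {k : J // k ≠ j}, x (k:J) ^ p) ^ (1/p)
            * (1-pj j) ^ ((p-1)/p)
          ≤ (∑' k : {k : J // k ≠ j}, x (k:J) ^ p) ^ (1/p) := by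
        have := mul_le_mul e1 hb2 (Real.rpow_nonneg (h1p0 j) _) hQv0
        rwa [mul_one] at this
      have e3 : (pj j ^ (1/p) * (∑' k : {k : J // k ≠ j}, x (k:J) ^ p) ^ (1/p)
            * (1-pj j) ^ ((p-1)/p)) * y j ^ (p-1)
          ≤ R j * y j ^ (p-1) := by
        refine (mul_le_mul_of_nonneg_right e2 (Real.rpow_nonneg (hy0 j) _)).trans ?_
        exact mul_le_mul_of_nonneg_right (hQR j) (Real.rpow_nonneg (hy0 j) _)
      have hmj : m j = R j := by simp only [hmdef]; exact min_eq_right hbj.le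
      have hMx : max (y j) (R j) = y j := max_eq_left hbj.le
      have hD := hDj j
      rw [hmj, hMx] at hD
      have hpsij : psi j = D / (p-1) := by simp only [hpsidef]; exact if_pos hbj
      have e4 : R j * y j ^ (p-1) ≤ D/(p-1) := by
        rw [le_div_iff₀ hp1]
        nlinarith [hD]
      have e5 : 0 ≤ pj j * (∑' k : {k : J // k ≠ j}, x (k:J) ^ p) :=
        mul_nonneg (hpj0 j) (hQt0 j)
      have e6 : 0 ≤ y j ^ (p-1) * m j :=
        mul_nonneg (Real.rpow_nonneg (hy0 j) _) (hm0 j)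
      rw [hpsij]
      linarith
    · push_neg at hbj
      have hmj : m j = y j := by simp only [hmdef]; exact min_eq_left hbj
      have hyoung : (pj j ^ (1/p) * (∑' k : {k : J // k ≠ j}, x (k:J) ^ p) ^ (1/p))
            * ((1-pj j) ^ ((p-1)/p) * y j ^ (p-1))
          ≤ (pj j ^ (1/p) * (∑' k : {k : J // k ≠ j}, x (k:J) ^ p) ^ (1/p)) ^ p / p
            + ((1-pj j) ^ ((p-1)/p) * y j ^ (p-1)) ^ (p/(p-1)) / (p/(p-1)) :=
        Real.young_inequality_of_nonneg
          (mul_nonneg (Real.rpow_nonneg (hpj0 j) _) hQv0)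
          (mul_nonneg (Real.rpow_nonneg (h1p0 j) _) (Real.rpow_nonneg (hy0 j) _)) hpq
      rw [hupow j, hvpow j] at hyoung
      have harr : (pj j ^ (1/p) * (∑' k : {k : J // k ≠ j}, x (k:J) ^ p) ^ (1/p)
            * (1-pj j) ^ ((p-1)/p)) * y j ^ (p-1)
          = (pj j ^ (1/p) * (∑' k : {k : J // k ≠ j}, x (k:J) ^ p) ^ (1/p))
            * ((1-pj j) ^ ((p-1)/p) * y j ^ (p-1)) := by ring
      rw [harr]
      refine hyoung.trans ?_
      have d1 : pj j * (∑' k : {k : J // k ≠ j}, x (k:J) ^ p) / p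
          ≤ pj j * (∑' k : {k : J // k ≠ j}, x (k:J) ^ p) :=
        div_le_self (mul_nonneg (hpj0 j) (hQt0 j)) hp.le
      have d2 : (1-pj j) * y j ^ p / (p/(p-1)) ≤ y j ^ (p-1) * m j := by
        have hq1 : 1 ≤ p/(p-1) := by rw [le_div_iff₀ hp1]; linarith
        have hle1 : (1-pj j) * y j ^ p ≤ y j ^ p := by
          nlinarith [Real.rpow_nonneg (hy0 j) p, hpj0 j]
        calc (1-pj j) * y j ^ p / (p/(p-1)) ≤ (1-pj j) * y j ^ p :=
            div_le_self (mul_nonneg (h1p0 j) (Real.rpow_nonneg (hy0 j) p)) hq1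
          _ ≤ y j ^ p := hle1
          _ = y j ^ (p-1) * m j := by rw [hmj, aux_rpow_split (hy0 j) hp]
      have := hpsi0 j
      linarith
  -- sum of A_j y_j^{p-1}
  have hApt : ∀ j, A j * y j ^ (p-1)
      ≤ 2*(y j ^ (p-1) * m j) + (pj j * (∑' k : {k : J // k ≠ j}, x (k:J) ^ p)
          + (y j ^ (p-1) * m j + psi j)) := by
    intro j
    have h1 : A j * y j ^ (p-1) ≤ (x j * (1 - pj j)
        + pj j ^ (1/p) * (∑' k : {k : J // k ≠ j}, x (k:J) ^ p) ^ (1/p)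
          * (1-pj j) ^ ((p-1)/p)) * y j ^ (p-1) :=
      mul_le_mul_of_nonneg_right (hA j) (Real.rpow_nonneg (hy0 j) _)
    have hexp : (x j * (1 - pj j)
        + pj j ^ (1/p) * (∑' k : {k : J // k ≠ j}, x (k:J) ^ p) ^ (1/p)
          * (1-pj j) ^ ((p-1)/p)) * y j ^ (p-1)
        = x j * (1 - pj j) * y j ^ (p-1)
          + (pj j ^ (1/p) * (∑' k : {k : J // k ≠ j}, x (k:J) ^ p) ^ (1/p)
            * (1-pj j) ^ ((p-1)/p)) * y j ^ (p-1) := by ring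
    rw [hexp] at h1
    have h2 : x j * (1 - pj j) * y j ^ (p-1) ≤ 2*(y j ^ (p-1) * m j) := by
      calc x j * (1 - pj j) * y j ^ (p-1) = y j ^ (p-1) * (x j * (1 - pj j)) := by ring
        _ ≤ y j ^ (p-1) * (2 * m j) :=
            mul_le_mul_of_nonneg_left (haux_min j) (Real.rpow_nonneg (hy0 j) _)
        _ = 2*(y j ^ (p-1) * m j) := by ring
    have h3 := hbyp j
    linarith
  have hφsum : Summable (fun j => 2*(y j ^ (p-1) * m j)
      + (pj j * (∑' k : {k : J // k ≠ j}, x (k:J) ^ p) + (y j ^ (p-1) * m j + psi j))) :=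
    (hym_sum.mul_left 2).add (hpjQtsum.add (hym_sum.add hpsisum))
  have hAysum : Summable (fun j => A j * y j ^ (p-1)) :=
    Summable.of_nonneg_of_le
      (fun j => mul_nonneg (hA0 j) (Real.rpow_nonneg (hy0 j) _)) hApt hφsum
  have SumAy : (∑' j, A j * y j ^ (p-1)) ≤ KII * D := by
    calc (∑' j, A j * y j ^ (p-1))
        ≤ ∑' j, (2*(y j ^ (p-1) * m j)
          + (pj j * (∑' k : {k : J // k ≠ j}, x (k:J) ^ p)
            + (y j ^ (p-1) * m j + psi j))) := Summable.tsum_le_tsum hApt hAysum hφsum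
      _ = 2*(∑' j, y j ^ (p-1) * m j)
          + ((∑' j, pj j * (∑' k : {k : J // k ≠ j}, x (k:J) ^ p))
            + ((∑' j, y j ^ (p-1) * m j) + ∑' j, psi j)) := by
          rw [Summable.tsum_add (hym_sum.mul_left 2) (hpjQtsum.add (hym_sum.add hpsisum)),
            Summable.tsum_add hpjQtsum (hym_sum.add hpsisum), Summable.tsum_add hym_sum hpsisum,
            tsum_mul_left]
      _ ≤ 2*(K₁*D) + (2*(K₁*D) + (K₁*D + D/(p-1))) := by
          have := mul_le_mul_of_nonneg_left LemA (by norm_num : (0:ℝ) ≤ 2)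
          linarith [SumPQ, LemA, hpsile, this]
      _ = KII * D := by rw [hKIIdef, div_eq_mul_inv]; ring
  -- sum of A_j^p
  have hAppt : ∀ j, A j ^ p
      ≤ 2^p * (2^p * (y j ^ (p-1) * m j)
        + pj j * (∑' k : {k : J // k ≠ j}, x (k:J) ^ p)) := by
    intro j
    have ha0 : 0 ≤ x j * (1 - pj j) := mul_nonneg (hx0 j) (h1p0 j)
    have hb0 : 0 ≤ pj j ^ (1/p) * (∑' k : {k : J // k ≠ j}, x (k:J) ^ p) ^ (1/p)
        * (1-pj j) ^ ((p-1)/p) :=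
      mul_nonneg (mul_nonneg (Real.rpow_nonneg (hpj0 j) _)
        (Real.rpow_nonneg (hQt0 j) _)) (Real.rpow_nonneg (h1p0 j) _)
    have hab : A j ^ p ≤ (x j * (1 - pj j)
        + pj j ^ (1/p) * (∑' k : {k : J // k ≠ j}, x (k:J) ^ p) ^ (1/p)
          * (1-pj j) ^ ((p-1)/p)) ^ p :=
      Real.rpow_le_rpow (hA0 j) (hA j) hppos.le
    have hsplit := aux_add_pow ha0 hb0 hp
    have hap : (x j * (1 - pj j)) ^ p ≤ 2^p * (y j ^ (p-1) * m j) := by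
      have h2m : (x j * (1 - pj j)) ^ p ≤ (2 * m j) ^ p :=
        Real.rpow_le_rpow ha0 (haux_min j) hppos.le
      have h2mp : ((2:ℝ) * m j) ^ p = 2^p * (m j)^p := Real.mul_rpow (by norm_num) (hm0 j)
      have hmp : (m j)^p ≤ y j ^ (p-1) * m j := by
        rw [aux_rpow_split (hm0 j) hp]
        exact mul_le_mul_of_nonneg_right
          (Real.rpow_le_rpow (hm0 j) (hmy j) (by linarith)) (hm0 j)
      calc (x j * (1 - pj j)) ^ p ≤ 2^p * (m j)^p := by rw [← h2mp]; exact h2m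
        _ ≤ 2^p * (y j ^ (p-1) * m j) := mul_le_mul_of_nonneg_left hmp h2ppos.le
    have hbp : (pj j ^ (1/p) * (∑' k : {k : J // k ≠ j}, x (k:J) ^ p) ^ (1/p)
        * (1-pj j) ^ ((p-1)/p)) ^ p
        ≤ pj j * (∑' k : {k : J // k ≠ j}, x (k:J) ^ p) := by
      rw [Real.mul_rpow (mul_nonneg (Real.rpow_nonneg (hpj0 j) _)
          (Real.rpow_nonneg (hQt0 j) _)) (Real.rpow_nonneg (h1p0 j) _),
        hupow j, ← Real.rpow_mul (h1p0 j),
        show (p-1)/p*p = p-1 by field_simp]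
      have hle1 : (1-pj j) ^ (p-1) ≤ 1 :=
        Real.rpow_le_one (h1p0 j) (by linarith [hpj0 j]) (by linarith)
      nlinarith [mul_nonneg (hpj0 j) (hQt0 j)]
    have hadd : (x j * (1 - pj j)) ^ p
        + (pj j ^ (1/p) * (∑' k : {k : J // k ≠ j}, x (k:J) ^ p) ^ (1/p)
          * (1-pj j) ^ ((p-1)/p)) ^ p
        ≤ 2^p * (y j ^ (p-1) * m j) + pj j * (∑' k : {k : J // k ≠ j}, x (k:J) ^ p) :=
      add_le_add hap hbp
    have := mul_le_mul_of_nonneg_left hadd h2ppos.le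
    linarith
  have hApbsum : Summable (fun j => 2^p * (2^p * (y j ^ (p-1) * m j)
      + pj j * (∑' k : {k : J // k ≠ j}, x (k:J) ^ p))) :=
    ((hym_sum.mul_left (2^p)).add hpjQtsum).mul_left (2^p)
  have hApsum : Summable (fun j => A j ^ p) :=
    Summable.of_nonneg_of_le (fun j => Real.rpow_nonneg (hA0 j) p) hAppt hApbsum
  have SumAp : (∑' j, A j ^ p) ≤ KI * D := by
    calc (∑' j, A j ^ p)
        ≤ ∑' j, 2^p * (2^p * (y j ^ (p-1) * m j)
          + pj j * (∑' k : {k : J // k ≠ j}, x (k:J) ^ p)) :=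
          Summable.tsum_le_tsum hAppt hApsum hApbsum
      _ = 2^p * ((2^p * (∑' j, y j ^ (p-1) * m j))
          + ∑' j, pj j * (∑' k : {k : J // k ≠ j}, x (k:J) ^ p)) := by
          rw [tsum_mul_left, Summable.tsum_add (hym_sum.mul_left _) hpjQtsum, tsum_mul_left]
      _ ≤ 2^p * (2^p * (K₁*D) + 2*(K₁*D)) := by
          refine mul_le_mul_of_nonneg_left ?_ h2ppos.le
          exact add_le_add (mul_le_mul_of_nonneg_left LemA h2ppos.le) SumPQ
      _ = KI * D := by rw [hKIdef]; ring
  -- final assembly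
  have hC1 : (1:ℝ) ≤ C := le_trans (le_max_left _ _) hC
  have hCK : (2*K)^p ≤ C := le_trans (le_max_right _ _) hC
  have hCpos : (0:ℝ) < C := by linarith
  have hq0 : (0:ℝ) ≤ (p-1)/p := by positivity
  have hCq1 : (1:ℝ) ≤ C ^ ((p-1)/p) := by
    have := Real.rpow_le_rpow zero_le_one hC1 hq0
    rwa [Real.one_rpow] at this
  have hCqpos : (0:ℝ) ≤ C ^ ((p-1)/p) := by positivity
  have hC1p : 2*K ≤ C^(1/p) := by
    have h := Real.rpow_le_rpow (by positivity) hCK (by positivity : (0:ℝ) ≤ 1/p)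
    rwa [← Real.rpow_mul (by positivity : (0:ℝ) ≤ 2*K), mul_one_div, div_self hp0',
      Real.rpow_one] at h
  have hCsplit : C^((p-1)/p) * C^(1/p) = C := by
    rw [← Real.rpow_add hCpos, show (p-1)/p + 1/p = 1 by rw [← add_div, sub_add_cancel, div_self hp0'], Real.rpow_one]
  have hg1 : (∑' j, μ * A j ^ p) = μ * ∑' j, A j ^ p := tsum_mul_left
  have hg2 : (∑' j, μ * C ^ ((p-1)/p) * A j * y j ^ (p-1))
      = (μ * C ^ ((p-1)/p)) * ∑' j, A j * y j ^ (p-1) := by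
    rw [show (fun j => μ * C ^ ((p-1)/p) * A j * y j ^ (p-1))
      = fun j => (μ * C ^ ((p-1)/p)) * (A j * y j ^ (p-1)) from funext fun j => by ring,
      tsum_mul_left]
  rw [hg1, hg2]
  have t1 : μ * (∑' j, A j ^ p) ≤ μ * (KI * D) := mul_le_mul_of_nonneg_left SumAp hμ.le
  have t2 : (μ * C ^ ((p-1)/p)) * (∑' j, A j * y j ^ (p-1))
      ≤ (μ * C ^ ((p-1)/p)) * (KII * D) :=
    mul_le_mul_of_nonneg_left SumAy (by positivity)
  have ha : μ * KI ≤ K * C ^ ((p-1)/p) := by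
    have h1 : μ * KI ≤ K := by
      rw [hKdef]
      nlinarith [mul_nonneg hμ.le hKII.le]
    have h2 : K ≤ K * C ^ ((p-1)/p) := by nlinarith [hK, hCq1]
    linarith
  have hb : μ * C ^ ((p-1)/p) * KII ≤ K * C ^ ((p-1)/p) := by
    have h1 : μ * KII ≤ K := by
      rw [hKdef]
      nlinarith [mul_nonneg hμ.le hKI.le]
    nlinarith [hCqpos]
  have e2 : 2*K*C^((p-1)/p) ≤ C := by
    calc 2*K*C^((p-1)/p) ≤ C^(1/p)*C^((p-1)/p) :=
        mul_le_mul_of_nonneg_right hC1p hCqpos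
      _ = C := by rw [mul_comm]; exact hCsplit
  have hcoef : μ * KI + μ * C ^ ((p-1)/p) * KII ≤ C := by linarith
  have e3 : μ * (KI * D) + (μ * C ^ ((p-1)/p)) * (KII * D)
      = (μ * KI + μ * C ^ ((p-1)/p) * KII) * D := by ring
  have e4 : (μ * KI + μ * C ^ ((p-1)/p) * KII) * D ≤ C * D :=
    mul_le_mul_of_nonneg_right hcoef hD0
  linarith [t1, t2]
end

section
/- Let (p_j) be nonnegative reals indexed by a countable set J with Σ_j p_j = 1, let (f_j) be reals with Σ_j p_j |f_j| < ∞, set f̄ = Σ_j p_j f_j and x_j = p_j · max(|f̄|, |f_j|). Then for every j, (1 − p_j) x_j ≤ 2 Σ_{k ≠ j} x_k. -/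
private lemma tsum_split {J : Type*} (g : J → ℝ) (hg : Summable g) (j : J) :
    ∑' k, g k = g j + ∑' k : {k : J // k ≠ j}, g k := by
  have h := Summable.tsum_add_tsum_compl (f := g) (s := ({j} : Set J))
    (hg.subtype _) (hg.subtype _)
  rw [tsum_singleton] at h
  rw [← h]
  congr 1


/-- Let `(p_j)` be nonnegative reals with `∑ p_j = 1`, `(f_j)` reals with `∑ p_j |f_j| < ∞`,
`f̄ = ∑ p_j f_j` and `x_j = p_j · max(|f̄|, |f_j|)`. Then for every `j`,
`(1 - p_j) x_j ≤ 2 ∑_{k ≠ j} x_k`. -/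
theorem nonsingularity_condition {J : Type*} [Countable J]
    (pj f : J → ℝ) (hpj : ∀ j, 0 ≤ pj j) (hpsum : (∑' j, pj j) = 1)
    (hfsum : Summable fun j => pj j * |f j|)
    (fbar : ℝ) (hfbar : fbar = ∑' j, pj j * f j)
    (x : J → ℝ) (hx : ∀ j, x j = pj j * max |fbar| |f j|) :
    ∀ j, (1 - pj j) * x j ≤ 2 * ∑' k : {k : J // k ≠ j}, x k := by
  intro j
  -- summability of pj
  have hpS : Summable pj := by
    by_contra h
    rw [tsum_eq_zero_of_not_summable h] at hpsum
    norm_num at hpsum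
  -- summability of pj * f
  have hpfabs : Summable fun k => |pj k * f k| := by
    refine hfsum.congr fun k => ?_
    rw [abs_mul, abs_of_nonneg (hpj k)]
  have hpfS : Summable fun k => pj k * f k := hpfabs.of_abs
  -- nonnegativity of x
  have hx0 : ∀ k, 0 ≤ x k := fun k => by
    rw [hx k]
    exact mul_nonneg (hpj k) (le_trans (abs_nonneg _) (le_max_left _ _))
  -- summability of x
  have hxS : Summable x := by
    refine Summable.of_nonneg_of_le hx0 (fun k => ?_)
      ((hpS.mul_right |fbar|).add hfsum)
    rw [hx k]
    rcases max_cases |fbar| |f k| with ⟨hm, _⟩ | ⟨hm, _⟩ <;> rw [hm] <;>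
      [skip; rw [mul_comm (pj k) |fbar|]] <;>
      nlinarith [mul_nonneg (hpj k) (abs_nonneg fbar),
        mul_nonneg (hpj k) (abs_nonneg (f k))]
  set S := ∑' k : {k : J // k ≠ j}, x k with hS
  have hS0 : 0 ≤ S := tsum_nonneg fun k => hx0 k
  -- pj j ≤ 1 and 1 - pj j = ∑_{k ≠ j} pj k
  have hsplitp := tsum_split pj hpS j
  rw [hpsum] at hsplitp
  have hptail : ∑' k : {k : J // k ≠ j}, pj k = 1 - pj j := by linarith
  have hp0tail : 0 ≤ 1 - pj j := by
    rw [← hptail]; exact tsum_nonneg fun k => hpj k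
  have hpj1 : pj j ≤ 1 := by linarith
  -- (1 - pj j) * |fbar| ≤ S
  have hkey1 : (1 - pj j) * |fbar| ≤ S := by
    rw [← hptail, ← tsum_mul_right]
    refine Summable.tsum_le_tsum (fun k => ?_) ((hpS.subtype _).mul_right _) (hxS.subtype _)
    rw [hx k]
    exact mul_le_mul_of_nonneg_left (le_max_left _ _) (hpj k)
  -- ∑_{k ≠ j} pj k * |f k| ≤ S
  have hkey2 : (∑' k : {k : J // k ≠ j}, pj k * |f k|) ≤ S := by
    refine Summable.tsum_le_tsum (fun k => ?_) (hfsum.subtype _) (hxS.subtype _)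
    rw [hx k]
    exact mul_le_mul_of_nonneg_left (le_max_right _ _) (hpj k)
  -- split fbar
  have hsplitf := tsum_split (fun k => pj k * f k) hpfS j
  rw [← hfbar] at hsplitf
  -- |tail of fbar| ≤ ∑ pj k |f k| over tail
  have habs : |∑' k : {k : J // k ≠ j}, pj k * f k|
      ≤ ∑' k : {k : J // k ≠ j}, pj k * |f k| := by
    calc |∑' k : {k : J // k ≠ j}, pj (k : J) * f (k : J)|
        ≤ ∑' k : {k : J // k ≠ j}, |pj (k : J) * f (k : J)| := by
          have hsub : Summable fun k : {k : J // k ≠ j} => ‖pj (k : J) * f (k : J)‖ := by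
            exact (hpfabs.subtype {k : J | k ≠ j}).congr fun k => (Real.norm_eq_abs _).symm
          simpa only [Real.norm_eq_abs] using norm_tsum_le_tsum_norm hsub
      _ = ∑' k : {k : J // k ≠ j}, pj (k : J) * |f (k : J)| :=
          tsum_congr fun k => by rw [abs_mul, abs_of_nonneg (hpj k)]
  -- key bound: pj j * |f j| ≤ |fbar| + S
  have hkey3 : pj j * |f j| ≤ |fbar| + S := by
    have h1 : pj j * |f j| = |pj j * f j| := by
      rw [abs_mul, abs_of_nonneg (hpj j)]
    have h2 : pj j * f j = fbar - ∑' k : {k : J // k ≠ j}, pj k * f k := by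
      linarith [hsplitf]
    rw [h1, h2]
    calc |fbar - ∑' k : {k : J // k ≠ j}, pj (k : J) * f (k : J)|
        ≤ |fbar| + |∑' k : {k : J // k ≠ j}, pj (k : J) * f (k : J)| := abs_sub _ _
      _ ≤ |fbar| + S := by linarith
  -- finish by cases on the max
  rw [hx j]
  rcases max_cases |fbar| |f j| with ⟨hm, _⟩ | ⟨hm, _⟩
  · rw [hm]
    nlinarith [abs_nonneg fbar, hpj j]
  · rw [hm]
    nlinarith [abs_nonneg fbar, abs_nonneg (f j), hpj j]
end

section
/- Let p > 1 be real. There is a constant c = c(p) > 0 with the following property. Let (x_j) and (p_j) be nonnegative sequences indexed by a countable set J with Σ_j p_j = 1 and (x_j) summable, satisfying the non-singularity condition (1 − p_j) x_j ≤ 2 Σ_{k ≠ j} x_k for all j, and let 1 ∈ J be an index such that p_1 ≥ p_j for all j. Then (Σ_j x_j)^p − Σ_j x_j^p ≥ c · ( (1 − p_1) x_1^p + (Σ_{j ≠ 1} x_j)^p ). -/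
universe u

open Real

private lemma aux_self_mul_rpow {p : ℝ} (hp : 1 < p) {a : ℝ} (ha : 0 ≤ a) :
    a * a ^ (p - 1) = a ^ p := by
  rcases ha.eq_or_lt with h | h
  · rw [← h, Real.zero_rpow (by linarith : p - 1 ≠ 0),
      Real.zero_rpow (by linarith : p ≠ 0), mul_zero]
  · have e : a ^ p = a ^ (1 + (p - 1)) := by norm_num
    rw [e, Real.rpow_add h, Real.rpow_one]

private lemma aux_bern {p : ℝ} (hp : 1 < p) {a t : ℝ} (ha : 0 ≤ a) (ht : 0 ≤ t) :
    a ^ p + p * a ^ (p - 1) * t ≤ (a + t) ^ p := by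
  rcases ha.eq_or_lt with h | h
  · rw [← h]
    simp [Real.zero_rpow (show p ≠ 0 by linarith),
      Real.zero_rpow (show p - 1 ≠ 0 by linarith)]
    exact Real.rpow_nonneg ht p
  · calc a ^ p + p * a ^ (p - 1) * t = a ^ p * (1 + p * (t / a)) := by
          rw [Real.rpow_sub h, Real.rpow_one]; field_simp
    _ ≤ a ^ p * (1 + t / a) ^ p := by
          apply mul_le_mul_of_nonneg_left _ (Real.rpow_nonneg ha p)
          have hd : (0:ℝ) ≤ t / a := div_nonneg ht h.le
          exact one_add_mul_self_le_rpow_one_add (by linarith) hp.le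
    _ = (a + t) ^ p := by
          rw [← Real.mul_rpow ha (by positivity), mul_add, mul_one,
            mul_div_cancel₀ _ h.ne']

private lemma aux_key {p : ℝ} (hp : 1 < p) {s t : ℝ} (hs : 0 ≤ s) (hst : s ≤ t) :
    (p - 1) * s * t ^ (p - 1) + (s ^ p + t ^ p) ≤ (s + t) ^ p := by
  have ht : 0 ≤ t := hs.trans hst
  have h1 := aux_bern hp ht hs
  have h2 : s ^ p ≤ s * t ^ (p - 1) := by
    rw [← aux_self_mul_rpow hp hs]
    exact mul_le_mul_of_nonneg_left (Real.rpow_le_rpow hs hst (by linarith)) hs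
  have e : (s + t) ^ p = (t + s) ^ p := by rw [add_comm]
  rw [e]; nlinarith [h1, h2]

private lemma aux_superadd {p : ℝ} (hp : 1 < p) {s t : ℝ} (hs : 0 ≤ s) (ht : 0 ≤ t) :
    s ^ p + t ^ p ≤ (s + t) ^ p := by
  rcases le_total s t with h | h
  · have h1 := aux_key hp hs h
    nlinarith [mul_nonneg (mul_nonneg (by linarith : (0:ℝ) ≤ p - 1) hs)
      (Real.rpow_nonneg ht (p - 1))]
  · have h1 := aux_key hp ht h
    have e : (s + t) ^ p = (t + s) ^ p := by rw [add_comm]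
    rw [e]
    nlinarith [mul_nonneg (mul_nonneg (by linarith : (0:ℝ) ≤ p - 1) ht)
      (Real.rpow_nonneg hs (p - 1))]

private lemma aux_split {ι : Type*} (f : ι → ℝ) (hf : Summable f) (i₀ : ι) :
    ∑' i, f i = f i₀ + ∑' i : {i : ι // i ≠ i₀}, f i := by
  classical
  rw [Summable.tsum_eq_add_tsum_ite hf i₀]
  congr 1
  have e : ∑' i : {i : ι // i ≠ i₀}, f i = ∑' i, Set.indicator {i | i ≠ i₀} f i :=
    tsum_subtype {i | i ≠ i₀} f
  rw [e]
  apply tsum_congr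
  intro i
  by_cases h : i = i₀ <;> simp [Set.indicator_apply, h]

private lemma aux_summable_rpow {p : ℝ} (hp : 1 < p) {ι : Type*} (f : ι → ℝ)
    (h0 : ∀ i, 0 ≤ f i) (hf : Summable f) : Summable (fun i => f i ^ p) := by
  set C := ∑' i, f i with hC
  have hC0 : 0 ≤ C := tsum_nonneg h0
  have hle : ∀ i, f i ^ p ≤ C ^ (p - 1) * f i := by
    intro i
    rw [← aux_self_mul_rpow hp (h0 i), mul_comm]
    exact mul_le_mul_of_nonneg_right
      (Real.rpow_le_rpow (h0 i) (Summable.le_tsum hf i fun j _ => h0 j) (by linarith)) (h0 i)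
  exact Summable.of_nonneg_of_le (fun i => Real.rpow_nonneg (h0 i) p) hle (hf.mul_left _)

private lemma aux_tsum_rpow_le {p : ℝ} (hp : 1 < p) {ι : Type*} (f : ι → ℝ)
    (h0 : ∀ i, 0 ≤ f i) (hf : Summable f) {C : ℝ} (hC0 : 0 ≤ C) (hC : ∀ i, f i ≤ C) :
    ∑' i, f i ^ p ≤ C ^ (p - 1) * ∑' i, f i := by
  have hle : ∀ i, f i ^ p ≤ C ^ (p - 1) * f i := by
    intro i
    rw [← aux_self_mul_rpow hp (h0 i), mul_comm]
    exact mul_le_mul_of_nonneg_right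
      (Real.rpow_le_rpow (h0 i) (hC i) (by linarith)) (h0 i)
  calc ∑' i, f i ^ p ≤ ∑' i, C ^ (p - 1) * f i :=
        Summable.tsum_le_tsum hle (aux_summable_rpow hp f h0 hf) (hf.mul_left _)
    _ = C ^ (p - 1) * ∑' i, f i := tsum_mul_left

private lemma aux_pair_le {ι : Type*} (f : ι → ℝ) (h0 : ∀ i, 0 ≤ f i) (hf : Summable f)
    {i j : ι} (hij : i ≠ j) : f i + f j ≤ ∑' k, f k := by
  rw [aux_split f hf j]
  have h1 : f i ≤ ∑' k : {k : ι // k ≠ j}, f k :=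
    Summable.le_tsum (hf.subtype {k | k ≠ j}) ⟨i, hij⟩ (fun b _ => h0 b.1)
  linarith

private lemma aux_minmax' {p : ℝ} (hp : 1 < p) {b t T : ℝ} (hb0 : 0 ≤ b)
    (hbt : b ≤ t) (hsum : b + t = T) (hb : T / 10 ≤ b) :
    (p - 1) / 10 * (1 / 2 : ℝ) ^ (p - 1) * T ^ p ≤ T ^ p - b ^ p - t ^ p := by
  have ht0 : 0 ≤ t := hb0.trans hbt
  have hT0 : 0 ≤ T := by linarith
  have hkey := aux_key hp hb0 hbt
  rw [hsum] at hkey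
  have ht2 : T / 2 ≤ t := by linarith
  have h1 : (T / 2) ^ (p - 1) ≤ t ^ (p - 1) :=
    Real.rpow_le_rpow (by linarith) ht2 (by linarith)
  have h2 : (p - 1) / 10 * (1 / 2 : ℝ) ^ (p - 1) * T ^ p ≤ (p - 1) * b * t ^ (p - 1) := by
    have e : (p - 1) / 10 * (1 / 2 : ℝ) ^ (p - 1) * T ^ p
        = (p - 1) * (T / 10) * (T / 2) ^ (p - 1) := by
      rw [show T / 2 = T * (1 / 2) by ring, Real.mul_rpow hT0 (by norm_num),
        ← aux_self_mul_rpow hp hT0]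
      ring
    rw [e]
    calc (p - 1) * (T / 10) * (T / 2) ^ (p - 1)
        ≤ (p - 1) * b * (T / 2) ^ (p - 1) := by
          apply mul_le_mul_of_nonneg_right _ (Real.rpow_nonneg (by linarith) _)
          exact mul_le_mul_of_nonneg_left hb (by linarith)
      _ ≤ (p - 1) * b * t ^ (p - 1) := by
          apply mul_le_mul_of_nonneg_left h1
          exact mul_nonneg (by linarith) hb0
  linarith

private lemma aux_minmax {p : ℝ} (hp : 1 < p) {b t T : ℝ} (hb0 : 0 ≤ b) (ht0 : 0 ≤ t)
    (hsum : b + t = T) (hb : T / 10 ≤ b) (ht : T / 10 ≤ t) :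
    (p - 1) / 10 * (1 / 2 : ℝ) ^ (p - 1) * T ^ p ≤ T ^ p - b ^ p - t ^ p := by
  rcases le_total b t with h | h
  · exact aux_minmax' hp hb0 h hsum hb
  · have := aux_minmax' hp ht0 h (by linarith) ht
    linarith

set_option maxHeartbeats 1000000 in
/-- **Non-singularity lemma.** Let `p > 1`. There is `c = c(p) > 0` such that whenever `(x_j)`
and `(p_j)` are nonnegative sequences indexed by a countable set `J` with `∑ p_j = 1`, `(x_j)`
summable, satisfying the non-singularity condition `(1 - p_j) x_j ≤ 2 ∑_{k ≠ j} x_k` for all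
`j`, and `j₁ ∈ J` is an index with `p_{j₁} ≥ p_j` for all `j`, then
`(∑_j x_j)^p - ∑_j x_j^p ≥ c ((1 - p_{j₁}) x_{j₁}^p + (∑_{j ≠ j₁} x_j)^p)`. -/
theorem nonsingularity_lemma (p : ℝ) (hp : 1 < p) :
    ∃ c : ℝ, 0 < c ∧ ∀ (J : Type u) [Countable J] (x pj : J → ℝ),
      (∀ j, 0 ≤ x j) → (∀ j, 0 ≤ pj j) → Summable x →
      (∑' j, pj j) = 1 →
      (∀ j, (1 - pj j) * x j ≤ 2 * ∑' k : {k : J // k ≠ j}, x k) →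
      ∀ j₁ : J, (∀ j, pj j ≤ pj j₁) →
        c * ((1 - pj j₁) * x j₁ ^ p + (∑' j : {j : J // j ≠ j₁}, x j) ^ p)
          ≤ (∑' j, x j) ^ p - ∑' j, x j ^ p := by
  have hp1 : 0 < p - 1 := by linarith
  have h45 : ((4:ℝ)/5) ^ (p - 1) < 1 := Real.rpow_lt_one (by norm_num) (by norm_num) hp1
  have h110 : ((1:ℝ)/10) ^ (p - 1) < 1 := Real.rpow_lt_one (by norm_num) (by norm_num) hp1
  have h12pos : (0:ℝ) < ((1:ℝ)/2) ^ (p - 1) := Real.rpow_pos_of_pos (by norm_num) _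
  set c₁ : ℝ := (1 - (4/5 : ℝ) ^ (p - 1)) / 2 with hc₁def
  set c₂ : ℝ := (p - 1) / 3 with hc₂def
  set c₃ : ℝ := (p - 1) / 16 with hc₃def
  set c₄ : ℝ := (1 - (1/10 : ℝ) ^ (p - 1)) / 2 with hc₄def
  set c₅ : ℝ := (p - 1) / 20 * (1/2 : ℝ) ^ (p - 1) with hc₅def
  have hc₁ : 0 < c₁ := by rw [hc₁def]; linarith
  have hc₂ : 0 < c₂ := by rw [hc₂def]; linarith
  have hc₃ : 0 < c₃ := by rw [hc₃def]; linarith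
  have hc₄ : 0 < c₄ := by rw [hc₄def]; linarith
  have hc₅ : 0 < c₅ := by rw [hc₅def]; positivity
  refine ⟨min c₁ (min c₂ (min c₃ (min c₄ c₅))), by positivity, ?_⟩
  set c : ℝ := min c₁ (min c₂ (min c₃ (min c₄ c₅))) with hcdef
  have hc0 : 0 < c := by positivity
  have hcle₁ : c ≤ c₁ := min_le_left _ _
  have hcle₂ : c ≤ c₂ := le_trans (min_le_right _ _) (min_le_left _ _)
  have hcle₃ : c ≤ c₃ := le_trans (min_le_right _ _) (le_trans (min_le_right _ _) (min_le_left _ _))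
  have hcle₄ : c ≤ c₄ := le_trans (min_le_right _ _) (le_trans (min_le_right _ _)
    (le_trans (min_le_right _ _) (min_le_left _ _)))
  have hcle₅ : c ≤ c₅ := le_trans (min_le_right _ _) (le_trans (min_le_right _ _)
    (le_trans (min_le_right _ _) (min_le_right _ _)))
  intro J _ x pj hx0 hpj0 hxs hpjsum hns j₁ hmax
  have hpjs : Summable pj := by
    by_contra h
    rw [tsum_eq_zero_of_not_summable h] at hpjsum
    norm_num at hpjsum
  set S : ℝ := ∑' j, x j with hSdef
  set T : ℝ := ∑' j : {j : J // j ≠ j₁}, x ↑j with hTdef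
  set a : ℝ := x j₁ with hadef
  have ha0 : 0 ≤ a := hx0 j₁
  have hT0 : 0 ≤ T := tsum_nonneg fun j => hx0 j
  have hSplit : S = a + T := aux_split x hxs j₁
  have hS0 : 0 ≤ S := by linarith
  set q : ℝ := pj j₁ with hqdef
  have hq0 : 0 ≤ q := hpj0 j₁
  have hq1 : q ≤ 1 := by
    rw [← hpjsum]; exact Summable.le_tsum hpjs j₁ fun j _ => hpj0 j
  have hxsub : Summable (fun j : {j : J // j ≠ j₁} => x ↑j) := hxs.subtype {j | j ≠ j₁}
  have hxp_s : Summable (fun j => x j ^ p) := aux_summable_rpow hp x hx0 hxs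
  set Sp : ℝ := ∑' j, x j ^ p with hSpdef
  set P : ℝ := ∑' j : {j : J // j ≠ j₁}, x ↑j ^ p with hPdef
  have hPsplit : Sp = a ^ p + P := aux_split (fun j => x j ^ p) hxp_s j₁
  have hP0 : 0 ≤ P := tsum_nonneg fun j => Real.rpow_nonneg (hx0 j) p
  have hxleT : ∀ j : {j : J // j ≠ j₁}, x ↑j ≤ T :=
    fun j => Summable.le_tsum hxsub j fun b _ => hx0 b
  have hPT : P ≤ T ^ p := by
    calc P ≤ T ^ (p - 1) * T :=
          aux_tsum_rpow_le hp (fun j : {j : J // j ≠ j₁} => x ↑j) (fun j => hx0 j) hxsub hT0 hxleT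
      _ = T ^ p := by rw [mul_comm]; exact aux_self_mul_rpow hp hT0
  have hns1 : (1 - q) * a ≤ 2 * T := hns j₁
  have hgoal_eq : S ^ p - Sp = (a + T) ^ p - a ^ p - P := by
    rw [hSplit, hPsplit]; ring
  set X : ℝ := (1 - q) * a ^ p + T ^ p with hXdef
  have hap0 : 0 ≤ a ^ p := Real.rpow_nonneg ha0 p
  have hTp0 : 0 ≤ T ^ p := Real.rpow_nonneg hT0 p
  have hX0 : 0 ≤ X := by
    rw [hXdef]
    have : 0 ≤ (1 - q) * a ^ p := mul_nonneg (by linarith) hap0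
    linarith
  show c * X ≤ S ^ p - Sp
  rcases le_or_gt q (1/2) with hq | hq
  · -- Case A : q ≤ 1/2
    have hxb : ∀ j, x j ≤ 4/5 * S := by
      intro j
      have h3 : ∑' k : {k : J // k ≠ j}, x ↑k = S - x j := by
        have := aux_split x hxs j; linarith
      have h2 := hns j
      rw [h3] at h2
      have h4 : pj j ≤ q := hmax j
      have h6 : 0 ≤ (1/2 - pj j) * x j :=
        mul_nonneg (by linarith) (hx0 j)
      linarith [h2, h6]
    have hSp : Sp ≤ (4/5 : ℝ) ^ (p - 1) * S ^ p := by
      calc Sp ≤ (4/5 * S) ^ (p - 1) * S :=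
            aux_tsum_rpow_le hp x hx0 hxs (by linarith) hxb
        _ = (4/5 : ℝ) ^ (p - 1) * S ^ p := by
            rw [Real.mul_rpow (by norm_num) hS0, mul_assoc, mul_comm (S ^ (p-1)) S,
              aux_self_mul_rpow hp hS0]
    have haS : a ≤ S := by linarith
    have hTS : T ≤ S := by linarith
    have hapS : a ^ p ≤ S ^ p := Real.rpow_le_rpow ha0 haS (by linarith)
    have hTpS : T ^ p ≤ S ^ p := Real.rpow_le_rpow hT0 hTS (by linarith)
    have hX2 : X ≤ 2 * S ^ p := by
      rw [hXdef]
      have h5 : (1 - q) * a ^ p ≤ a ^ p := by linarith [mul_nonneg hq0 hap0]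
      linarith
    calc c * X ≤ c₁ * X := mul_le_mul_of_nonneg_right hcle₁ hX0
      _ ≤ c₁ * (2 * S ^ p) := mul_le_mul_of_nonneg_left hX2 hc₁.le
      _ = (1 - (4/5 : ℝ) ^ (p - 1)) * S ^ p := by rw [hc₁def]; ring
      _ ≤ S ^ p - Sp := by linarith
  · -- Case B : 1/2 < q
    rw [hgoal_eq]
    rcases le_or_gt T a with hTa | haT
    · -- B1 : T ≤ a
      have h1 : (1 - q) * a ^ p ≤ 2 * T * a ^ (p - 1) := by
        have h := mul_le_mul_of_nonneg_right hns1 (Real.rpow_nonneg ha0 (p - 1))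
        rw [mul_assoc, aux_self_mul_rpow hp ha0] at h
        linarith
      have h2 : T ^ p ≤ T * a ^ (p - 1) := by
        rw [← aux_self_mul_rpow hp hT0]
        exact mul_le_mul_of_nonneg_left (Real.rpow_le_rpow hT0 hTa (by linarith)) hT0
      have h3 := aux_key hp hT0 hTa
      have e : (T + a) ^ p = (a + T) ^ p := by rw [add_comm]
      rw [e] at h3
      calc c * X ≤ c₂ * X := mul_le_mul_of_nonneg_right hcle₂ hX0
        _ ≤ c₂ * (2 * T * a ^ (p - 1) + T * a ^ (p - 1)) := by
            apply mul_le_mul_of_nonneg_left _ hc₂.le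
            rw [hXdef]; linarith
        _ = (p - 1) * T * a ^ (p - 1) := by rw [hc₂def]; ring
        _ ≤ (a + T) ^ p - a ^ p - T ^ p := by linarith
        _ ≤ (a + T) ^ p - a ^ p - P := by linarith
    · -- B2 : a < T
      have hapT : a ^ p ≤ T ^ p := Real.rpow_le_rpow ha0 haT.le (by linarith)
      have hX2 : X ≤ 2 * T ^ p := by
        rw [hXdef]
        have h5 : (1 - q) * a ^ p ≤ a ^ p := by linarith [mul_nonneg hq0 hap0]
        linarith
      rcases le_or_gt T (8 * a) with hT8 | hT8
      · -- B2a : T ≤ 8a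
        have h3 := aux_key hp ha0 haT.le
        have h4 : T / 8 * T ^ (p - 1) ≤ a * T ^ (p - 1) :=
          mul_le_mul_of_nonneg_right (by linarith) (Real.rpow_nonneg hT0 _)
        have h5 : T / 8 * T ^ (p - 1) = T ^ p / 8 := by
          rw [← aux_self_mul_rpow hp hT0]; ring
        calc c * X ≤ c₃ * X := mul_le_mul_of_nonneg_right hcle₃ hX0
          _ ≤ c₃ * (2 * T ^ p) := mul_le_mul_of_nonneg_left hX2 hc₃.le
          _ = (p - 1) / 8 * T ^ p := by rw [hc₃def]; ring
          _ ≤ (p - 1) * (a * T ^ (p - 1)) := by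
              have := mul_le_mul_of_nonneg_left (h5 ▸ h4) (by linarith : (0:ℝ) ≤ p - 1)
              linarith
          _ ≤ (a + T) ^ p - a ^ p - T ^ p := by linarith [h3]
          _ ≤ (a + T) ^ p - a ^ p - P := by linarith
      · -- B2b : 8a < T
        have hsup : a ^ p + T ^ p ≤ (a + T) ^ p := aux_superadd hp ha0 hT0
        by_cases hcase : ∀ j : {j : J // j ≠ j₁}, x ↑j ≤ T / 10
        · -- B2b-i
          have hPsmall : P ≤ (1/10 : ℝ) ^ (p - 1) * T ^ p := by
            calc P ≤ (T / 10) ^ (p - 1) * T :=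
                  aux_tsum_rpow_le hp (fun j : {j : J // j ≠ j₁} => x ↑j)
                    (fun j => hx0 j) hxsub (by linarith) hcase
              _ = (1/10 : ℝ) ^ (p - 1) * T ^ p := by
                  rw [show T / 10 = T * (1/10) by ring, Real.mul_rpow hT0 (by norm_num),
                    mul_comm (T ^ (p-1)) ((1/10:ℝ) ^ (p-1)), mul_assoc, mul_comm (T ^ (p-1)) T,
                    aux_self_mul_rpow hp hT0]
          calc c * X ≤ c₄ * X := mul_le_mul_of_nonneg_right hcle₄ hX0
            _ ≤ c₄ * (2 * T ^ p) := mul_le_mul_of_nonneg_left hX2 hc₄.le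
            _ = (1 - (1/10 : ℝ) ^ (p - 1)) * T ^ p := by rw [hc₄def]; ring
            _ ≤ (a + T) ^ p - a ^ p - P := by linarith [hsup, hPsmall]
        · -- B2b-ii
          push_neg at hcase
          obtain ⟨j₂, hj₂⟩ := hcase
          set b : ℝ := x ↑j₂ with hbdef
          have hb0 : 0 ≤ b := hx0 _
          set T' : ℝ := ∑' u : {u : {j : J // j ≠ j₁} // u ≠ j₂}, x ↑↑u with hT'def
          have hT'0 : 0 ≤ T' := tsum_nonneg fun u => hx0 _
          have hTsplit : T = b + T' :=
            aux_split (fun j : {j : J // j ≠ j₁} => x ↑j) hxsub j₂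
          have hxpsub : Summable (fun j : {j : J // j ≠ j₁} => x ↑j ^ p) :=
            aux_summable_rpow hp _ (fun j => hx0 j) hxsub
          set P' : ℝ := ∑' u : {u : {j : J // j ≠ j₁} // u ≠ j₂}, x ↑↑u ^ p with hP'def
          have hPsplit2 : P = b ^ p + P' :=
            aux_split (fun j : {j : J // j ≠ j₁} => x ↑j ^ p) hxpsub j₂
          have hxsub2 : Summable (fun u : {u : {j : J // j ≠ j₁} // u ≠ j₂} => x ↑↑u) :=
            hxsub.subtype {u | u ≠ j₂}
          have hP'T' : P' ≤ T' ^ p := by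
            calc P' ≤ T' ^ (p - 1) * T' :=
                  aux_tsum_rpow_le hp (fun u : {u : {j : J // j ≠ j₁} // u ≠ j₂} => x ↑↑u)
                    (fun u => hx0 _) hxsub2 hT'0
                    (fun u => Summable.le_tsum hxsub2 u fun v _ => hx0 _)
              _ = T' ^ p := by rw [mul_comm]; exact aux_self_mul_rpow hp hT'0
          -- nonsingularity at j₂
          have hR : ∑' k : {k : J // k ≠ ↑j₂}, x ↑k = a + T' := by
            have h := aux_split x hxs ↑j₂
            have : S = b + ∑' k : {k : J // k ≠ ↑j₂}, x ↑k := h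
            rw [hSplit, hTsplit] at this
            linarith
          have hns2 : (1 - pj ↑j₂) * b ≤ 2 * (a + T') := by
            have h := hns ↑j₂
            rw [hR] at h
            exact h
          have hpj2 : pj ↑j₂ + q ≤ 1 := by
            have := aux_pair_le pj hpj0 hpjs (i := (↑j₂ : J)) (j := j₁) j₂.2
            rw [hpjsum] at this
            exact this
          have hb4 : b ≤ 4 * (a + T') := by
            have h6 : 0 ≤ (1/2 - pj ↑j₂) * b := mul_nonneg (by linarith) hb0
            linarith [hns2, h6]
          have hT'big : T / 10 ≤ T' := by linarith
          have hbbig : T / 10 ≤ b := hj₂.le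
          have hmm := aux_minmax hp hb0 hT'0 hTsplit.symm hbbig hT'big
          calc c * X ≤ c₅ * X := mul_le_mul_of_nonneg_right hcle₅ hX0
            _ ≤ c₅ * (2 * T ^ p) := mul_le_mul_of_nonneg_left hX2 hc₅.le
            _ = (p - 1) / 10 * (1/2 : ℝ) ^ (p - 1) * T ^ p := by rw [hc₅def]; ring
            _ ≤ T ^ p - b ^ p - T' ^ p := hmm
            _ ≤ (a + T) ^ p - a ^ p - P := by
                rw [hPsplit2]; linarith [hsup, hP'T']
end

section
/- Let p > 1 be real. There is a constant C = C(p) with the following property. Let (p_j) and (y_j) be nonnegative sequences indexed by a countable set J with Σ_j p_j = 1, (y_j) summable, and (1 − p_j) y_j ≤ 2 Σ_{k ≠ j} y_k for all j. Then Σ_j (1 − p_j) y_j^p ≤ C ( (Σ_j y_j)^p − Σ_j y_j^p ). -/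
universe u

lemma helper_t (q t : ℝ) (hq : 0 < q) (ht0 : 0 ≤ t) (ht1 : t ≤ 1) :
    min 1 q * ((1 - t) * t ^ q) ≤ 1 - t ^ q := by
  have htq1 : t ^ q ≤ 1 := Real.rpow_le_one ht0 ht1 hq.le
  have htq0 : 0 ≤ t ^ q := Real.rpow_nonneg ht0 q
  rcases le_or_gt 1 q with h1q | h1q
  · have hmin : min 1 q = 1 := min_eq_left h1q
    have htt : t ^ q ≤ t := by
      rcases eq_or_lt_of_le ht0 with h | h
      · rw [← h, Real.zero_rpow hq.ne']
      · calc t ^ q ≤ t ^ (1:ℝ) := Real.rpow_le_rpow_of_exponent_ge h ht1 h1q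
          _ = t := Real.rpow_one t
    rw [hmin]; nlinarith
  · have hmin : min 1 q = q := min_eq_right h1q.le
    have hb : t ^ q * 1 ^ (1 - q) ≤ q * t + (1 - q) * 1 :=
      Real.geom_mean_le_arith_mean2_weighted hq.le (by linarith) ht0 zero_le_one (by ring)
    rw [Real.one_rpow, mul_one, mul_one] at hb
    rw [hmin]; nlinarith

lemma helper_scaled (q S y : ℝ) (hq : 0 < q) (hy : 0 ≤ y) (hyS : y ≤ S) :
    min 1 q * ((S - y) * y ^ q) ≤ (S ^ q - y ^ q) * S := by
  rcases eq_or_lt_of_le (hy.trans hyS) with hS | hS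
  · have hy0 : y = 0 := le_antisymm (hyS.trans hS.symm.le) hy
    rw [← hS, hy0, Real.zero_rpow hq.ne']
    simp
  · set t := y / S with htdef
    have ht0 : 0 ≤ t := div_nonneg hy hS.le
    have ht1 : t ≤ 1 := (div_le_one hS).mpr hyS
    have hy' : y = t * S := by rw [htdef, div_mul_cancel₀ y hS.ne']
    have htq : y ^ q = t ^ q * S ^ q := by
      rw [hy', Real.mul_rpow ht0 hS.le]
    have h := helper_t q t hq ht0 ht1
    calc min 1 q * ((S - y) * y ^ q)
        = min 1 q * ((1 - t) * t ^ q) * (S ^ q * S) := by rw [htq, hy']; ring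
      _ ≤ (1 - t ^ q) * (S ^ q * S) := by
          apply mul_le_mul_of_nonneg_right h
          positivity
      _ = (S ^ q - y ^ q) * S := by rw [htq]; ring

lemma aux_term (p : ℝ) (hp : 1 < p) (S y A : ℝ) (hy : 0 ≤ y) (hyS : y ≤ S)
    (hA0 : 0 ≤ A) (hA1 : A ≤ 1) (h2 : A * y ≤ 2 * (S - y)) :
    A * y ^ p ≤ (4 / min 1 (p - 1) + 1 / (2 ^ (p - 1) - 1)) * (y * S ^ (p - 1) - y ^ p) := by
  set q := p - 1 with hqdef
  have hq : 0 < q := by simp [hqdef]; linarith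
  have hc : 0 < min 1 q := lt_min one_pos hq
  have hD : 0 < (2:ℝ) ^ q - 1 := by
    have : (1:ℝ) = (2:ℝ) ^ (0:ℝ) := (Real.rpow_zero 2).symm
    nlinarith [Real.rpow_lt_rpow_of_exponent_lt (by norm_num : (1:ℝ) < 2) hq]
  have hS0 : 0 ≤ S := hy.trans hyS
  have hyp : y ^ p = y * y ^ q := by
    have h1 : y ^ p = y ^ ((1:ℝ) + q) := by rw [hqdef]; ring_nf
    rw [h1, Real.rpow_add' hy (by linarith), Real.rpow_one]
  have hyq0 : 0 ≤ y ^ q := Real.rpow_nonneg hy q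
  have hSq0 : 0 ≤ S ^ q := Real.rpow_nonneg hS0 q
  have hqq : y ^ q ≤ S ^ q := Real.rpow_le_rpow hy hyS hq.le
  have hR0 : 0 ≤ y * S ^ q - y ^ p := by rw [hyp]; nlinarith
  set R := y * S ^ q - y ^ p with hRdef
  rcases le_or_gt (2 * y) S with hcase | hcase
  · have h2q : (2:ℝ) ^ q * y ^ q = (2 * y) ^ q := (Real.mul_rpow (by norm_num) hy).symm
    have hkey : (2 * y) ^ q ≤ S ^ q := Real.rpow_le_rpow (by linarith) hcase hq.le
    have hDy : ((2:ℝ) ^ q - 1) * y ^ p ≤ R := by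
      rw [hRdef, hyp]; nlinarith
    have h1 : A * y ^ p ≤ y ^ p := by
      have : 0 ≤ y ^ p := Real.rpow_nonneg hy p
      nlinarith
    have h2' : y ^ p ≤ 1 / ((2:ℝ) ^ q - 1) * R := by
      rw [one_div, ← div_eq_inv_mul, le_div_iff₀ hD]
      nlinarith
    have h3 : 0 ≤ 4 / min 1 q * R := by positivity
    nlinarith
  · have h1 : A * y ^ p ≤ 2 * (S - y) * y ^ q := by
      rw [hyp]
      calc A * (y * y ^ q) = (A * y) * y ^ q := by ring
        _ ≤ (2 * (S - y)) * y ^ q := mul_le_mul_of_nonneg_right h2 hyq0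
        _ = 2 * (S - y) * y ^ q := by ring
    have hhs := helper_scaled q S y hq hy hyS
    have h4 : (S ^ q - y ^ q) * S ≤ (S ^ q - y ^ q) * (2 * y) :=
      mul_le_mul_of_nonneg_left (by linarith) (by linarith)
    have h5 : min 1 q * ((S - y) * y ^ q) ≤ 2 * R := by
      rw [hRdef, hyp]; nlinarith
    have h6 : 2 * (S - y) * y ^ q ≤ 4 / min 1 q * R := by
      rw [div_mul_eq_mul_div, le_div_iff₀ hc]
      nlinarith
    have h7 : 0 ≤ 1 / ((2:ℝ) ^ q - 1) * R := by positivity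
    nlinarith

/-- Let `p > 1`. There is `C = C(p)` such that whenever `(p_j)` and `(y_j)` are nonnegative
sequences indexed by a countable set `J` with `∑ p_j = 1`, `(y_j)` summable, and
`(1 - p_j) y_j ≤ 2 ∑_{k ≠ j} y_k` for all `j`, then
`∑_j (1 - p_j) y_j^p ≤ C ((∑_j y_j)^p - ∑_j y_j^p)`. -/
theorem nonsingular_sum_bound (p : ℝ) (hp : 1 < p) :
    ∃ C : ℝ, ∀ (J : Type u) [Countable J] (pj y : J → ℝ),
      (∀ j, 0 ≤ pj j) → (∀ j, 0 ≤ y j) → Summable y →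
      (∑' j, pj j) = 1 →
      (∀ j, (1 - pj j) * y j ≤ 2 * ∑' k : {k : J // k ≠ j}, y k) →
      (∑' j, (1 - pj j) * y j ^ p) ≤ C * ((∑' j, y j) ^ p - ∑' j, y j ^ p) := by
  classical
  set q := p - 1 with hqdef
  have hq : 0 < q := by simp [hqdef]; linarith
  set C := 4 / min 1 q + 1 / (2 ^ q - 1) with hCdef
  have hc : 0 < min 1 q := lt_min one_pos hq
  have hD : 0 < (2:ℝ) ^ q - 1 := by
    have : (1:ℝ) = (2:ℝ) ^ (0:ℝ) := (Real.rpow_zero 2).symm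
    nlinarith [Real.rpow_lt_rpow_of_exponent_lt (by norm_num : (1:ℝ) < 2) hq]
  have hC0 : 0 ≤ C := by positivity
  refine ⟨C, fun J _ pj y hpj hy hsy hsum1 hcond => ?_⟩
  set S := ∑' j, y j with hSdef
  have hyS : ∀ j, y j ≤ S := fun j => Summable.le_tsum hsy j (fun k _ => hy k)
  have hS0 : 0 ≤ S := tsum_nonneg hy
  have hpjsum : Summable pj := by
    by_contra h
    rw [tsum_eq_zero_of_not_summable h] at hsum1
    norm_num at hsum1
  have hpj1 : ∀ j, pj j ≤ 1 := fun j => hsum1 ▸ Summable.le_tsum hpjsum j (fun k _ => hpj k)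
  have hsub : ∀ j, (∑' k : {k : J // k ≠ j}, y k) = S - y j := by
    intro j
    have h1 : (∑' k : {k : J // k ≠ j}, y k) = ∑' k, Set.indicator {k : J | k ≠ j} y k :=
      tsum_subtype {k : J | k ≠ j} y
    have h2 : ∀ k, Set.indicator {k : J | k ≠ j} y k = if k = j then 0 else y k := by
      intro k
      by_cases hk : k = j <;> simp [Set.indicator, hk]
    have h3 := Summable.tsum_eq_add_tsum_ite hsy j
    rw [h1, tsum_congr h2]
    linarith [h3]
  have hcond' : ∀ j, (1 - pj j) * y j ≤ 2 * (S - y j) := by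
    intro j
    have := hcond j
    rwa [hsub j] at this
  have hterm : ∀ j, (1 - pj j) * y j ^ p ≤ C * (y j * S ^ q - y j ^ p) := fun j =>
    aux_term p hp S (y j) (1 - pj j) (hy j) (hyS j)
      (by linarith [hpj1 j]) (by linarith [hpj j]) (hcond' j)
  have hyp' : ∀ j, y j ^ p = y j * y j ^ q := by
    intro j
    have h1 : y j ^ p = y j ^ ((1:ℝ) + q) := by rw [hqdef]; ring_nf
    rw [h1, Real.rpow_add' (hy j) (by linarith), Real.rpow_one]
  have hs1 : Summable (fun j => y j * S ^ q) := hsy.mul_right _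
  have hs2 : Summable (fun j => y j ^ p) := by
    apply Summable.of_nonneg_of_le (fun j => Real.rpow_nonneg (hy j) p) _ hs1
    intro j
    rw [hyp' j]
    exact mul_le_mul_of_nonneg_left (Real.rpow_le_rpow (hy j) (hyS j) hq.le) (hy j)
  have hsg : Summable (fun j => y j * S ^ q - y j ^ p) := hs1.sub hs2
  have hsL : Summable (fun j => (1 - pj j) * y j ^ p) := by
    apply Summable.of_nonneg_of_le _ hterm (hsg.mul_left C)
    intro j
    exact mul_nonneg (by linarith [hpj1 j]) (Real.rpow_nonneg (hy j) p)
  have hle := Summable.tsum_le_tsum hterm hsL (hsg.mul_left C)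
  have heq : (∑' j, C * (y j * S ^ q - y j ^ p)) = C * (S ^ p - ∑' j, y j ^ p) := by
    rw [tsum_mul_left, Summable.tsum_sub hs1 hs2, tsum_mul_right]
    congr 2
    have h1 : S ^ p = S ^ ((1:ℝ) + q) := by rw [hqdef]; ring_nf
    rw [h1, Real.rpow_add' hS0 (by linarith), Real.rpow_one]
  rw [heq] at hle
  exact hle
end

section
/- Let 1 < p < ∞ with conjugate exponent p' = p/(p−1). There is a constant C = C(p) with the following property. Let (p_j), (y_j), (A_j) be nonnegative sequences indexed by a countable set J with Σ_j p_j = 1, (y_j) summable, (1 − p_j) y_j ≤ 2 Σ_{k ≠ j} y_k for all j, and A_j ≤ y_j(1 − p_j) + p_j^{1/p} (Σ_{k ≠ j} y_k^p)^{1/p} (1 − p_j)^{1/p'} for all j. Then Σ_j A_j^p ≤ C ( (Σ_j y_j)^p − Σ_j y_j^p ). -/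
set_option maxHeartbeats 1000000
universe u

open Real

lemma tsum_ne_eq {J : Type u} {f : J → ℝ} (hf : Summable f) (j : J) :
    ∑' k : {k : J // k ≠ j}, f (k : J) = (∑' k, f k) - f j := by
  classical
  have h := Summable.sum_add_tsum_compl (s := ({j} : Finset J)) hf
  rw [Finset.sum_singleton] at h
  have he : ∑' k : ↑((({j} : Finset J) : Set J))ᶜ, f (k : J)
      = ∑' k : {k : J // k ≠ j}, f (k : J) := by
    rw [← (Equiv.subtypeEquivRight (p := fun x => x ∈ ((({j} : Finset J) : Set J))ᶜ)
      (q := fun x => x ≠ j) (fun x => by simp)).tsum_eq (fun k => f (k : J))]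
    exact tsum_congr fun c => rfl
  rw [he] at h
  linarith

lemma summable_ne {J : Type u} {f : J → ℝ} (hf : Summable f) (j : J) :
    Summable (fun k : {k : J // k ≠ j} => f (k : J)) :=
  hf.subtype _

lemma add_rpow_le' {p a b : ℝ} (hp : 1 ≤ p) (ha : 0 ≤ a) (hb : 0 ≤ b) :
    (a + b) ^ p ≤ 2 ^ (p - 1) * (a ^ p + b ^ p) := by
  lift a to NNReal using ha
  lift b to NNReal using hb
  have h := NNReal.rpow_add_le_mul_rpow_add_rpow a b hp
  exact_mod_cast h

lemma bernoulli_aux {p a R : ℝ} (hp : 1 ≤ p) (ha : 0 < a) (hR : 0 ≤ R) :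
    a ^ p + p * a ^ (p - 1) * R ≤ (a + R) ^ p := by
  have hp0 : (0:ℝ) < p := lt_of_lt_of_le one_pos hp
  have h := one_add_mul_self_le_rpow_one_add (s := R / a)
    (neg_one_lt_zero.le.trans (by positivity)) hp
  have h2 : (a + R) ^ p = a ^ p * (1 + R / a) ^ p := by
    rw [← Real.mul_rpow ha.le (by positivity)]
    rw [mul_add, mul_one, mul_div_cancel₀ _ ha.ne']
  have h3 : a ^ (p - 1) = a ^ p / a := by
    rw [Real.rpow_sub ha, Real.rpow_one]
  rw [h2, h3]
  have h4 := mul_le_mul_of_nonneg_left h (Real.rpow_nonneg ha.le p)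
  calc a ^ p + p * (a ^ p / a) * R = a ^ p * (1 + p * (R / a)) := by
        field_simp
    _ ≤ a ^ p * (1 + R / a) ^ p := h4

lemma rpow_inv_rpow_self {p x : ℝ} (hp : p ≠ 0) (hx : 0 ≤ x) :
    (x ^ (1 / p)) ^ p = x := by
  rw [← Real.rpow_mul hx, one_div, inv_mul_cancel₀ hp, Real.rpow_one]

lemma rpow_le_mul_of_le {p c x : ℝ} (hp : 1 < p) (hx : 0 ≤ x) (hxc : x ≤ c) :
    x ^ p ≤ c ^ (p - 1) * x := by
  have hsplit : x ^ p = x ^ (p - 1) * x := by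
    rw [show p = (p - 1) + 1 by ring,
      Real.rpow_add' hx (by simp; exact ne_of_gt (by linarith)), Real.rpow_one]
    ring_nf
  rw [hsplit]
  exact mul_le_mul_of_nonneg_right
    (Real.rpow_le_rpow hx hxc (by linarith)) hx

/-- Let `1 < p < ∞` with conjugate exponent `p' = p/(p-1)` (so `1/p' = (p-1)/p`). There is
`C = C(p)` such that whenever `(p_j), (y_j), (A_j)` are nonnegative sequences indexed by a
countable set `J` with `∑ p_j = 1`, `(y_j)` summable,
`(1 - p_j) y_j ≤ 2 ∑_{k ≠ j} y_k` for all `j`, and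
`A_j ≤ y_j (1 - p_j) + p_j^{1/p} (∑_{k ≠ j} y_k^p)^{1/p} (1 - p_j)^{1/p'}` for all `j`, then
`∑_j A_j^p ≤ C ((∑_j y_j)^p - ∑_j y_j^p)`. -/
theorem sum_A_pow_p_bound (p : ℝ) (hp : 1 < p) :
    ∃ C : ℝ, ∀ (J : Type u) [Countable J] (pj y A : J → ℝ),
      (∀ j, 0 ≤ pj j) → (∀ j, 0 ≤ y j) → (∀ j, 0 ≤ A j) → Summable y →
      (∑' j, pj j) = 1 →
      (∀ j, (1 - pj j) * y j ≤ 2 * ∑' k : {k : J // k ≠ j}, y k) →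
      (∀ j, A j ≤ y j * (1 - pj j)
          + pj j ^ (1 / p) * (∑' k : {k : J // k ≠ j}, y k ^ p) ^ (1 / p)
            * (1 - pj j) ^ ((p - 1) / p)) →
      (∑' j, A j ^ p) ≤ C * ((∑' j, y j) ^ p - ∑' j, y j ^ p) := by
  have hp0 : (0:ℝ) < p := lt_trans one_pos hp
  have hp1 : (0:ℝ) < p - 1 := by linarith
  have h2p1 : (1:ℝ) < 2 ^ (p - 1) := by
    have := Real.rpow_lt_rpow_of_exponent_lt (x := 2) one_lt_two (y := 0) (z := p - 1) hp1
    simpa using this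
  set K : ℝ := (2 ^ (p - 1) - 1)⁻¹ + 2 / (p - 1) + 1 / (p - 1) + 2 ^ (p + 1) / (p - 1) with hK
  have h2pm1 : (0:ℝ) < 2 ^ (p - 1) - 1 := by linarith
  have hKnn : 0 ≤ K := by
    rw [hK]
    have h1 : (0:ℝ) ≤ (2 ^ (p - 1) - 1)⁻¹ := inv_nonneg.2 h2pm1.le
    have h2 : (0:ℝ) ≤ 2 / (p - 1) := by positivity
    have h3 : (0:ℝ) ≤ 1 / (p - 1) := by positivity
    have h4 : (0:ℝ) ≤ 2 ^ (p + 1) / (p - 1) := by positivity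
    linarith
  refine ⟨2 ^ (p - 1) * (2 ^ p + 1) * K, ?_⟩
  intro J _ pj y A hpj0 hy0 hA0 hys hpsum hcons hAle
  classical
  set S : ℝ := ∑' j, y j with hS
  set Sp : ℝ := ∑' j, y j ^ p with hSp
  set D : ℝ := S ^ p - Sp with hD
  -- basic facts
  have hyS : ∀ j, y j ≤ S := fun j => Summable.le_tsum hys j (fun k _ => hy0 k)
  have hS0 : 0 ≤ S := tsum_nonneg hy0
  have hyp_nn : ∀ j, 0 ≤ y j ^ p := fun j => Real.rpow_nonneg (hy0 j) p
  have hyp_le : ∀ j, y j ^ p ≤ S ^ (p - 1) * y j :=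
    fun j => rpow_le_mul_of_le hp (hy0 j) (hyS j)
  have hyps : Summable (fun j => y j ^ p) :=
    Summable.of_nonneg_of_le hyp_nn hyp_le (hys.mul_left _)
  have hypS : ∀ j, y j ^ p ≤ Sp := fun j => Summable.le_tsum hyps j (fun k _ => hyp_nn k)
  have hSp0 : 0 ≤ Sp := tsum_nonneg hyp_nn
  have hSS : S ^ (p - 1) * S = S ^ p := by
    rw [show p = (p - 1) + 1 by ring, Real.rpow_add' hS0 (by
      intro h; simp at h; linarith), Real.rpow_one]
    ring_nf
  have hSpSp : Sp ≤ S ^ p := by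
    calc Sp ≤ ∑' j, S ^ (p - 1) * y j :=
          Summable.tsum_le_tsum hyp_le hyps (hys.mul_left _)
      _ = S ^ (p - 1) * S := by rw [Summable.tsum_mul_left _ hys]
      _ = S ^ p := hSS
  have hD0 : 0 ≤ D := by simp only [hD]; linarith
  -- pj summable, ≤ 1
  have hpjs : Summable pj := by
    by_contra h
    rw [tsum_eq_zero_of_not_summable h] at hpsum
    norm_num at hpsum
  have hpj1 : ∀ j, pj j ≤ 1 := by
    intro j
    rw [← hpsum]
    exact Summable.le_tsum hpjs j (fun k _ => hpj0 k)
  -- rewrite subtype sums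
  have hQ : ∀ j, (∑' k : {k : J // k ≠ j}, y (k : J) ^ p) = Sp - y j ^ p :=
    fun j => tsum_ne_eq hyps j
  have hT : ∀ j, (∑' k : {k : J // k ≠ j}, y (k : J)) = S - y j :=
    fun j => tsum_ne_eq hys j
  have hcons' : ∀ j, (1 - pj j) * y j ≤ 2 * (S - y j) := by
    intro j; have := hcons j; rwa [hT j] at this
  have hSy0 : ∀ j, 0 ≤ S - y j := by
    intro j
    have := hT j
    have h2 : 0 ≤ ∑' k : {k : J // k ≠ j}, y (k : J) := tsum_nonneg (fun k : {k : J // k ≠ j} => hy0 (k : J))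
    linarith
  -- the pointwise majorant
  set m : J → ℝ := fun j => min (y j) (S - y j) with hm
  have hm0 : ∀ j, 0 ≤ m j := fun j => le_min (hy0 j) (hSy0 j)
  set g : J → ℝ := fun j => 2 ^ (p - 1) * (2 ^ p * m j ^ p + pj j * (Sp - y j ^ p))
    with hg
  have hq_nn : ∀ j, 0 ≤ pj j * (Sp - y j ^ p) := by
    intro j
    have := hypS j
    exact mul_nonneg (hpj0 j) (by linarith)
  have hAg : ∀ j, A j ^ p ≤ g j := by
    intro j
    have hApleb : A j ^ p ≤ (y j * (1 - pj j)
        + pj j ^ (1 / p) * (Sp - y j ^ p) ^ (1 / p) * (1 - pj j) ^ ((p - 1) / p)) ^ p := by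
      apply Real.rpow_le_rpow (hA0 j) _ hp0.le
      have := hAle j
      rwa [hQ j] at this
    have ha0 : 0 ≤ y j * (1 - pj j) := mul_nonneg (hy0 j) (by linarith [hpj1 j])
    have hSpy : 0 ≤ Sp - y j ^ p := by linarith [hypS j]
    have hb0 : 0 ≤ pj j ^ (1 / p) * (Sp - y j ^ p) ^ (1 / p) * (1 - pj j) ^ ((p - 1) / p) := by
      apply mul_nonneg (mul_nonneg _ _) _
      · exact Real.rpow_nonneg (hpj0 j) _
      · exact Real.rpow_nonneg hSpy _
      · exact Real.rpow_nonneg (by linarith [hpj1 j]) _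
    have hsplit := add_rpow_le' hp.le ha0 hb0
    -- bound a^p
    have haP : (y j * (1 - pj j)) ^ p ≤ 2 ^ p * m j ^ p := by
      have h1 : y j * (1 - pj j) ≤ 2 * m j := by
        rcases le_total (y j) (S - y j) with h | h
        · have : m j = y j := min_eq_left h
          rw [this]
          nlinarith [hy0 j, hpj1 j, hpj0 j]
        · have : m j = S - y j := min_eq_right h
          rw [this]
          calc y j * (1 - pj j) = (1 - pj j) * y j := by ring
            _ ≤ 2 * (S - y j) := hcons' j
      calc (y j * (1 - pj j)) ^ p ≤ (2 * m j) ^ p :=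
            Real.rpow_le_rpow ha0 h1 hp0.le
        _ = 2 ^ p * m j ^ p := Real.mul_rpow (by norm_num) (hm0 j)
    -- bound b^p
    have hbP : (pj j ^ (1 / p) * (Sp - y j ^ p) ^ (1 / p) * (1 - pj j) ^ ((p - 1) / p)) ^ p
        ≤ pj j * (Sp - y j ^ p) := by
      have e1 : (pj j ^ (1 / p) * (Sp - y j ^ p) ^ (1 / p) * (1 - pj j) ^ ((p - 1) / p)) ^ p
          = pj j * (Sp - y j ^ p) * ((1 - pj j) ^ ((p - 1) / p)) ^ p := by
        rw [Real.mul_rpow (mul_nonneg (Real.rpow_nonneg (hpj0 j) _)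
              (Real.rpow_nonneg hSpy _)) (Real.rpow_nonneg (by linarith [hpj1 j]) _),
            Real.mul_rpow (Real.rpow_nonneg (hpj0 j) _) (Real.rpow_nonneg hSpy _),
            rpow_inv_rpow_self hp0.ne' (hpj0 j), rpow_inv_rpow_self hp0.ne' hSpy]
      rw [e1]
      have h2 : ((1 - pj j) ^ ((p - 1) / p)) ^ p ≤ 1 := by
        apply Real.rpow_le_one (Real.rpow_nonneg (by linarith [hpj1 j]) _) _ hp0.le
        exact Real.rpow_le_one (by linarith [hpj1 j]) (by linarith [hpj0 j]) (by positivity)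
      nlinarith [hq_nn j]
    calc A j ^ p ≤ _ := hApleb
      _ ≤ 2 ^ (p - 1) * ((y j * (1 - pj j)) ^ p
            + (pj j ^ (1 / p) * (Sp - y j ^ p) ^ (1 / p) * (1 - pj j) ^ ((p - 1) / p)) ^ p) :=
          hsplit
      _ ≤ g j := by
          simp only [hg]
          have h2pm : (0:ℝ) ≤ 2 ^ (p - 1) := by positivity
          nlinarith [haP, hbP]
  -- summability of the pieces
  have hmp_le : ∀ j, m j ^ p ≤ y j ^ p :=
    fun j => Real.rpow_le_rpow (hm0 j) (min_le_left _ _) hp0.le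
  have hmp_nn : ∀ j, 0 ≤ m j ^ p := fun j => Real.rpow_nonneg (hm0 j) p
  have hmps : Summable (fun j => m j ^ p) :=
    Summable.of_nonneg_of_le hmp_nn hmp_le hyps
  have hq_le : ∀ j, pj j * (Sp - y j ^ p) ≤ pj j * Sp := by
    intro j
    apply mul_le_mul_of_nonneg_left _ (hpj0 j)
    linarith [hyp_nn j]
  have hqs : Summable (fun j => pj j * (Sp - y j ^ p)) :=
    Summable.of_nonneg_of_le hq_nn hq_le (hpjs.mul_right _)
  have hgs : Summable g := by
    apply Summable.mul_left
    exact ((hmps.mul_left _).add hqs)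
  have hAps : Summable (fun j => A j ^ p) :=
    Summable.of_nonneg_of_le (fun j => Real.rpow_nonneg (hA0 j) p) hAg hgs
  set M : ℝ := ∑' j, m j ^ p with hM
  set P : ℝ := ∑' j, pj j * (Sp - y j ^ p) with hP
  have hgsum : (∑' j, g j) = 2 ^ (p - 1) * (2 ^ p * M + P) := by
    simp only [hg]
    rw [tsum_mul_left, Summable.tsum_add (hmps.mul_left _) hqs, tsum_mul_left]
  -- the two key bounds
  have hMK : M ≤ K * D ∧ P ≤ K * D := by
    by_cases hbig : ∃ j0, S / 2 < y j0
    · -- concentrated case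
      obtain ⟨j0, hj0⟩ := hbig
      set a : ℝ := y j0 with ha
      set R : ℝ := S - y j0 with hR
      have hR0 : 0 ≤ R := hSy0 j0
      have hSpos : 0 < S := by
        rcases lt_or_ge 0 S with h | h
        · exact h
        · exfalso; have := hyS j0; nlinarith
      have ha0 : 0 < a := lt_of_le_of_lt (by positivity) hj0
      have hRS2 : R ≤ S / 2 := by simp only [hR]; linarith
      have hRa : R ≤ a := by linarith
      -- tail of y, tail of y^p
      have hQ0 : Sp - a ^ p ≤ R ^ p := by
        have h1 : ∀ k : {k : J // k ≠ j0}, y (k : J) ≤ R := by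
          intro k
          have := Summable.le_tsum (summable_ne hys j0) k
            (fun k' _ => hy0 (k' : J))
          rwa [hT j0] at this
        have h2 : (∑' k : {k : J // k ≠ j0}, y (k : J) ^ p)
            ≤ ∑' k : {k : J // k ≠ j0}, R ^ (p - 1) * y (k : J) := by
          apply Summable.tsum_le_tsum _ (summable_ne hyps j0) ((summable_ne hys j0).mul_left _)
          intro k
          exact rpow_le_mul_of_le hp (hy0 (k : J)) (h1 k)
        rw [hQ j0, tsum_mul_left, hT j0] at h2
        have hRR : R ^ (p - 1) * R = R ^ p := by
          rw [show p = (p - 1) + 1 by ring, Real.rpow_add' hR0 (by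
            intro h; simp at h; linarith), Real.rpow_one]
          ring_nf
        rw [hRR] at h2
        exact h2
      have hQ0nn : 0 ≤ Sp - a ^ p := by linarith [hypS j0]
      -- key lower bound on D
      have hDlow : (p - 1) * (a ^ (p - 1) * R) ≤ D := by
        have hb := bernoulli_aux hp.le ha0 hR0
        have hSaR : a + R = S := by simp only [hR]; ring
        rw [hSaR] at hb
        have hRp_le : R ^ p ≤ a ^ (p - 1) * R := by
          have h1 : R ^ (p - 1) ≤ a ^ (p - 1) :=
            Real.rpow_le_rpow hR0 hRa hp1.le
          have h2 : R ^ p = R ^ (p - 1) * R := by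
            rw [show p = (p - 1) + 1 by ring, Real.rpow_add' hR0 (by
              intro h; simp at h; linarith), Real.rpow_one]
            ring_nf
          rw [h2]
          exact mul_le_mul_of_nonneg_right h1 hR0
        simp only [hD]
        nlinarith
      have hap1 : (S / 2) ^ (p - 1) ≤ a ^ (p - 1) :=
        Real.rpow_le_rpow (by positivity) hj0.le hp1.le
      have hRp_le' : R ^ p ≤ a ^ (p - 1) * R := by
        have h1 : R ^ (p - 1) ≤ a ^ (p - 1) := Real.rpow_le_rpow hR0 hRa hp1.le
        have h2 : R ^ p = R ^ (p - 1) * R := by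
          rw [show p = (p - 1) + 1 by ring, Real.rpow_add' hR0 (by
            intro h; simp at h; linarith), Real.rpow_one]
          ring_nf
        rw [h2]; exact mul_le_mul_of_nonneg_right h1 hR0
      have hD1 : R ^ p ≤ 1 / (p - 1) * D := by
        rw [div_mul_eq_mul_div, le_div_iff₀ hp1]
        nlinarith
      -- R * S^(p-1) ≤ (2^(p-1)/(p-1)) * D
      have hS2 : (S / 2) ^ (p - 1) = S ^ (p - 1) / 2 ^ (p - 1) :=
        Real.div_rpow hS0 (by norm_num) (p - 1)
      have hD2 : R * S ^ (p - 1) ≤ 2 ^ (p - 1) / (p - 1) * D := by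
        have h1 : (p - 1) * ((S / 2) ^ (p - 1) * R) ≤ D := by
          have h := mul_le_mul_of_nonneg_right hap1 hR0
          have h' := mul_le_mul_of_nonneg_left h hp1.le
          exact le_trans h' hDlow
        rw [hS2] at h1
        rw [div_mul_eq_mul_div, le_div_iff₀ hp1]
        have h2p : (0:ℝ) < 2 ^ (p - 1) := by positivity
        calc R * S ^ (p - 1) * (p - 1)
            = (p - 1) * (S ^ (p - 1) / 2 ^ (p - 1) * R) * 2 ^ (p - 1) := by
              field_simp
          _ ≤ D * 2 ^ (p - 1) := by
              apply mul_le_mul_of_nonneg_right h1 h2p.le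
          _ = 2 ^ (p - 1) * D := by ring
      constructor
      · -- M bound
        have hsplitM := tsum_ne_eq hmps j0
        have htail : (∑' k : {k : J // k ≠ j0}, m (k : J) ^ p) ≤ Sp - a ^ p := by
          rw [← hQ j0]
          exact Summable.tsum_le_tsum (fun k => hmp_le (k : J))
            (summable_ne hmps j0) (summable_ne hyps j0)
        have hmj0 : m j0 ^ p ≤ R ^ p := by
          apply Real.rpow_le_rpow (hm0 j0) _ hp0.le
          exact min_le_right _ _
        have : M ≤ 2 * R ^ p := by
          have := hsplitM
          nlinarith [hQ0, htail, hmj0]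
        calc M ≤ 2 * R ^ p := this
          _ ≤ 2 * (1 / (p - 1) * D) := by linarith [hD1]
          _ = 2 / (p - 1) * D := by ring
          _ ≤ K * D := by
              apply mul_le_mul_of_nonneg_right _ hD0
              simp only [hK]
              have h1 : (0:ℝ) ≤ (2 ^ (p - 1) - 1)⁻¹ := inv_nonneg.2 h2pm1.le
              have h3 : (0:ℝ) ≤ 1 / (p - 1) := by positivity
              have h4 : (0:ℝ) ≤ 2 ^ (p + 1) / (p - 1) := by positivity
              linarith
      · -- P bound
        have hsplitP := tsum_ne_eq hqs j0
        have hpj0' : (1 - pj j0) ≤ 2 * R / a := by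
          rw [le_div_iff₀ ha0]
          linarith [hcons' j0]
        have hpjtail : (∑' k : {k : J // k ≠ j0}, pj (k : J)) = 1 - pj j0 := by
          rw [tsum_ne_eq hpjs j0, hpsum]
        have htailP : (∑' k : {k : J // k ≠ j0}, pj (k : J) * (Sp - y (k : J) ^ p))
            ≤ (1 - pj j0) * Sp := by
          calc (∑' k : {k : J // k ≠ j0}, pj (k : J) * (Sp - y (k : J) ^ p))
              ≤ ∑' k : {k : J // k ≠ j0}, pj (k : J) * Sp :=
                Summable.tsum_le_tsum (fun k => hq_le (k : J))
                  (summable_ne hqs j0) ((summable_ne hpjs j0).mul_right _)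
            _ = (1 - pj j0) * Sp := by rw [tsum_mul_right, hpjtail]
        have hheadP : pj j0 * (Sp - a ^ p) ≤ R ^ p := by
          calc pj j0 * (Sp - a ^ p) ≤ 1 * (Sp - a ^ p) :=
                mul_le_mul_of_nonneg_right (hpj1 j0) hQ0nn
            _ = Sp - a ^ p := one_mul _
            _ ≤ R ^ p := hQ0
        have htail2 : (1 - pj j0) * Sp ≤ 4 * (R * S ^ (p - 1)) := by
          have hfrac : 2 * R * S / a ≤ 4 * R := by
            rw [div_le_iff₀ ha0]
            nlinarith [hR0, hj0]
          have h1 : (1 - pj j0) * Sp ≤ (2 * R / a) * Sp :=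
            mul_le_mul_of_nonneg_right hpj0' hSp0
          have h2 : (2 * R / a) * Sp ≤ (2 * R / a) * (S ^ (p - 1) * S) := by
            apply mul_le_mul_of_nonneg_left _ (div_nonneg (by linarith) ha0.le)
            rw [hSS]
            exact hSpSp
          calc (1 - pj j0) * Sp ≤ (2 * R / a) * Sp := h1
            _ ≤ (2 * R / a) * (S ^ (p - 1) * S) := h2
            _ = (2 * R * S / a) * S ^ (p - 1) := by ring
            _ ≤ 4 * R * S ^ (p - 1) :=
                mul_le_mul_of_nonneg_right hfrac (Real.rpow_nonneg hS0 _)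
            _ = 4 * (R * S ^ (p - 1)) := by ring
        have hPle : P ≤ R ^ p + 4 * (R * S ^ (p - 1)) := by
          have := hsplitP
          nlinarith [htailP, hheadP, htail2]
        calc P ≤ R ^ p + 4 * (R * S ^ (p - 1)) := hPle
          _ ≤ 1 / (p - 1) * D + 4 * (2 ^ (p - 1) / (p - 1) * D) := by
              have := mul_le_mul_of_nonneg_left hD2 (by norm_num : (0:ℝ) ≤ 4)
              linarith [hD1]
          _ ≤ K * D := by
              have h4 : 4 * (2 ^ (p - 1) / (p - 1) * D) = 4 * 2 ^ (p - 1) / (p - 1) * D := by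
                ring
              rw [h4]
              rw [show (1 / (p - 1) * D + 4 * 2 ^ (p - 1) / (p - 1) * D)
                = (1 / (p - 1) + 4 * 2 ^ (p - 1) / (p - 1)) * D by ring]
              have he : (4:ℝ) * 2 ^ (p - 1) = 2 ^ (p + 1) := by
                rw [show (4:ℝ) = 2 ^ (2:ℝ) by
                  rw [show (2:ℝ) ^ (2:ℝ) = 2 ^ (2:ℕ) by
                    rw [← Real.rpow_natCast]; norm_num]
                  norm_num]
                rw [← Real.rpow_add (by norm_num)]
                ring_nf
              rw [he]
              apply mul_le_mul_of_nonneg_right _ hD0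
              simp only [hK]
              have h1 : (0:ℝ) ≤ (2 ^ (p - 1) - 1)⁻¹ := inv_nonneg.2 h2pm1.le
              have h2 : (0:ℝ) ≤ 2 / (p - 1) := by positivity
              linarith
    · -- spread case: all y j ≤ S/2
      push_neg at hbig
      have hSpD : Sp ≤ (2 ^ (p - 1) - 1)⁻¹ * D := by
        have h1 : Sp * 2 ^ (p - 1) ≤ S ^ p := by
          have hyp_le2 : ∀ j, y j ^ p ≤ (S / 2) ^ (p - 1) * y j :=
            fun j => rpow_le_mul_of_le hp (hy0 j) (hbig j)
          have h2 : Sp ≤ (S / 2) ^ (p - 1) * S := by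
            calc Sp ≤ ∑' j, (S / 2) ^ (p - 1) * y j :=
                  Summable.tsum_le_tsum hyp_le2 hyps (hys.mul_left _)
              _ = (S / 2) ^ (p - 1) * S := by rw [Summable.tsum_mul_left _ hys]
          have hS2 : (S / 2) ^ (p - 1) = S ^ (p - 1) / 2 ^ (p - 1) :=
            Real.div_rpow hS0 (by norm_num) (p - 1)
          rw [hS2] at h2
          have h2p : (0:ℝ) < 2 ^ (p - 1) := by positivity
          calc Sp * 2 ^ (p - 1) ≤ S ^ (p - 1) / 2 ^ (p - 1) * S * 2 ^ (p - 1) :=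
                mul_le_mul_of_nonneg_right h2 h2p.le
            _ = S ^ (p - 1) * S := by field_simp
            _ = S ^ p := hSS
        rw [le_inv_mul_iff₀ h2pm1]  -- maybe wrong name
        simp only [hD]
        nlinarith
      have hMb : M ≤ Sp :=
        Summable.tsum_le_tsum hmp_le hmps hyps
      have hPb : P ≤ Sp := by
        calc P ≤ ∑' j, pj j * Sp := Summable.tsum_le_tsum hq_le hqs (hpjs.mul_right _)
          _ = (∑' j, pj j) * Sp := by rw [tsum_mul_right]
          _ = Sp := by rw [hpsum, one_mul]
      have hKD : (2 ^ (p - 1) - 1)⁻¹ * D ≤ K * D := by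
        apply mul_le_mul_of_nonneg_right _ hD0
        simp only [hK]
        have h2 : (0:ℝ) ≤ 2 / (p - 1) := by positivity
        have h3 : (0:ℝ) ≤ 1 / (p - 1) := by positivity
        have h4 : (0:ℝ) ≤ 2 ^ (p + 1) / (p - 1) := by positivity
        linarith
      exact ⟨le_trans hMb (le_trans hSpD hKD), le_trans hPb (le_trans hSpD hKD)⟩
  obtain ⟨hMK1, hMK2⟩ := hMK
  calc (∑' j, A j ^ p) ≤ ∑' j, g j := Summable.tsum_le_tsum hAg hAps hgs
    _ = 2 ^ (p - 1) * (2 ^ p * M + P) := hgsum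
    _ ≤ 2 ^ (p - 1) * (2 ^ p * (K * D) + K * D) := by
        have h2p : (0:ℝ) ≤ 2 ^ p := by positivity
        have h2pm : (0:ℝ) ≤ 2 ^ (p - 1) := by positivity
        apply mul_le_mul_of_nonneg_left _ h2pm
        have := mul_le_mul_of_nonneg_left hMK1 h2p
        linarith
    _ = 2 ^ (p - 1) * (2 ^ p + 1) * K * D := by ring
    _ = 2 ^ (p - 1) * (2 ^ p + 1) * K * (S ^ p - Sp) := by rw [hD]
end

section
/- Let 1 < p < ∞ with conjugate exponent p' = p/(p−1). There is a constant C = C(p) with the following property. Let (p_j), (y_j), (A_j) be nonnegative sequences indexed by a countable set J with Σ_j p_j = 1, (y_j) summable, (1 − p_j) y_j ≤ 2 Σ_{k ≠ j} y_k for all j, and A_j ≤ y_j(1 − p_j) + p_j^{1/p} (Σ_{k ≠ j} y_k^p)^{1/p} (1 − p_j)^{1/p'} for all j. Then Σ_j A_j y_j^{p−1} ≤ C ( (Σ_j y_j)^p − Σ_j y_j^p ). -/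
universe u

private lemma aux_tsum_split {J : Type u} (f : J → ℝ) (hf : Summable f) (m : J) :
    ∑' j, f j = f m + ∑' (k : {k : J // k ≠ m}), f k := by
  classical
  have h1 : ∑' (k : {k : J // k ≠ m}), f (k : J)
      = ∑' j, if j = m then 0 else f j := by
    have h2 : ∀ k : {k : J // k ≠ m},
        f (k : J) = (fun j => if j = m then 0 else f j) (k : J) := by
      intro k; simp [k.prop]
    rw [tsum_congr h2]
    exact tsum_subtype_eq_of_support_subset (f := fun j => if j = m then 0 else f j)
      (s := {k | k ≠ m}) (by
        intro x hx
        simp only [Function.mem_support] at hx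
        intro he
        exact hx (by simp [he]))
  rw [h1]
  exact Summable.tsum_eq_add_tsum_ite hf m

private lemma aux_exists_max {J : Type u} (y : J → ℝ) (hy : Summable y) {j0 : J}
    (h0 : 0 < y j0) : ∃ m, ∀ j, y j ≤ y m := by
  have hev : ∀ᶠ j in Filter.cofinite, y j < y j0 :=
    (hy.tendsto_cofinite_zero).eventually_lt_const h0
  have hfin : {j | y j0 ≤ y j}.Finite :=
    (Filter.eventually_cofinite.mp hev).subset (fun j hj => not_lt.mpr hj)
  obtain ⟨m, hm, hmax⟩ := Set.Finite.exists_maximalFor y _ hfin ⟨j0, show y j0 ≤ y j0 from le_refl _⟩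
  refine ⟨m, fun j => ?_⟩
  by_cases hj : y j0 ≤ y j
  · rcases le_or_gt (y j) (y m) with h | h
    · exact h
    · exact hmax hj h.le
  · exact (not_le.mp hj).le.trans hm

set_option maxHeartbeats 1600000 in
/-- Let `1 < p < ∞` with conjugate exponent `p' = p/(p-1)` (so `1/p' = (p-1)/p`). There is
`C = C(p)` such that whenever `(p_j), (y_j), (A_j)` are nonnegative sequences indexed by a
countable set `J` with `∑ p_j = 1`, `(y_j)` summable,
`(1 - p_j) y_j ≤ 2 ∑_{k ≠ j} y_k` for all `j`, and
`A_j ≤ y_j (1 - p_j) + p_j^{1/p} (∑_{k ≠ j} y_k^p)^{1/p} (1 - p_j)^{1/p'}` for all `j`, then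
`∑_j A_j y_j^{p-1} ≤ C ((∑_j y_j)^p - ∑_j y_j^p)`. -/
theorem sum_A_mul_y_bound (p : ℝ) (hp : 1 < p) :
    ∃ C : ℝ, ∀ (J : Type u) [Countable J] (pj y A : J → ℝ),
      (∀ j, 0 ≤ pj j) → (∀ j, 0 ≤ y j) → (∀ j, 0 ≤ A j) → Summable y →
      (∑' j, pj j) = 1 →
      (∀ j, (1 - pj j) * y j ≤ 2 * ∑' k : {k : J // k ≠ j}, y k) →
      (∀ j, A j ≤ y j * (1 - pj j)
          + pj j ^ (1 / p) * (∑' k : {k : J // k ≠ j}, y k ^ p) ^ (1 / p)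
            * (1 - pj j) ^ ((p - 1) / p)) →
      (∑' j, A j * y j ^ (p - 1)) ≤ C * ((∑' j, y j) ^ p - ∑' j, y j ^ p) := by
  classical
  refine ⟨11 / (p - 1), ?_⟩
  intro J _ pj y A hpj0 hy0 hA0 hy hpsum hcon hA
  have hp0 : (0:ℝ) < p := lt_trans one_pos hp
  have hp1 : (0:ℝ) < p - 1 := sub_pos.mpr hp
  have hpne : p ≠ 0 := ne_of_gt hp0
  have hp1ne : p - 1 ≠ 0 := ne_of_gt hp1
  -- x * x^(p-1) = x^p
  have hxp : ∀ x : ℝ, 0 ≤ x → x * x ^ (p - 1) = x ^ p := by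
    intro x hx
    have h1 : (1:ℝ) + (p - 1) = p := by ring
    have h2 := Real.rpow_one_add' hx (by rw [h1]; exact hpne)
    rw [h1] at h2
    exact h2.symm
  have hps : Summable pj := by
    by_contra h
    rw [tsum_eq_zero_of_not_summable h] at hpsum
    norm_num at hpsum
  have hpj1 : ∀ j, pj j ≤ 1 := fun j => hpsum ▸ Summable.le_tsum hps j (fun k _ => hpj0 k)
  have h1pj : ∀ j, 0 ≤ 1 - pj j := fun j => by linarith [hpj1 j]
  set S := ∑' j, y j with hSdef
  have hS0 : 0 ≤ S := tsum_nonneg hy0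
  have hyS : ∀ j, y j ≤ S := fun j => Summable.le_tsum hy j (fun k _ => hy0 k)
  have hyp_sum : Summable (fun j => y j ^ p) := by
    refine Summable.of_nonneg_of_le (fun j => Real.rpow_nonneg (hy0 j) p)
      (fun j => ?_) (hy.mul_left (S ^ (p - 1)))
    calc y j ^ p = y j ^ (p - 1) * y j := by rw [← hxp (y j) (hy0 j)]; ring
      _ ≤ S ^ (p - 1) * y j :=
        mul_le_mul_of_nonneg_right
          (Real.rpow_le_rpow (hy0 j) (hyS j) hp1.le) (hy0 j)
  set B := ∑' j, y j ^ p with hBdef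
  by_cases hex : ∃ j, 0 < y j
  · obtain ⟨j0, hj0⟩ := hex
    obtain ⟨m, hm⟩ := aux_exists_max y hy hj0
    have hym : 0 < y m := lt_of_lt_of_le hj0 (hm j0)
    set T := ∑' (k : {k : J // k ≠ m}), y (k : J) with hTdef
    have hsplitS : S = y m + T := aux_tsum_split y hy m
    have hT0 : (0:ℝ) ≤ T := tsum_nonneg (fun k => hy0 _)
    set B' := ∑' (k : {k : J // k ≠ m}), y (k : J) ^ p with hB'def
    have hsplitB : B = y m ^ p + B' := aux_tsum_split (fun j => y j ^ p) hyp_sum m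
    have hB'0 : (0:ℝ) ≤ B' := tsum_nonneg (fun k => Real.rpow_nonneg (hy0 _) p)
    have hsub_sum : Summable (fun k : {k : J // k ≠ m} => y (k : J)) :=
      hy.subtype {k | k ≠ m}
    have hsub_sump : Summable (fun k : {k : J // k ≠ m} => y (k : J) ^ p) :=
      hyp_sum.subtype {k | k ≠ m}
    have hsub_sumpj : Summable (fun k : {k : J // k ≠ m} => pj (k : J)) :=
      hps.subtype {k | k ≠ m}
    have hBj_le : ∀ j, (∑' (k : {k : J // k ≠ j}), y (k : J) ^ p) ≤ B := by
      intro j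
      have h := aux_tsum_split (fun j => y j ^ p) hyp_sum j
      have h2 : 0 ≤ y j ^ p := Real.rpow_nonneg (hy0 j) p
      rw [← hBdef] at h
      linarith
    have hBj0 : ∀ j, (0:ℝ) ≤ (∑' (k : {k : J // k ≠ j}), y (k : J) ^ p) :=
      fun j => tsum_nonneg (fun k => Real.rpow_nonneg (hy0 _) p)
    have hypm : ∀ k, y k ^ p ≤ y m ^ (p - 1) * y k := by
      intro k
      calc y k ^ p = y k ^ (p - 1) * y k := by rw [← hxp (y k) (hy0 k)]; ring
        _ ≤ y m ^ (p - 1) * y k :=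
          mul_le_mul_of_nonneg_right
            (Real.rpow_le_rpow (hy0 k) (hm k) hp1.le) (hy0 k)
    have hB'le : B' ≤ y m ^ (p - 1) * T := by
      calc B' ≤ ∑' (k : {k : J // k ≠ m}), y m ^ (p - 1) * y (k : J) :=
            Summable.tsum_le_tsum (fun k => hypm _) hsub_sump (hsub_sum.mul_left _)
        _ = y m ^ (p - 1) * T := tsum_mul_left
    have hB_le : B ≤ y m ^ (p - 1) * S := by
      rw [hsplitB, hsplitS, mul_add]
      have h1 : y m ^ p = y m ^ (p - 1) * y m := by rw [← hxp (y m) hym.le]; ring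
      linarith [hB'le]
    -- Bernoulli lower bound for S^p
    have hbern : y m ^ p + p * (y m ^ (p - 1) * T) ≤ S ^ p := by
      have h1 : (1:ℝ) + p * (T / y m) ≤ (1 + T / y m) ^ p :=
        one_add_mul_self_le_rpow_one_add
          (by have := div_nonneg hT0 hym.le; linarith) hp.le
      have h2 : y m ^ p * (1 + p * (T / y m)) ≤ y m ^ p * (1 + T / y m) ^ p :=
        mul_le_mul_of_nonneg_left h1 (Real.rpow_nonneg hym.le p)
      have e1 : y m * (1 + T / y m) = S := by
        rw [hsplitS]; field_simp
      have e2 : y m ^ p * (1 + T / y m) ^ p = S ^ p := by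
        rw [← Real.mul_rpow hym.le (by positivity), e1]
      have e3 : y m ^ p * (1 + p * (T / y m)) = y m ^ p + p * (y m ^ (p - 1) * T) := by
        have h3 : y m ^ p = y m * y m ^ (p - 1) := (hxp _ hym.le).symm
        rw [h3]; field_simp
      rw [e2, e3] at h2
      exact h2
    have hDlb : (p - 1) * (y m ^ (p - 1) * T) ≤ S ^ p - B := by
      rw [hsplitB]
      nlinarith [hB'le, hbern]
    have hY0 : (0:ℝ) ≤ y m ^ (p - 1) * T :=
      mul_nonneg (Real.rpow_nonneg hym.le _) hT0
    -- constraint at m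
    have hPm : (1 - pj m) * y m ≤ 2 * T := hcon m
    set P' := ∑' (k : {k : J // k ≠ m}), pj (k : J) with hP'def
    have hsplitP : (1:ℝ) = pj m + P' := by
      rw [← hpsum]; exact aux_tsum_split pj hps m
    have hP'0 : (0:ℝ) ≤ P' := tsum_nonneg (fun k => hpj0 _)
    have hP'1 : P' ≤ 1 := by linarith [hpj0 m]
    have hP'ym : P' * y m ≤ 2 * T := by
      have h : P' = 1 - pj m := by linarith
      rw [h]; exact hPm
    have hSP' : S * P' ≤ 3 * T := by
      have h1 : T * P' ≤ T * 1 := mul_le_mul_of_nonneg_left hP'1 hT0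
      rw [hsplitS]
      nlinarith [hP'ym]
    -- the two parts
    set u : J → ℝ := fun j => y j * (1 - pj j) * y j ^ (p - 1) with hudef
    set v : J → ℝ := fun j =>
      pj j ^ (1 / p) * (∑' (k : {k : J // k ≠ j}), y (k : J) ^ p) ^ (1 / p)
        * (1 - pj j) ^ ((p - 1) / p) * y j ^ (p - 1) with hvdef
    have hu0 : ∀ j, 0 ≤ u j := fun j =>
      mul_nonneg (mul_nonneg (hy0 j) (h1pj j)) (Real.rpow_nonneg (hy0 j) _)
    have hv0 : ∀ j, 0 ≤ v j := fun j =>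
      mul_nonneg (mul_nonneg (mul_nonneg (Real.rpow_nonneg (hpj0 j) _)
        (Real.rpow_nonneg (hBj0 j) _)) (Real.rpow_nonneg (h1pj j) _))
        (Real.rpow_nonneg (hy0 j) _)
    have hterm : ∀ j, A j * y j ^ (p - 1) ≤ u j + v j := by
      intro j
      have h := mul_le_mul_of_nonneg_right (hA j) (Real.rpow_nonneg (hy0 j) (p - 1))
      refine le_trans h (le_of_eq ?_)
      simp only [hudef, hvdef]
      ring
    -- u bounds
    have hu_le : ∀ j, u j ≤ y j ^ p := by
      intro j
      calc u j ≤ y j * 1 * y j ^ (p - 1) := by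
            refine mul_le_mul_of_nonneg_right ?_ (Real.rpow_nonneg (hy0 j) _)
            refine mul_le_mul_of_nonneg_left ?_ (hy0 j)
            linarith [hpj0 j]
        _ = y j ^ p := by rw [mul_one]; exact hxp _ (hy0 j)
    have hu_sum : Summable u := Summable.of_nonneg_of_le hu0 hu_le hyp_sum
    have hu_total : (∑' j, u j) ≤ 3 * (y m ^ (p - 1) * T) := by
      rw [aux_tsum_split u hu_sum m]
      have h1 : (∑' (k : {k : J // k ≠ m}), u (k : J)) ≤ B' :=
        Summable.tsum_le_tsum (fun k => hu_le _) (hu_sum.subtype {k | k ≠ m}) hsub_sump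
      have h2 : u m ≤ 2 * T * y m ^ (p - 1) := by
        have h3 : u m = ((1 - pj m) * y m) * y m ^ (p - 1) := by
          simp only [hudef]; ring
        rw [h3]
        exact mul_le_mul_of_nonneg_right hPm (Real.rpow_nonneg hym.le _)
      nlinarith [hB'le]
    -- v at m
    have hvm : v m ≤ 2 * (y m ^ (p - 1) * T) := by
      have hstep : v m ≤ (y m ^ (p - 1) * T) ^ (1 / p) * (2 * T / y m) ^ ((p - 1) / p)
          * y m ^ (p - 1) := by
        have f1 : pj m ^ (1 / p) ≤ 1 :=
          Real.rpow_le_one (hpj0 m) (hpj1 m) (by positivity)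
        have f2 : (∑' (k : {k : J // k ≠ m}), y (k : J) ^ p) ^ (1 / p)
            ≤ (y m ^ (p - 1) * T) ^ (1 / p) :=
          Real.rpow_le_rpow hB'0 hB'le (by positivity)
        have f3 : (1 - pj m) ^ ((p - 1) / p) ≤ (2 * T / y m) ^ ((p - 1) / p) := by
          refine Real.rpow_le_rpow (h1pj m) ?_ (by positivity)
          rw [le_div_iff₀ hym]
          exact hPm
        calc v m ≤ 1 * (y m ^ (p - 1) * T) ^ (1 / p) * (2 * T / y m) ^ ((p - 1) / p)
              * y m ^ (p - 1) := by
              simp only [hvdef]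
              refine mul_le_mul_of_nonneg_right ?_ (Real.rpow_nonneg hym.le _)
              refine mul_le_mul ?_ f3 (Real.rpow_nonneg (h1pj m) _) (by positivity)
              exact mul_le_mul f1 f2 (Real.rpow_nonneg hB'0 _) one_pos.le
          _ = (y m ^ (p - 1) * T) ^ (1 / p) * (2 * T / y m) ^ ((p - 1) / p)
              * y m ^ (p - 1) := by ring
      -- now compute the coefficient
      have key : (y m ^ (p - 1) * T) ^ (1 / p) * (2 * T / y m) ^ ((p - 1) / p) ≤ 2 * T := by
        have e1 : (2 * T / y m) ^ ((p - 1) / p) = ((2 * T / y m) ^ (p - 1)) ^ (1 / p) := by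
          rw [← Real.rpow_mul (by positivity)]
          congr 1
          field_simp
        have e2 : (y m ^ (p - 1) * T) ^ (1 / p) * ((2 * T / y m) ^ (p - 1)) ^ (1 / p)
            = (y m ^ (p - 1) * T * (2 * T / y m) ^ (p - 1)) ^ (1 / p) := by
          rw [← Real.mul_rpow hY0 (Real.rpow_nonneg (by positivity) _)]
        have e3 : y m ^ (p - 1) * T * (2 * T / y m) ^ (p - 1) = (2 * T) ^ (p - 1) * T := by
          rw [Real.div_rpow (by positivity) hym.le]
          field_simp [ne_of_gt (Real.rpow_pos_of_pos hym (p - 1))]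
        have e4 : (2 * T) ^ (p - 1) * T ≤ (2 * T) ^ (p - 1) * (2 * T) := by
          refine mul_le_mul_of_nonneg_left (by linarith) (Real.rpow_nonneg (by positivity) _)
        have e5 : (2 * T) ^ (p - 1) * (2 * T) = (2 * T) ^ p := by
          have := hxp (2 * T) (by positivity)
          linarith [this]
        calc (y m ^ (p - 1) * T) ^ (1 / p) * (2 * T / y m) ^ ((p - 1) / p)
            = (y m ^ (p - 1) * T * (2 * T / y m) ^ (p - 1)) ^ (1 / p) := by
              rw [e1, e2]
          _ ≤ ((2 * T) ^ p) ^ (1 / p) := by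
              refine Real.rpow_le_rpow (by positivity) ?_ (by positivity)
              rw [e3]; linarith
          _ = 2 * T := by
              rw [← Real.rpow_mul (by positivity), mul_one_div_cancel hpne,
                Real.rpow_one]
      calc v m ≤ (y m ^ (p - 1) * T) ^ (1 / p) * (2 * T / y m) ^ ((p - 1) / p)
            * y m ^ (p - 1) := hstep
        _ ≤ 2 * T * y m ^ (p - 1) :=
            mul_le_mul_of_nonneg_right key (Real.rpow_nonneg hym.le _)
        _ = 2 * (y m ^ (p - 1) * T) := by ring
    -- v j ≤ B^{1/p} * (pj j^{1/p} * y j^{p-1}) for every j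
    have hvj : ∀ j, v j ≤ B ^ (1 / p) * (pj j ^ (1 / p) * y j ^ (p - 1)) := by
      intro j
      have f2 : (∑' (k : {k : J // k ≠ j}), y (k : J) ^ p) ^ (1 / p) ≤ B ^ (1 / p) :=
        Real.rpow_le_rpow (hBj0 j) (hBj_le j) (by positivity)
      have f3 : (1 - pj j) ^ ((p - 1) / p) ≤ 1 :=
        Real.rpow_le_one (h1pj j) (by linarith [hpj0 j]) (by positivity)
      calc v j ≤ pj j ^ (1 / p) * B ^ (1 / p) * 1 * y j ^ (p - 1) := by
            simp only [hvdef]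
            refine mul_le_mul_of_nonneg_right ?_ (Real.rpow_nonneg (hy0 j) _)
            refine mul_le_mul ?_ f3 (Real.rpow_nonneg (h1pj j) _) ?_
            · exact mul_le_mul_of_nonneg_left f2 (Real.rpow_nonneg (hpj0 j) _)
            · exact mul_nonneg (Real.rpow_nonneg (hpj0 j) _)
                (Real.rpow_nonneg (tsum_nonneg fun k => Real.rpow_nonneg (hy0 _) p) _)
        _ = B ^ (1 / p) * (pj j ^ (1 / p) * y j ^ (p - 1)) := by ring
    have hB0 : (0:ℝ) ≤ B := tsum_nonneg (fun j => Real.rpow_nonneg (hy0 j) p)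
    -- main claim about v
    have hv_claim : Summable v ∧ (∑' j, v j) ≤ 8 * (y m ^ (p - 1) * T) := by
      by_cases hBP : B' = 0 ∨ P' = 0
      · -- degenerate case: v vanishes off m
        have hvz : ∀ j, j ≠ m → v j = 0 := by
          intro j hj
          rcases hBP with h | h
          · have h1 : y j ^ p ≤ B' := by
              rw [hB'def]
              exact Summable.le_tsum hsub_sump ⟨j, hj⟩
                (fun k _ => Real.rpow_nonneg (hy0 _) p)
            have h2 : y j = 0 := by
              have h3 : y j ^ p = 0 :=
                le_antisymm (h ▸ h1) (Real.rpow_nonneg (hy0 j) p)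
              exact (Real.rpow_eq_zero (hy0 j) hpne).mp h3
            simp only [hvdef]
            rw [h2, Real.zero_rpow hp1ne, mul_zero]
          · have h1 : pj j ≤ P' := by
              rw [hP'def]
              exact Summable.le_tsum hsub_sumpj ⟨j, hj⟩ (fun k _ => hpj0 _)
            have h2 : pj j = 0 := le_antisymm (h ▸ h1) (hpj0 j)
            simp only [hvdef]
            rw [h2, Real.zero_rpow (by positivity : 1 / p ≠ 0)]
            ring
        have hv_sum : Summable v :=
          summable_of_ne_finset_zero (s := {m}) (fun j hj => hvz j (by simpa using hj))
        constructor
        · exact hv_sum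
        · rw [tsum_eq_single m (fun j hj => hvz j hj)]
          nlinarith [hvm, hY0]
      · push_neg at hBP
        have hB'pos : 0 < B' := lt_of_le_of_ne hB'0 (Ne.symm hBP.1)
        have hP'pos : 0 < P' := lt_of_le_of_ne hP'0 (Ne.symm hBP.2)
        set r := B' / P' with hrdef
        have hr : 0 < r := div_pos hB'pos hP'pos
        set lam := r ^ ((p - 1) / p) with hlamdef
        set mu := r ^ (-(1 / p)) with hmudef
        have hlam : 0 < lam := Real.rpow_pos_of_pos hr _
        have hmu : 0 < mu := Real.rpow_pos_of_pos hr _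
        -- Young: pj j^{1/p} y j^{p-1} ≤ lam * pj j + mu * y j^p
        have hyoung : ∀ j, pj j ^ (1 / p) * y j ^ (p - 1) ≤ lam * pj j + mu * y j ^ p := by
          intro j
          have hw : 1 / p + (p - 1) / p = 1 := by field_simp; ring
          have hg := Real.geom_mean_le_arith_mean2_weighted
            (w₁ := 1 / p) (w₂ := (p - 1) / p)
            (p₁ := lam * pj j) (p₂ := mu * y j ^ p)
            (by positivity) (by positivity)
            (mul_nonneg hlam.le (hpj0 j))
            (mul_nonneg hmu.le (Real.rpow_nonneg (hy0 j) p)) hw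
          have hcoef : lam ^ (1 / p) * mu ^ ((p - 1) / p) = 1 := by
            rw [hlamdef, hmudef, ← Real.rpow_mul hr.le, ← Real.rpow_mul hr.le,
              ← Real.rpow_add hr,
              show (p - 1) / p * (1 / p) + -(1 / p) * ((p - 1) / p) = 0 by ring,
              Real.rpow_zero]
          have hlhs : (lam * pj j) ^ (1 / p) * (mu * y j ^ p) ^ ((p - 1) / p)
              = pj j ^ (1 / p) * y j ^ (p - 1) := by
            rw [Real.mul_rpow hlam.le (hpj0 j), Real.mul_rpow hmu.le
              (Real.rpow_nonneg (hy0 j) p), ← Real.rpow_mul (hy0 j)]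
            have : p * ((p - 1) / p) = p - 1 := by field_simp
            rw [this]
            calc lam ^ (1 / p) * pj j ^ (1 / p) * (mu ^ ((p - 1) / p) * y j ^ (p - 1))
                = (lam ^ (1 / p) * mu ^ ((p - 1) / p)) * (pj j ^ (1 / p) * y j ^ (p - 1)) := by
                  ring
              _ = pj j ^ (1 / p) * y j ^ (p - 1) := by rw [hcoef, one_mul]
          rw [hlhs] at hg
          refine le_trans hg ?_
          have h1 : 1 / p * (lam * pj j) ≤ 1 * (lam * pj j) := by
            refine mul_le_mul_of_nonneg_right ?_ (mul_nonneg hlam.le (hpj0 j))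
            rw [div_le_one hp0]; linarith
          have h2 : (p - 1) / p * (mu * y j ^ p) ≤ 1 * (mu * y j ^ p) := by
            refine mul_le_mul_of_nonneg_right ?_
              (mul_nonneg hmu.le (Real.rpow_nonneg (hy0 j) p))
            rw [div_le_one hp0]; linarith
          linarith
        -- summable majorant
        have hw_sum : Summable (fun j => B ^ (1 / p) * (lam * pj j + mu * y j ^ p)) :=
          (((hps.mul_left lam).add (hyp_sum.mul_left mu)).mul_left _)
        have hv_le_w : ∀ j, v j ≤ B ^ (1 / p) * (lam * pj j + mu * y j ^ p) := by
          intro j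
          refine le_trans (hvj j) ?_
          refine mul_le_mul_of_nonneg_left ?_ (Real.rpow_nonneg hB0 _)
          exact hyoung j
        have hv_sum : Summable v := Summable.of_nonneg_of_le hv0 hv_le_w hw_sum
        refine ⟨hv_sum, ?_⟩
        -- sum over j ≠ m
        have htail : (∑' (k : {k : J // k ≠ m}), v (k : J))
            ≤ B ^ (1 / p) * (lam * P' + mu * B') := by
          calc (∑' (k : {k : J // k ≠ m}), v (k : J))
              ≤ ∑' (k : {k : J // k ≠ m}),
                B ^ (1 / p) * (lam * pj (k : J) + mu * y (k : J) ^ p) :=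
                Summable.tsum_le_tsum (fun k => hv_le_w _) (hv_sum.subtype {k | k ≠ m})
                  (hw_sum.subtype {k | k ≠ m})
            _ = B ^ (1 / p) * (lam * P' + mu * B') := by
                rw [tsum_mul_left, Summable.tsum_add (hsub_sumpj.mul_left lam)
                  (hsub_sump.mul_left mu), tsum_mul_left, tsum_mul_left]
        -- identify lam*P' + mu*B' = 2 * P'^{1/p} * B'^{(p-1)/p}
        have hid : lam * P' + mu * B' = 2 * (P' ^ (1 / p) * B' ^ ((p - 1) / p)) := by
          have e1 : lam * P' = P' ^ (1 / p) * B' ^ ((p - 1) / p) := by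
            rw [hlamdef, hrdef, Real.div_rpow hB'0 hP'0]
            rw [div_mul_eq_mul_div, div_eq_iff (ne_of_gt (Real.rpow_pos_of_pos hP'pos _))]
            rw [mul_comm (P' ^ (1 / p)) (B' ^ ((p - 1) / p)), mul_assoc]
            congr 1
            rw [← Real.rpow_add hP'pos]
            rw [show 1 / p + (p - 1) / p = 1 by field_simp; ring, Real.rpow_one]
          have e2 : mu * B' = P' ^ (1 / p) * B' ^ ((p - 1) / p) := by
            rw [hmudef, hrdef, Real.rpow_neg (div_nonneg hB'0 hP'0),
              Real.div_rpow hB'0 hP'0]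
            rw [inv_div]
            rw [div_mul_eq_mul_div, div_eq_iff (ne_of_gt (Real.rpow_pos_of_pos hB'pos _))]
            rw [mul_assoc]
            congr 1
            rw [← Real.rpow_add hB'pos]
            rw [show (p - 1) / p + 1 / p = 1 by field_simp; ring, Real.rpow_one]
          rw [e1, e2]; ring
        -- bound 2 * B^{1/p} * P'^{1/p} * B'^{(p-1)/p} ≤ 6 * Y
        have hZ : B ^ (1 / p) * (P' ^ (1 / p) * B' ^ ((p - 1) / p))
            ≤ 3 * (y m ^ (p - 1) * T) := by
          have e1 : B' ^ ((p - 1) / p) = (B' ^ (p - 1)) ^ (1 / p) := by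
            rw [← Real.rpow_mul hB'0]
            congr 1; field_simp
          have e2 : B ^ (1 / p) * (P' ^ (1 / p) * (B' ^ (p - 1)) ^ (1 / p))
              = (B * (P' * B' ^ (p - 1))) ^ (1 / p) := by
            rw [Real.mul_rpow hB0 (mul_nonneg hP'0 (Real.rpow_nonneg hB'0 _)),
              Real.mul_rpow hP'0 (Real.rpow_nonneg hB'0 _)]
          have hinner : B * (P' * B' ^ (p - 1))
              ≤ 3 * (y m ^ (p - 1) * T) ^ p := by
            have g1 : B' ^ (p - 1) ≤ (y m ^ (p - 1) * T) ^ (p - 1) :=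
              Real.rpow_le_rpow hB'0 hB'le hp1.le
            have g2 : B * (P' * B' ^ (p - 1))
                ≤ (y m ^ (p - 1) * S) * (P' * (y m ^ (p - 1) * T) ^ (p - 1)) := by
              refine mul_le_mul hB_le ?_ ?_ ?_
              · exact mul_le_mul_of_nonneg_left g1 hP'0
              · exact mul_nonneg hP'0 (Real.rpow_nonneg hB'0 _)
              · exact mul_nonneg (Real.rpow_nonneg hym.le _) hS0
            have g3 : (y m ^ (p - 1) * S) * (P' * (y m ^ (p - 1) * T) ^ (p - 1))
                ≤ 3 * (y m ^ (p - 1) * T) ^ p := by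
              have e4 : (y m ^ (p - 1) * T) ^ (p - 1)
                  = (y m ^ (p - 1)) ^ (p - 1) * T ^ (p - 1) :=
                Real.mul_rpow (Real.rpow_nonneg hym.le _) hT0
              have e5 : (y m ^ (p - 1) * T) ^ p = (y m ^ (p - 1)) ^ p * T ^ p :=
                Real.mul_rpow (Real.rpow_nonneg hym.le _) hT0
              have e6 : y m ^ (p - 1) * (y m ^ (p - 1)) ^ (p - 1)
                  = (y m ^ (p - 1)) ^ p := hxp _ (Real.rpow_nonneg hym.le _)
              have e7 : T * T ^ (p - 1) = T ^ p := hxp _ hT0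
              calc (y m ^ (p - 1) * S) * (P' * (y m ^ (p - 1) * T) ^ (p - 1))
                  = (S * P') * (y m ^ (p - 1) * ((y m ^ (p - 1)) ^ (p - 1) * T ^ (p - 1))) := by
                    rw [e4]; ring
                _ ≤ (3 * T) * (y m ^ (p - 1) * ((y m ^ (p - 1)) ^ (p - 1) * T ^ (p - 1))) := by
                    refine mul_le_mul_of_nonneg_right hSP' ?_
                    exact mul_nonneg (Real.rpow_nonneg hym.le _)
                      (mul_nonneg (Real.rpow_nonneg (Real.rpow_nonneg hym.le _) _)
                        (Real.rpow_nonneg hT0 _))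
                _ = 3 * ((y m ^ (p - 1)) ^ p * T ^ p) := by
                    rw [← e6, ← e7]; ring
                _ = 3 * (y m ^ (p - 1) * T) ^ p := by rw [e5]
            exact le_trans g2 g3
          calc B ^ (1 / p) * (P' ^ (1 / p) * B' ^ ((p - 1) / p))
              = (B * (P' * B' ^ (p - 1))) ^ (1 / p) := by rw [e1, e2]
            _ ≤ (3 * (y m ^ (p - 1) * T) ^ p) ^ (1 / p) := by
                refine Real.rpow_le_rpow ?_ hinner (by positivity)
                exact mul_nonneg hB0 (mul_nonneg hP'0 (Real.rpow_nonneg hB'0 _))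
            _ ≤ 3 * (y m ^ (p - 1) * T) := by
                rw [Real.mul_rpow (by norm_num) (Real.rpow_nonneg hY0 _),
                  ← Real.rpow_mul hY0, mul_one_div_cancel hpne, Real.rpow_one]
                refine mul_le_mul_of_nonneg_right ?_ hY0
                calc (3:ℝ) ^ (1 / p) ≤ 3 ^ (1:ℝ) :=
                      Real.rpow_le_rpow_of_exponent_le (by norm_num)
                        (by rw [div_le_one hp0]; linarith)
                  _ = 3 := Real.rpow_one 3
        -- combine
        rw [aux_tsum_split v hv_sum m]
        have : (∑' (k : {k : J // k ≠ m}), v (k : J)) ≤ 6 * (y m ^ (p - 1) * T) := by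
          refine le_trans htail ?_
          rw [hid]
          calc B ^ (1 / p) * (2 * (P' ^ (1 / p) * B' ^ ((p - 1) / p)))
              = 2 * (B ^ (1 / p) * (P' ^ (1 / p) * B' ^ ((p - 1) / p))) := by ring
            _ ≤ 2 * (3 * (y m ^ (p - 1) * T)) := by linarith [hZ]
            _ = 6 * (y m ^ (p - 1) * T) := by ring
        linarith [hvm]
    obtain ⟨hv_sum, hv_total⟩ := hv_claim
    -- final assembly
    have hg_sum : Summable (fun j => u j + v j) := hu_sum.add hv_sum
    have hAy_sum : Summable (fun j => A j * y j ^ (p - 1)) :=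
      Summable.of_nonneg_of_le
        (fun j => mul_nonneg (hA0 j) (Real.rpow_nonneg (hy0 j) _)) hterm hg_sum
    calc (∑' j, A j * y j ^ (p - 1)) ≤ ∑' j, (u j + v j) :=
          Summable.tsum_le_tsum hterm hAy_sum hg_sum
      _ = (∑' j, u j) + ∑' j, v j := Summable.tsum_add hu_sum hv_sum
      _ ≤ 11 * (y m ^ (p - 1) * T) := by linarith
      _ ≤ 11 / (p - 1) * (S ^ p - B) := by
          have h1 := mul_le_mul_of_nonneg_left hDlb
            (le_of_lt (by positivity : (0:ℝ) < 11 / (p - 1)))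
          have h2 : 11 / (p - 1) * ((p - 1) * (y m ^ (p - 1) * T))
              = 11 * (y m ^ (p - 1) * T) := by
            field_simp
          linarith
  · -- all y j = 0
    push_neg at hex
    have hy_eq : ∀ j, y j = 0 := fun j => le_antisymm (hex j) (hy0 j)
    have h1 : (∑' j, A j * y j ^ (p - 1)) = 0 := by
      simp [hy_eq, Real.zero_rpow hp1ne]
    have h2 : S = 0 := by simp [hSdef, hy_eq]
    have h3 : B = 0 := by simp [hBdef, hy_eq, Real.zero_rpow hpne]
    rw [h1, h2, h3, Real.zero_rpow hpne]
    norm_num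
end

section
/- For every real p > 1 and all nonnegative reals A and B, (A + B)^p ≤ B^p + p · max(1, 2^{p−2}) · (A^p + A · B^{p−1}). -/
private lemma tangent_step (p A B : ℝ) (hp : 1 < p) (hA : 0 ≤ A) (hB : 0 ≤ B) :
    (A + B) ^ p ≤ B ^ p + p * A * (A + B) ^ (p - 1) := by
  rcases eq_or_lt_of_le (add_nonneg hA hB) with h | hS
  · have hA0 : A = 0 := by nlinarith
    have hB0 : B = 0 := by nlinarith
    simp [hA0, hB0, Real.zero_rpow (by positivity : p ≠ 0)]
  · set S := A + B with hSdef
    have hs : (-1 : ℝ) ≤ -(A / S) := by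
      rw [neg_le_neg_iff]
      exact div_le_one_of_le₀ (by nlinarith) hS.le
    have hb := one_add_mul_self_le_rpow_one_add hs hp.le
    have h1 : (1 + -(A / S)) = B / S := by
      field_simp
      rw [hSdef]; ring
    rw [h1, Real.div_rpow hB hS.le] at hb
    have hSp : 0 < S ^ p := Real.rpow_pos_of_pos hS p
    have hb' : (1 + p * -(A / S)) * S ^ p ≤ B ^ p := by
      calc (1 + p * -(A / S)) * S ^ p ≤ (B ^ p / S ^ p) * S ^ p :=
            mul_le_mul_of_nonneg_right hb hSp.le
        _ = B ^ p := by field_simp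
    have hkey : S ^ p - p * A * S ^ (p - 1) ≤ B ^ p := by
      have hSp1 : S ^ p = S * S ^ (p - 1) := by
        rw [← Real.rpow_one_add' hS.le (by intro h; nlinarith)]
        ring_nf
      calc S ^ p - p * A * S ^ (p - 1)
          = (1 + p * -(A / S)) * S ^ p := by
            rw [hSp1]; field_simp; ring
        _ ≤ B ^ p := hb'
    linarith

private lemma split_step (q A B : ℝ) (hq : 0 < q) (hA : 0 ≤ A) (hB : 0 ≤ B) :
    (A + B) ^ q ≤ max 1 (2 ^ (q - 1)) * (A ^ q + B ^ q) := by
  have hAB : 0 ≤ A ^ q + B ^ q := by positivity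
  rcases le_or_gt q 1 with h | h
  · have key := NNReal.rpow_add_le_add_rpow A.toNNReal B.toNNReal hq.le h
    have hr : (A + B) ^ q ≤ A ^ q + B ^ q := by
      have := NNReal.coe_le_coe.2 key
      push_cast [NNReal.coe_rpow, Real.coe_toNNReal _ hA, Real.coe_toNNReal _ hB] at this
      exact this
    calc (A + B) ^ q ≤ A ^ q + B ^ q := hr
      _ = 1 * (A ^ q + B ^ q) := (one_mul _).symm
      _ ≤ max 1 (2 ^ (q - 1)) * (A ^ q + B ^ q) :=
          mul_le_mul_of_nonneg_right (le_max_left _ _) hAB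
  · have key := NNReal.rpow_add_le_mul_rpow_add_rpow A.toNNReal B.toNNReal h.le
    have hr : (A + B) ^ q ≤ 2 ^ (q - 1) * (A ^ q + B ^ q) := by
      have := NNReal.coe_le_coe.2 key
      push_cast [NNReal.coe_rpow, Real.coe_toNNReal _ hA, Real.coe_toNNReal _ hB] at this
      exact this
    calc (A + B) ^ q ≤ 2 ^ (q - 1) * (A ^ q + B ^ q) := hr
      _ ≤ max 1 (2 ^ (q - 1)) * (A ^ q + B ^ q) :=
          mul_le_mul_of_nonneg_right (le_max_right _ _) hAB

/-- For every real `p > 1` and all nonnegative reals `A` and `B`,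
`(A + B)^p ≤ B^p + p · max(1, 2^{p-2}) · (A^p + A B^{p-1})`. -/
theorem add_rpow_le (p A B : ℝ) (hp : 1 < p) (hA : 0 ≤ A) (hB : 0 ≤ B) :
    (A + B) ^ p ≤ B ^ p + p * max 1 (2 ^ (p - 2)) * (A ^ p + A * B ^ (p - 1)) := by
  have h1 := tangent_step p A B hp hA hB
  have h2 := split_step (p - 1) A B (by linarith) hA hB
  have hq2 : p - 1 - 1 = p - 2 := by ring
  rw [hq2] at h2
  have hpA : 0 ≤ p * A := by positivity
  have h3 : p * A * (A + B) ^ (p - 1)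
      ≤ p * A * (max 1 ((2:ℝ) ^ (p - 2)) * (A ^ (p - 1) + B ^ (p - 1))) :=
    mul_le_mul_of_nonneg_left h2 hpA
  have hAp : A * A ^ (p - 1) = A ^ p := by
    rw [← Real.rpow_one_add' hA (by intro h; nlinarith)]
    ring_nf
  calc (A + B) ^ p ≤ B ^ p + p * A * (A + B) ^ (p - 1) := h1
    _ ≤ B ^ p + p * A * (max 1 ((2:ℝ) ^ (p - 2)) * (A ^ (p - 1) + B ^ (p - 1))) := by linarith
    _ = B ^ p + p * max 1 ((2:ℝ) ^ (p - 2)) * (A * A ^ (p - 1) + A * B ^ (p - 1)) := by ring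
    _ = B ^ p + p * max 1 (2 ^ (p - 2)) * (A ^ p + A * B ^ (p - 1)) := by rw [hAp]
end

section
/- Suppose additionally that the measure P is atomless (no single point or minimal measurable set of positive measure belongs to 𝓕). Then for every p with 1 < p < ∞ and α = 1/p' (where p' = p/(p−1)), the partial-sum operators of the formally conjugate Riesz potential are not uniformly bounded from L_1 to L_p: there is no constant C such that ‖Σ_{n=1}^N (E_n − E_{n−1})(M_n (E_n F))‖_{L_p} ≤ C ‖F‖_{L_1} for all F ∈ L_1(Ω) and all N ≥ 1. -/
open MeasureTheory Filter
open scoped ENNReal Topology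

/-- A probability space equipped with a sequence of σ-algebras `𝓕_n`, each generated by a
finite or countable partition of `Ω` into measurable sets (atoms, indexed by `ℕ`, where empty
sets are allowed so that finite partitions are covered), such that `𝓕_0 = {∅, Ω}`, the sequence
is increasing, lies below the ambient σ-algebra, and separates points. -/
structure PartitionFiltration (Ω : Type*) [m : MeasurableSpace Ω] (P : Measure Ω) where
  part : ℕ → ℕ → Set Ω
  meas : ∀ n j, MeasurableSet (part n j)
  disj : ∀ n, Pairwise fun i j => Disjoint (part n i) (part n j)
  cover : ∀ n, (⋃ j, part n j) = Set.univ
  zero_trivial : ∀ j, part 0 j = ∅ ∨ part 0 j = Set.univ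
  mono : ∀ n, MeasurableSpace.generateFrom {s | ∃ j, s = part n j}
            ≤ MeasurableSpace.generateFrom {s | ∃ j, s = part (n + 1) j}
  le_ambient : ∀ n, MeasurableSpace.generateFrom {s | ∃ j, s = part n j} ≤ m
  separating : ∀ ω₁ ω₂ : Ω, ω₁ ≠ ω₂ → ∃ n j, ω₁ ∈ part n j ∧ ω₂ ∉ part n j

namespace PartitionFiltration

variable {Ω : Type*} [m : MeasurableSpace Ω] {P : Measure Ω} (pf : PartitionFiltration Ω P)

/-- The σ-algebra `𝓕_n`, generated by the atoms of the `n`-th partition. -/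
def filt (n : ℕ) : MeasurableSpace Ω :=
  MeasurableSpace.generateFrom {s | ∃ j, s = pf.part n j}

/-- The index of the atom of the `n`-th partition containing `ω`. -/
noncomputable def idx (n : ℕ) (ω : Ω) : ℕ := by
  classical exact if h : ∃ j, ω ∈ pf.part n j then h.choose else 0

/-- `b_n(ω)` is the probability of the atom of `𝓕_n` containing `ω`. -/
noncomputable def b (n : ℕ) (ω : Ω) : ℝ :=
  (P (pf.part n (pf.idx n ω))).toReal

/-- The conditional expectation `E_n f = 𝔼(f ∣ 𝓕_n)`. -/
noncomputable def E (n : ℕ) (f : Ω → ℝ) : Ω → ℝ :=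
  P[f | pf.filt n]

/-- The multiplication operator `M_n f = b_n^α · f`. -/
noncomputable def M (α : ℝ) (n : ℕ) (f : Ω → ℝ) : Ω → ℝ :=
  fun ω => pf.b n ω ^ α * f ω

/-- The partial sums `S_N = ∑_{n=1}^N M_n (E_n F - E_{n-1} F)` of the Riesz potential `I_α[F]`. -/
noncomputable def rieszSum (α : ℝ) (F : Ω → ℝ) (N : ℕ) : Ω → ℝ :=
  fun ω => ∑ n ∈ Finset.Icc 1 N, pf.M α n (fun ω' => pf.E n F ω' - pf.E (n - 1) F ω') ω

/-- The partial sums `S_N = ∑_{n=1}^N (E_n - E_{n-1})(M_n F)` of the formally conjugate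
Riesz potential `I'_α[F]`. -/
noncomputable def conjRieszSum (α : ℝ) (F : Ω → ℝ) (N : ℕ) : Ω → ℝ :=
  fun ω => ∑ n ∈ Finset.Icc 1 N, (pf.E n (pf.M α n F) ω - pf.E (n - 1) (pf.M α n F) ω)

end PartitionFiltration


section Helpers

open MeasureTheory Filter Set
open scoped Topology

namespace PartitionFiltration

variable {Ω : Type*} [m : MeasurableSpace Ω] {P : Measure Ω} (pf : PartitionFiltration Ω P)

lemma mem_part_idx (n : ℕ) (ω : Ω) : ω ∈ pf.part n (pf.idx n ω) := by
  have h : ∃ j, ω ∈ pf.part n j := by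
    have := pf.cover n
    have : ω ∈ ⋃ j, pf.part n j := this ▸ Set.mem_univ ω
    simpa using this
  rw [idx, dif_pos h]
  exact h.choose_spec

lemma idx_eq {n : ℕ} {ω : Ω} {j : ℕ} (h : ω ∈ pf.part n j) : pf.idx n ω = j := by
  by_contra hne
  exact Set.disjoint_left.mp (pf.disj n hne) (pf.mem_part_idx n ω) h

/-- the atom of level `n` containing `ω` -/
def atom (n : ℕ) (ω : Ω) : Set Ω := pf.part n (pf.idx n ω)

lemma measurableSet_filt_part (n j : ℕ) : MeasurableSet[pf.filt n] (pf.part n j) :=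
  MeasurableSpace.measurableSet_generateFrom ⟨j, rfl⟩

lemma part_inter_or_subset {n : ℕ} {s : Set Ω} (hs : MeasurableSet[pf.filt n] s) (j : ℕ) :
    pf.part n j ∩ s = ∅ ∨ pf.part n j ⊆ s := by
  refine MeasurableSpace.generateFrom_induction
    (p := fun t _ => pf.part n j ∩ t = ∅ ∨ pf.part n j ⊆ t)
    _ ?_ ?_ ?_ ?_ s hs
  · rintro t ⟨j', rfl⟩ _
    rcases eq_or_ne j j' with rfl | hne
    · exact Or.inr Set.Subset.rfl
    · exact Or.inl (Set.disjoint_iff_inter_eq_empty.mp (pf.disj n hne))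
  · exact Or.inl (Set.inter_empty _)
  · rintro t _ (h | h)
    · exact Or.inr fun x hx => (Set.eq_empty_iff_forall_notMem.mp h x ⟨hx, ·⟩)
    · exact Or.inl (by rw [Set.eq_empty_iff_forall_notMem]; rintro x ⟨hx1, hx2⟩; exact hx2 (h hx1))
  · intro f _ hf
    by_cases hex : ∃ i, pf.part n j ⊆ f i
    · exact Or.inr (hex.choose_spec.trans (Set.subset_iUnion f hex.choose))
    · push_neg at hex
      refine Or.inl ?_
      rw [Set.inter_iUnion, Set.iUnion_eq_empty]
      intro i
      rcases hf i with h | h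
      · exact h
      · exact absurd h (hex i)

lemma atom_subset {n : ℕ} {ω : Ω} {s : Set Ω} (hs : MeasurableSet[pf.filt n] s) (hω : ω ∈ s) :
    pf.atom n ω ⊆ s := by
  rcases pf.part_inter_or_subset hs (pf.idx n ω) with h | h
  · exact absurd (Set.eq_empty_iff_forall_notMem.mp h ω) (by simp [pf.mem_part_idx n ω, hω])
  · exact h

lemma atom_antitone (ω : Ω) : Antitone fun n => pf.atom n ω := by
  refine antitone_nat_of_succ_le fun n => ?_
  exact pf.atom_subset (pf.mono n _ (pf.measurableSet_filt_part n (pf.idx n ω)))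
    (pf.mem_part_idx n ω)

lemma measurableSet_atom (n : ℕ) (ω : Ω) : MeasurableSet (pf.atom n ω) := pf.meas _ _

lemma atom_zero (ω : Ω) : pf.atom 0 ω = Set.univ := by
  rcases pf.zero_trivial (pf.idx 0 ω) with h | h
  · exact absurd (h ▸ pf.mem_part_idx 0 ω) (Set.notMem_empty ω)
  · exact h

lemma iInter_atom (ω : Ω) : ⋂ n, pf.atom n ω = {ω} := by
  apply Set.Subset.antisymm
  · intro x hx
    simp only [Set.mem_iInter] at hx
    by_contra hne
    rcases pf.separating ω x (fun h => hne (h ▸ rfl)) with ⟨n, j, hω, hxn⟩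
    have : pf.atom n ω = pf.part n j := by rw [atom, pf.idx_eq hω]
    exact hxn (this ▸ hx n)
  · rintro x rfl
    exact Set.mem_iInter.mpr fun n => pf.mem_part_idx n x

variable [IsProbabilityMeasure P]

include pf in
lemma measure_singleton_eq_zero
    (hatomless : ∀ s : Set Ω, MeasurableSet s → 0 < P s →
      ∃ t : Set Ω, t ⊆ s ∧ MeasurableSet t ∧ 0 < P t ∧ P t < P s) (ω : Ω) :
    P {ω} = 0 := by
  have hmeas : MeasurableSet ({ω} : Set Ω) := by
    rw [← pf.iInter_atom ω]
    exact MeasurableSet.iInter fun n => pf.measurableSet_atom n ω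
  by_contra h
  have hpos : 0 < P {ω} := lt_of_le_of_ne zero_le (Ne.symm h)
  obtain ⟨t, hts, _, htpos, htlt⟩ := hatomless _ hmeas hpos
  rcases Set.subset_singleton_iff_eq.mp hts with rfl | rfl
  · simp at htpos
  · exact absurd htlt (lt_irrefl _)

lemma tendsto_measure_atom
    (hatomless : ∀ s : Set Ω, MeasurableSet s → 0 < P s →
      ∃ t : Set Ω, t ⊆ s ∧ MeasurableSet t ∧ 0 < P t ∧ P t < P s) (ω : Ω) :
    Tendsto (fun n => P (pf.atom n ω)) atTop (𝓝 0) := by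
  have := tendsto_measure_iInter_atTop (μ := P) (s := fun n => pf.atom n ω)
    (fun n => (pf.measurableSet_atom n ω).nullMeasurableSet) (pf.atom_antitone ω)
    ⟨0, measure_ne_top _ _⟩
  rw [pf.iInter_atom ω, pf.measure_singleton_eq_zero hatomless ω] at this
  exact this

lemma exists_good_point : ∃ ω : Ω, ∀ n, P (pf.atom n ω) ≠ 0 := by
  by_contra h
  push_neg at h
  have hcover : (Set.univ : Set Ω) ⊆ ⋃ n, ⋃ j ∈ {j | P (pf.part n j) = 0}, pf.part n j := by
    intro ω _
    obtain ⟨n, hn⟩ := h ω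
    exact Set.mem_iUnion.mpr ⟨n, Set.mem_iUnion.mpr ⟨pf.idx n ω,
      Set.mem_iUnion.mpr ⟨hn, pf.mem_part_idx n ω⟩⟩⟩
  have hz : P (⋃ n, ⋃ j ∈ {j | P (pf.part n j) = 0}, pf.part n j) = 0 := by
    refine measure_iUnion_null fun n => measure_iUnion_null fun j => ?_
    by_cases hj : P (pf.part n j) = 0
    · simp [hj] 
    · simp [Set.mem_setOf_eq, hj]
  have := measure_mono (μ := P) hcover
  rw [hz, measure_univ] at this
  simp at this

lemma b_eq_on_atom {n : ℕ} {ω₀ ω : Ω} (h : ω ∈ pf.atom n ω₀) :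
    pf.b n ω = (P (pf.atom n ω₀)).toReal := by
  rw [b, PartitionFiltration.atom, pf.idx_eq h]

lemma condexp_indicator_of_subset_atom (n j : ℕ) (hj : P (pf.part n j) ≠ 0)
    {A : Set Ω} (hA : MeasurableSet A) (hAsub : A ⊆ pf.part n j) (c : ℝ) :
    P[A.indicator (fun _ => c) | pf.filt n] =ᵐ[P]
      (pf.part n j).indicator (fun _ => c * (P A).toReal / (P (pf.part n j)).toReal) := by
  haveI : SigmaFinite (P.trim (pf.le_ambient n)) := by
    haveI := MeasureTheory.isFiniteMeasure_trim (μ := P) (pf.le_ambient n)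
    infer_instance
  refine (ae_eq_condExp_of_forall_setIntegral_eq (pf.le_ambient n)
    ((integrable_const c).indicator hA) (fun s _ _ => Integrable.integrableOn ?_)
    (fun s hs _ => ?_) ?_).symm
  · exact (integrable_const _).indicator (pf.meas n j)
  · rw [setIntegral_indicator (pf.meas n j), setIntegral_indicator hA]
    rcases pf.part_inter_or_subset hs j with h | h
    · have h1 : s ∩ pf.part n j = ∅ := by rw [Set.inter_comm]; exact h
      have h2 : s ∩ A = ∅ := by
        rw [Set.eq_empty_iff_forall_notMem] at h1 ⊢
        exact fun x hx => h1 x ⟨hx.1, hAsub hx.2⟩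
      simp [h1, h2]
    · have h1 : s ∩ pf.part n j = pf.part n j := Set.inter_eq_self_of_subset_right h
      have h2 : s ∩ A = A := Set.inter_eq_self_of_subset_right (hAsub.trans h)
      rw [h1, h2, setIntegral_const, setIntegral_const, smul_eq_mul, smul_eq_mul]
      have hne : (P (pf.part n j)).toReal ≠ 0 :=
        ENNReal.toReal_ne_zero.mpr ⟨hj, measure_ne_top _ _⟩
      field_simp
      simp only [measureReal_def]
      ring
  · refine StronglyMeasurable.aestronglyMeasurable ?_
    exact (@stronglyMeasurable_const Ω ℝ (pf.filt n) _ _).indicator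
      (pf.measurableSet_filt_part n j)

end PartitionFiltration

section RealAux

open Finset

lemma aux_rpow_anti {x y z : ℝ} (hx : 0 < x) (hxy : x ≤ y) (hz : z ≤ 0) : y ^ z ≤ x ^ z := by
  have hy : 0 < y := hx.trans_le hxy
  rw [show z = -(-z) by ring, Real.rpow_neg hx.le, Real.rpow_neg hy.le]
  exact inv_anti₀ (Real.rpow_pos_of_pos hx _)
    (Real.rpow_le_rpow hx.le hxy (by linarith))

lemma aux_bernoulli_s14 {r δ : ℝ} (hr0 : 0 ≤ r) (hr1 : r ≤ 1) (hδ0 : 0 ≤ δ) (hδ1 : δ ≤ 1) :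
    δ * (1 - r) ≤ 1 - r ^ δ := by
  have h := rpow_one_add_le_one_add_mul_self (s := r - 1) (by linarith) hδ0 hδ1
  have : (1 + (r - 1)) = r := by ring
  rw [this] at h
  nlinarith [h]

lemma aux_prod_ge (r : ℕ → ℝ) (s : Finset ℕ) (h0 : ∀ i ∈ s, 0 ≤ r i) (h1 : ∀ i ∈ s, r i ≤ 1) :
    1 - ∑ i ∈ s, (1 - r i) ≤ ∏ i ∈ s, r i := by
  induction s using Finset.cons_induction with
  | empty => simp
  | cons a s ha ih =>
    rw [Finset.sum_cons, Finset.prod_cons]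
    have h0a := h0 a (Finset.mem_cons_self a s)
    have h1a := h1 a (Finset.mem_cons_self a s)
    have ih' := ih (fun i hi => h0 i (Finset.mem_cons_of_mem hi))
      (fun i hi => h1 i (Finset.mem_cons_of_mem hi))
    have hs0 : 0 ≤ ∑ i ∈ s, (1 - r i) :=
      Finset.sum_nonneg fun i hi => by linarith [h1 i (Finset.mem_cons_of_mem hi)]
    nlinarith [ih']

lemma aux_teleprod (β : ℕ → ℝ) (hpos : ∀ n, β n ≠ 0) (M N : ℕ) (h : M ≤ N) :
    β N = β M * ∏ i ∈ Finset.Icc (M + 1) N, (β i / β (i - 1)) := by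
  induction N, h using Nat.le_induction with
  | base => simp
  | succ N hMN ih =>
    rw [Finset.prod_Icc_succ_top (by omega), ← mul_assoc, ← ih]
    have : (N + 1 - 1) = N := rfl
    rw [this]
    field_simp [hpos N]

lemma aux_indicator_const_mul {Ω : Type*} (s : Set Ω) (c : ℝ) (ω : Ω) :
    s.indicator (fun _ => c) ω = c * s.indicator (fun _ => (1:ℝ)) ω := by
  by_cases h : ω ∈ s <;> simp [h]

end RealAux

section IntAux

open Finset MeasureTheory

variable {Ω : Type*} [m : MeasurableSpace Ω] {P : Measure Ω} [IsProbabilityMeasure P]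

/-- shorthand for the indicator of `a i` -/
noncomputable def aI (a : ℕ → Set Ω) (i : ℕ) : Ω → ℝ := (a i).indicator (fun _ => (1:ℝ))

lemma aI_meas {a : ℕ → Set Ω} (ha : ∀ n, MeasurableSet (a n)) (i : ℕ) : Measurable (aI a i) :=
  measurable_const.indicator (ha i)

lemma aI_int {a : ℕ → Set Ω} (ha : ∀ n, MeasurableSet (a n)) (i : ℕ) : Integrable (aI a i) P :=
  (integrable_const 1).indicator (ha i)

lemma aI_nonneg {a : ℕ → Set Ω} (i : ℕ) (ω : Ω) : 0 ≤ aI a i ω :=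
  Set.indicator_nonneg (fun _ _ => zero_le_one) ω

lemma aI_mul {a : ℕ → Set Ω} (hanti : Antitone a) (i j : ℕ) (ω : Ω) :
    aI a i ω * aI a j ω = aI a (max i j) ω := by
  rcases le_total i j with h | h
  · rw [max_eq_right h]
    by_cases hω : ω ∈ a j
    · have : ω ∈ a i := hanti h hω
      simp [aI, hω, this]
    · simp [aI, hω]
  · rw [max_eq_left h]
    by_cases hω : ω ∈ a i
    · have : ω ∈ a j := hanti h hω
      simp [aI, hω, this]
    · simp [aI, hω]

lemma aI_integral {a : ℕ → Set Ω} (ha : ∀ n, MeasurableSet (a n)) (i : ℕ) :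
    ∫ ω, aI a i ω ∂P = (P (a i)).toReal := by
  rw [aI, integral_indicator_const (1:ℝ) (ha i)]
  simp
  rfl

lemma aux_sum_alg (β x r : ℕ → ℝ) (d : ℝ) (N mm : ℕ) (hm : mm ≤ N)
    (hr : ∀ n, 1 ≤ n → r n * β (n - 1) = β n) :
    ∑ n ∈ Icc 1 N, (x n * d * β (max n mm) - x n * r n * d * β (max (n - 1) mm))
      = d * β mm * ∑ n ∈ Icc 1 mm, x n * (1 - r n) := by
  rw [← Finset.sum_subset (Finset.Icc_subset_Icc_right hm) (by
    intro n hn hn'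
    simp only [Finset.mem_Icc] at hn hn'
    have h1 : 1 ≤ n := hn.1
    have h2 : mm < n := by omega
    rw [max_eq_left (by omega), max_eq_left (by omega)]
    have h3 := hr n h1
    linear_combination (-(x n * d)) * h3)]
  rw [Finset.mul_sum]
  refine Finset.sum_congr rfl fun n hn => ?_
  simp only [Finset.mem_Icc] at hn
  rw [max_eq_right hn.2, max_eq_right (by omega)]
  ring

lemma aux_int_G_mul_h {a : ℕ → Set Ω} (ha : ∀ n, MeasurableSet (a n)) (hanti : Antitone a)
    (x r d : ℕ → ℝ) (N : ℕ)
    (hr : ∀ n, 1 ≤ n → r n * (P (a (n-1))).toReal = (P (a n)).toReal) :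
    ∫ ω, (∑ n ∈ Icc 1 N, (x n * aI a n ω - x n * r n * aI a (n-1) ω))
        * (∑ mm ∈ range (N+1), d mm * aI a mm ω) ∂P
      = ∑ mm ∈ range (N+1),
          d mm * (P (a mm)).toReal * ∑ n ∈ Icc 1 mm, x n * (1 - r n) := by
  have hrw : (fun ω => (∑ n ∈ Icc 1 N, (x n * aI a n ω - x n * r n * aI a (n-1) ω))
        * (∑ mm ∈ range (N+1), d mm * aI a mm ω))
      = fun ω => ∑ n ∈ Icc 1 N, ∑ mm ∈ range (N+1),
          (x n * d mm * aI a (max n mm) ω - x n * r n * d mm * aI a (max (n-1) mm) ω) := by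
    funext ω
    rw [Finset.sum_mul_sum]
    refine Finset.sum_congr rfl fun n _ => Finset.sum_congr rfl fun mm _ => ?_
    rw [← aI_mul hanti n mm ω, ← aI_mul hanti (n-1) mm ω]
    ring
  rw [hrw]
  rw [integral_finset_sum (μ := P) (Icc 1 N)
    (f := fun n ω => ∑ mm ∈ range (N+1),
      (x n * d mm * aI a (max n mm) ω - x n * r n * d mm * aI a (max (n-1) mm) ω))
    (fun n _ => integrable_finset_sum _ (fun mm _ => by
      exact ((aI_int ha (max n mm)).const_mul _).sub ((aI_int ha (max (n-1) mm)).const_mul _)))]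
  have step1 : ∀ n ∈ Finset.Icc 1 N, (∫ ω, ∑ mm ∈ range (N+1),
      (x n * d mm * aI a (max n mm) ω - x n * r n * d mm * aI a (max (n-1) mm) ω) ∂P)
      = ∑ mm ∈ range (N+1), (x n * d mm * (P (a (max n mm))).toReal
          - x n * r n * d mm * (P (a (max (n-1) mm))).toReal) := by
    intro n _
    rw [integral_finset_sum (μ := P) (range (N+1))
      (f := fun mm ω => x n * d mm * aI a (max n mm) ω - x n * r n * d mm * aI a (max (n-1) mm) ω)
      (fun mm _ => by
        exact ((aI_int ha (max n mm)).const_mul _).sub ((aI_int ha (max (n-1) mm)).const_mul _))]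
    refine Finset.sum_congr rfl fun mm _ => ?_
    rw [integral_sub (by exact (aI_int ha _).const_mul _) (by exact (aI_int ha _).const_mul _),
      integral_const_mul, integral_const_mul, aI_integral ha, aI_integral ha]
  rw [Finset.sum_congr rfl step1, Finset.sum_comm]
  refine Finset.sum_congr rfl fun mm hmm => ?_
  have hmmN : mm ≤ N := by simp only [Finset.mem_range] at hmm; omega
  rw [← aux_sum_alg (fun i => (P (a i)).toReal) x r (d mm) N mm hmmN hr]

lemma aux_hpow {a : ℕ → Set Ω} (hanti : Antitone a) (h0 : a 0 = Set.univ)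
    (d : ℕ → ℝ) {q : ℝ} (hq : q ≠ 0) (N : ℕ) (ω : Ω) :
    (∑ mm ∈ range (N+1), d mm * aI a mm ω) ^ q
      = ∑ mm ∈ range (N+1),
          ((∑ i ∈ range (mm+1), d i) ^ q - (∑ i ∈ range mm, d i) ^ q) * aI a mm ω := by
  induction N with
  | zero =>
    have h1 : aI a 0 ω = 1 := by simp [aI, h0]
    simp [h1, Real.zero_rpow hq]
  | succ N ih =>
    by_cases hω : ω ∈ a (N+1)
    · have hmem : ∀ mm ∈ range (N+1+1), aI a mm ω = 1 := by
        intro mm hmm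
        simp only [Finset.mem_range] at hmm
        have : ω ∈ a mm := hanti (by omega) hω
        simp [aI, this]
      have e1 : (∑ mm ∈ range (N+1+1), d mm * aI a mm ω) = ∑ mm ∈ range (N+1+1), d mm :=
        Finset.sum_congr rfl fun mm hmm => by rw [hmem mm hmm, mul_one]
      have e2 : (∑ mm ∈ range (N+1+1),
            ((∑ i ∈ range (mm+1), d i) ^ q - (∑ i ∈ range mm, d i) ^ q) * aI a mm ω)
          = ∑ mm ∈ range (N+1+1),
            ((∑ i ∈ range (mm+1), d i) ^ q - (∑ i ∈ range mm, d i) ^ q) :=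
        Finset.sum_congr rfl fun mm hmm => by rw [hmem mm hmm, mul_one]
      rw [e1, e2, Finset.sum_range_sub (fun mm => (∑ i ∈ range mm, d i) ^ q)]
      simp [Real.zero_rpow hq]
    · have hz : aI a (N+1) ω = 0 := by simp [aI, hω]
      rw [Finset.sum_range_succ, Finset.sum_range_succ
        (f := fun mm => ((∑ i ∈ range (mm+1), d i) ^ q - (∑ i ∈ range mm, d i) ^ q) * aI a mm ω),
        hz, mul_zero, add_zero, mul_zero, add_zero, ih]

lemma aux_int_hpow {a : ℕ → Set Ω} (ha : ∀ n, MeasurableSet (a n)) (hanti : Antitone a)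
    (h0 : a 0 = Set.univ) (d : ℕ → ℝ) {q : ℝ} (hq : q ≠ 0) (N : ℕ) :
    ∫ ω, (∑ mm ∈ range (N+1), d mm * aI a mm ω) ^ q ∂P
      = ∑ mm ∈ range (N+1),
          ((∑ i ∈ range (mm+1), d i) ^ q - (∑ i ∈ range mm, d i) ^ q) * (P (a mm)).toReal := by
  rw [integral_congr_ae (Filter.Eventually.of_forall (aux_hpow hanti h0 d hq N)),
    integral_finset_sum _ (fun mm _ => (aI_int ha mm).const_mul _)]
  refine Finset.sum_congr rfl fun mm _ => ?_
  rw [integral_const_mul, aI_integral ha]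

lemma aux_hpow_integrable {a : ℕ → Set Ω} (ha : ∀ n, MeasurableSet (a n)) (hanti : Antitone a)
    (h0 : a 0 = Set.univ) (d : ℕ → ℝ) {q : ℝ} (hq : q ≠ 0) (N : ℕ) :
    Integrable (fun ω => (∑ mm ∈ range (N+1), d mm * aI a mm ω) ^ q) P := by
  have : (fun ω => (∑ mm ∈ range (N+1), d mm * aI a mm ω) ^ q)
      = fun ω => ∑ mm ∈ range (N+1),
          ((∑ i ∈ range (mm+1), d i) ^ q - (∑ i ∈ range mm, d i) ^ q) * aI a mm ω := by
    funext ω; exact aux_hpow hanti h0 d hq N ω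
  rw [this]
  exact integrable_finset_sum _ (fun mm _ => (aI_int ha mm).const_mul _)

lemma aux_term_lb {bm bm1 γ δ : ℝ} (h1 : 0 < bm) (h2 : bm ≤ bm1) (h3 : 0 < bm1)
    (hγδ : γ + δ = 1) :
    ((bm ^ (-δ) - bm1 ^ (-δ)) * bm) * (bm ^ (-γ) - 1)
      = (1 - (bm / bm1) ^ δ) * (1 - bm ^ γ) := by
  have hnd : bm ^ (-δ) = (bm ^ δ)⁻¹ := by rw [Real.rpow_neg h1.le]
  have hnd1 : bm1 ^ (-δ) = (bm1 ^ δ)⁻¹ := by rw [Real.rpow_neg h3.le]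
  have hng : bm ^ (-γ) = (bm ^ γ)⁻¹ := by rw [Real.rpow_neg h1.le]
  have hdiv : (bm / bm1) ^ δ = bm ^ δ / bm1 ^ δ := Real.div_rpow h1.le h3.le δ
  rw [hnd, hnd1, hng, hdiv]
  set X := bm ^ γ with hXdef
  set Y := bm ^ δ with hYdef
  set Z := bm1 ^ δ with hZdef
  have hX : 0 < X := Real.rpow_pos_of_pos h1 γ
  have hY : 0 < Y := Real.rpow_pos_of_pos h1 δ
  have hZ : 0 < Z := Real.rpow_pos_of_pos h3 δ
  have hXY : X * Y = bm := by rw [hXdef, hYdef, ← Real.rpow_add h1, hγδ, Real.rpow_one]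
  rw [← hXY]
  field_simp

end IntAux

end Helpers

set_option maxHeartbeats 1000000 in
/-- **Lack of continuity from `L_{p'}` to `L_∞`.** Suppose the measure `P` is atomless (every
measurable set of positive measure has a measurable subset of strictly smaller positive
measure). Then for every `1 < p < ∞` and `α = 1/p' = 1 - 1/p`, the partial-sum operators of
the formally conjugate Riesz potential are not uniformly bounded from `L_1` to `L_p`: there is
no constant `C` such that
`‖∑_{n=1}^N (E_n - E_{n-1})(M_n (E_n F))‖_p ≤ C ‖F‖_1` for all integrable `F` and all
`N ≥ 1`. -/
theorem conj_riesz_not_uniformly_bounded_L1_Lp {Ω : Type*} [m : MeasurableSpace Ω]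
    {P : Measure Ω} [IsProbabilityMeasure P] (pf : PartitionFiltration Ω P)
    (hatomless : ∀ s : Set Ω, MeasurableSet s → 0 < P s →
      ∃ t : Set Ω, t ⊆ s ∧ MeasurableSet t ∧ 0 < P t ∧ P t < P s)
    (p : ℝ) (hp : 1 < p) :
    ¬ ∃ C : ℝ, ∀ (F : Ω → ℝ), Integrable F P → ∀ N : ℕ, 1 ≤ N →
      eLpNorm
        (fun ω => ∑ n ∈ Finset.Icc 1 N,
          (pf.E n (pf.M (1 - 1 / p) n (pf.E n F)) ω
            - pf.E (n - 1) (pf.M (1 - 1 / p) n (pf.E n F)) ω))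
        (ENNReal.ofReal p) P
      ≤ ENNReal.ofReal C * eLpNorm F 1 P := by
  rintro ⟨C, hC⟩
  classical
  have hp0 : 0 < p := lt_trans zero_lt_one hp
  set γ : ℝ := 1 / p with hγdef
  set δ : ℝ := 1 - 1 / p with hδdef
  have hγpos : 0 < γ := by rw [hγdef]; exact one_div_pos.mpr hp0
  have hγlt : γ < 1 := by rw [hγdef]; rw [div_lt_one hp0]; exact hp
  have hδpos : 0 < δ := by rw [hδdef]; rw [← hγdef]; linarith
  have hδlt : δ < 1 := by rw [hδdef]; rw [← hγdef]; linarith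
  have hγδ : γ + δ = 1 := by rw [hγdef, hδdef]; ring
  have hpγ : p * γ = 1 := by rw [hγdef]; field_simp
  have hp1ne : p - 1 ≠ 0 := by intro h; rw [sub_eq_zero] at h; exact absurd h.symm hp.ne
  set q : ℝ := p / (p - 1) with hqdef
  have hpq : p.HolderConjugate q := (Real.holderConjugate_iff_eq_conjExponent hp).2 hqdef
  have hq1 : 1 < q := by rw [hqdef, one_lt_div (by linarith)]; linarith
  have hq0 : 0 < q := lt_trans zero_lt_one hq1
  have hδq : δ * q = 1 := by rw [hδdef, hqdef]; field_simp
  have hδinvq : δ = 1 / q := by rw [eq_div_iff hq0.ne']; exact hδq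
  set C₀ : ℝ := max C 0 with hC₀def
  have hC₀nonneg : 0 ≤ C₀ := le_max_right _ _
  have hCC₀ : ENNReal.ofReal C = ENNReal.ofReal C₀ := by
    rcases le_total C 0 with h | h
    · rw [ENNReal.ofReal_eq_zero.mpr h, hC₀def, max_eq_right h, ENNReal.ofReal_zero]
    · rw [hC₀def, max_eq_left h]
  -- the good point and the chain of atoms
  obtain ⟨ω₀, hω₀⟩ := pf.exists_good_point (P := P)
  set a : ℕ → Set Ω := fun n => pf.atom n ω₀ with hadef
  have ha : ∀ n, MeasurableSet (a n) := fun n => pf.measurableSet_atom n ω₀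
  have hanti : Antitone a := pf.atom_antitone ω₀
  have ha0 : a 0 = Set.univ := pf.atom_zero ω₀
  set β : ℕ → ℝ := fun n => (P (a n)).toReal with hβdef
  have hβpos : ∀ n, 0 < β n := fun n => ENNReal.toReal_pos (hω₀ n) (measure_ne_top _ _)
  have hβle1 : ∀ n, β n ≤ 1 := fun n => by
    have := ENNReal.toReal_mono (b := 1) (by simp) (prob_le_one (μ := P) (s := a n))
    simpa using this
  have hβanti : ∀ {i j : ℕ}, i ≤ j → β j ≤ β i := fun {i j} hij =>
    ENNReal.toReal_mono (measure_ne_top _ _) (measure_mono (hanti hij))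
  have hβ0 : β 0 = 1 := by show (P (a 0)).toReal = 1; rw [ha0]; simp
  have hβtendsto : Tendsto β atTop (𝓝 0) := by
    have h := pf.tendsto_measure_atom hatomless ω₀
    have h2 := (ENNReal.tendsto_toReal (a := 0) (by simp)).comp h
    simp at h2; exact h2
  set r : ℕ → ℝ := fun n => β n / β (n - 1) with hrdef
  have hr_pos : ∀ n, 0 < r n := fun n => div_pos (hβpos n) (hβpos (n-1))
  have hr_le1 : ∀ n, 1 ≤ n → r n ≤ 1 := fun n hn => by
    show β n / β (n-1) ≤ 1
    exact (div_le_one (hβpos (n-1))).mpr (hβanti (by omega))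
  have hrβ : ∀ n, 1 ≤ n → r n * β (n - 1) = β n := fun n _ => by
    show β n / β (n-1) * β (n - 1) = β n
    exact div_mul_cancel₀ _ (hβpos (n-1)).ne'
  set Sg : ℕ → ℝ := fun N => ∑ mm ∈ Finset.Icc 1 N, (1 - r mm) with hSgdef
  have hSg_nonneg : ∀ N, 0 ≤ Sg N := fun N => Finset.sum_nonneg fun mm hmm => by
    have := hr_le1 mm (by simp only [Finset.mem_Icc] at hmm; omega)
    linarith
  have hSg_mono : Monotone Sg := fun i j hij => by
    refine Finset.sum_le_sum_of_subset_of_nonneg (Finset.Icc_subset_Icc_right hij) ?_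
    intro mm hmm _
    have := hr_le1 mm (by simp only [Finset.mem_Icc] at hmm; omega)
    linarith
  have hIccIoc : ∀ k : ℕ, Finset.Icc 1 k = Finset.Ioc 0 k := fun k => by
    ext z; simp [Finset.mem_Icc, Finset.mem_Ioc]; omega
  have hSg_split : ∀ {M N : ℕ}, M ≤ N → Sg M + ∑ mm ∈ Finset.Ioc M N, (1 - r mm) = Sg N := by
    intro M N hMN
    simp only [hSgdef, hIccIoc]
    exact Finset.sum_Ioc_consecutive _ (Nat.zero_le M) hMN
  -- Sg is unbounded
  have hSg_unbdd : ∀ T : ℝ, ∃ N, T ≤ Sg N := by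
    intro T
    by_contra hcon
    push_neg at hcon
    have hbdd : BddAbove (Set.range Sg) := ⟨T, by rintro y ⟨N, rfl⟩; exact (hcon N).le⟩
    set L : ℝ := ⨆ n, Sg n with hLdef
    obtain ⟨M, hM⟩ : ∃ M, L - 1/2 < Sg M := by
      obtain ⟨i, hi⟩ := exists_lt_of_lt_ciSup (show L - 1/2 < L by linarith)
      exact ⟨i, hi⟩
    have hβlb : ∀ N, M ≤ N → β M / 2 ≤ β N := by
      intro N hMN
      have hsum : ∑ mm ∈ Finset.Ioc M N, (1 - r mm) ≤ 1/2 := by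
        have h1 : Sg N ≤ L := le_ciSup hbdd N
        have := hSg_split hMN
        linarith
      have hprod := aux_prod_ge r (Finset.Ioc M N)
        (fun i _ => (hr_pos i).le)
        (fun i hi => hr_le1 i (by simp only [Finset.mem_Ioc] at hi; omega))
      have htele := aux_teleprod β (fun n => (hβpos n).ne') M N hMN
      have heq : ∏ i ∈ Finset.Icc (M+1) N, (β i / β (i-1)) = ∏ i ∈ Finset.Ioc M N, r i := by
        rw [← Finset.Icc_add_one_left_eq_Ioc]
      rw [heq] at htele
      have h2 : (1:ℝ)/2 ≤ ∏ i ∈ Finset.Ioc M N, r i := by linarith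
      have h3 : β M * (1/2) ≤ β M * ∏ i ∈ Finset.Ioc M N, r i :=
        mul_le_mul_of_nonneg_left h2 (hβpos M).le
      rw [← htele] at h3
      linarith
    obtain ⟨N, hN⟩ := (hβtendsto.eventually_lt_const (show (0:ℝ) < β M / 2 by
      have := hβpos M; linarith)).exists
    rcases le_total M N with h | h
    · exact absurd (hβlb N h) (by linarith)
    · have := hβanti h
      have := hβpos N
      linarith
  -- choose M with β M ^ γ ≤ 1/2
  obtain ⟨M, hMsmall⟩ := (hβtendsto.eventually_lt_const
    (show (0:ℝ) < (1/2:ℝ) ^ p from Real.rpow_pos_of_pos (by norm_num) p)).exists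
  have hMγ : β M ^ γ ≤ 1/2 := by
    calc β M ^ γ ≤ ((1/2:ℝ) ^ p) ^ γ :=
          Real.rpow_le_rpow (hβpos M).le hMsmall.le hγpos.le
    _ = (1/2:ℝ) ^ (p * γ) := (Real.rpow_mul (by norm_num) p γ).symm
    _ = 1/2 := by rw [hpγ, Real.rpow_one]
  -- choose N
  obtain ⟨N₁, hN₁⟩ := hSg_unbdd (max (2 * Sg M + 2) ((8 * C₀ / δ + 1) ^ p))
  set N : ℕ := max N₁ (max M 1) with hNdef
  have hN1 : 1 ≤ N := le_trans (le_max_right M 1) (le_max_right _ _)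
  have hMN : M ≤ N := le_trans (le_max_left M 1) (le_max_right _ _)
  have hT1 : 2 * Sg M + 2 ≤ Sg N :=
    le_trans (le_trans (le_max_left _ _) hN₁) (hSg_mono (le_max_left _ _))
  have hT2 : (8 * C₀ / δ + 1) ^ p ≤ Sg N :=
    le_trans (le_trans (le_max_right _ _) hN₁) (hSg_mono (le_max_left _ _))
  -- the test function and the explicit forms
  set x : ℕ → ℝ := fun n => β n ^ (-γ) with hxdef
  have hx_ge1 : ∀ k, 1 ≤ x k := fun k => by
    show (1:ℝ) ≤ β k ^ (-γ)
    have := aux_rpow_anti (hβpos k) (hβle1 k) (show -γ ≤ 0 by linarith)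
    rwa [Real.one_rpow] at this
  set d : ℕ → ℝ := fun mm => if mm = 0 then 1 else β mm ^ (-δ) - β (mm-1) ^ (-δ) with hddef
  have hd_eq : ∀ mm, d mm = if mm = 0 then 1 else β mm ^ (-δ) - β (mm-1) ^ (-δ) :=
    fun _ => rfl
  have hd_nonneg : ∀ mm, 0 ≤ d mm := by
    intro mm
    rw [hd_eq]
    rcases Nat.eq_zero_or_pos mm with rfl | hmm
    · norm_num
    · rw [if_neg (by omega)]
      have := aux_rpow_anti (hβpos mm) (hβanti (show mm - 1 ≤ mm by omega))
        (show -δ ≤ 0 by linarith)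
      linarith
  set A : ℕ → ℝ := fun k => ∑ n ∈ Finset.Icc 1 k, x n * (1 - r n) with hAdef
  have hxr : ∀ k, x (k+1) * r (k+1) ≤ x k := by
    intro k
    have e1 : β (k+1) ^ (-γ) * β (k+1) = β (k+1) ^ δ := by
      rw [← Real.rpow_add_one (hβpos (k+1)).ne' (-γ), show -γ + 1 = δ by linarith]
    have e2 : β k ^ δ / β k = x k := by
      show β k ^ δ / β k = β k ^ (-γ)
      rw [div_eq_mul_inv, ← Real.rpow_neg_one (β k), ← Real.rpow_add (hβpos k),
        show δ + (-1) = -γ by linarith]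
    have e3 : x (k+1) * r (k+1) = β (k+1) ^ δ / β k := by
      show β (k+1) ^ (-γ) * (β (k+1) / β k) = β (k+1) ^ δ / β k
      rw [← e1]; ring
    rw [e3, ← e2]
    gcongr
    exact hβanti (Nat.le_succ k)
  have hA_ge : ∀ k, x k - 1 ≤ A k := by
    intro k
    induction k with
    | zero =>
      have hA0 : A 0 = 0 := by
        show (∑ n ∈ Finset.Icc 1 0, x n * (1 - r n)) = 0
        rw [Finset.Icc_eq_empty (by omega), Finset.sum_empty]
      have hx0 : x 0 = 1 := by
        show β 0 ^ (-γ) = 1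
        rw [hβ0, Real.one_rpow]
      rw [hA0, hx0]
      linarith
    | succ k ih =>
      have hsplit : A (k+1) = A k + x (k+1) * (1 - r (k+1)) :=
        Finset.sum_Icc_succ_top (by omega) _
      have := hxr k
      have h1 := hr_le1 (k+1) (by omega)
      have h2 := (hr_pos (k+1)).le
      have h3 := hx_ge1 (k+1)
      rw [hsplit]
      nlinarith
  have hA_nonneg : ∀ k, 0 ≤ A k := fun k => le_trans (by linarith [hx_ge1 k]) (hA_ge k)
  set F : Ω → ℝ := (a N).indicator (fun _ => (β N)⁻¹) with hFdef
  have hF_int : Integrable F P := (integrable_const _).indicator (ha N)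
  have hF_norm : eLpNorm F 1 P = 1 := by
    rw [hFdef, eLpNorm_indicator_const (ha N) one_ne_zero ENNReal.one_ne_top]
    simp only [ENNReal.toReal_one, div_one, ENNReal.rpow_one]
    rw [show ‖(β N)⁻¹‖ₑ = ENNReal.ofReal ((β N)⁻¹) by
      rw [Real.enorm_eq_ofReal_abs, abs_of_nonneg (inv_nonneg.mpr (hβpos N).le)]]
    rw [show P (a N) = ENNReal.ofReal (β N) by
      rw [hβdef]; exact (ENNReal.ofReal_toReal (measure_ne_top _ _)).symm]
    rw [← ENNReal.ofReal_mul (inv_nonneg.mpr (hβpos N).le)]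
    rw [inv_mul_cancel₀ (hβpos N).ne']
    exact ENNReal.ofReal_one
  set G : Ω → ℝ := fun ω => ∑ n ∈ Finset.Icc 1 N, (x n * aI a n ω - x n * r n * aI a (n-1) ω)
    with hGdef
  set h : Ω → ℝ := fun ω => ∑ mm ∈ Finset.range (N+1), d mm * aI a mm ω with hhdef
  have hh_nonneg : ∀ ω, 0 ≤ h ω := fun ω => Finset.sum_nonneg fun mm _ =>
    mul_nonneg (hd_nonneg mm) (aI_nonneg mm ω)
  have hG_meas : Measurable G :=
    Finset.measurable_sum _ fun n _ =>
      ((aI_meas ha n).const_mul _).sub ((aI_meas ha (n-1)).const_mul _)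
  have hh_meas : Measurable h :=
    Finset.measurable_sum _ fun mm _ => (aI_meas ha mm).const_mul _
  have hSF : ∀ k, SigmaFinite (P.trim (pf.le_ambient k)) := fun k => by
    haveI := MeasureTheory.isFiniteMeasure_trim (μ := P) (pf.le_ambient k)
    infer_instance
  -- identify the conjugate Riesz sums with G, a.e.
  have hAE : (fun ω => ∑ n ∈ Finset.Icc 1 N,
        (pf.E n (pf.M δ n (pf.E n F)) ω - pf.E (n - 1) (pf.M δ n (pf.E n F)) ω)) =ᵐ[P] G := by
    have key : ∀ n ∈ Finset.Icc 1 N,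
        (fun ω => pf.E n (pf.M δ n (pf.E n F)) ω - pf.E (n - 1) (pf.M δ n (pf.E n F)) ω)
          =ᵐ[P] (fun ω => x n * aI a n ω - x n * r n * aI a (n-1) ω) := by
      intro n hn
      simp only [Finset.mem_Icc] at hn
      have hn1 : 1 ≤ n := hn.1
      have hnN : n ≤ N := hn.2
      haveI := hSF n
      haveI := hSF (n-1)
      have step1 : pf.E n F =ᵐ[P] (a n).indicator (fun _ => (β n)⁻¹) := by
        have hsub : a N ⊆ pf.part n (pf.idx n ω₀) := hanti hnN
        have h1 := pf.condexp_indicator_of_subset_atom n (pf.idx n ω₀)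
          (hω₀ n) (ha N) hsub ((β N)⁻¹)
        refine h1.trans (Filter.EventuallyEq.of_eq ?_)
        have hc : (β N)⁻¹ * (P (a N)).toReal / (P (pf.part n (pf.idx n ω₀))).toReal
            = (β n)⁻¹ := by
          show (β N)⁻¹ * β N / β n = (β n)⁻¹
          rw [inv_mul_cancel₀ (hβpos N).ne', one_div]
        rw [hc]
        rfl
      have step2 : pf.M δ n (pf.E n F) =ᵐ[P] (a n).indicator (fun _ => x n) := by
        refine step1.mono fun ω hω => ?_
        show pf.b n ω ^ δ * pf.E n F ω = (a n).indicator (fun _ => x n) ω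
        rw [hω]
        by_cases hmem : ω ∈ a n
        · rw [Set.indicator_of_mem hmem, Set.indicator_of_mem hmem]
          rw [pf.b_eq_on_atom (show ω ∈ pf.atom n ω₀ from hmem)]
          show β n ^ δ * (β n)⁻¹ = x n
          rw [show x n = β n ^ (-γ) from rfl, ← Real.rpow_neg_one (β n),
            ← Real.rpow_add (hβpos n), show δ + (-1) = -γ by linarith]
        · rw [Set.indicator_of_notMem hmem, Set.indicator_of_notMem hmem, mul_zero]
      have hsm : StronglyMeasurable[pf.filt n] ((a n).indicator (fun _ => x n)) :=
        (@stronglyMeasurable_const Ω ℝ (pf.filt n) _ _).indicator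
          (pf.measurableSet_filt_part n (pf.idx n ω₀))
      have hle : pf.filt n ≤ m := pf.le_ambient n
      haveI : SigmaFinite (P.trim hle) := hSF n
      have step3 : pf.E n (pf.M δ n (pf.E n F)) =ᵐ[P] (a n).indicator (fun _ => x n) :=
        (condExp_congr_ae (m := pf.filt n) (m₀ := m) (μ := P) step2).trans
          (Filter.EventuallyEq.of_eq (condExp_of_stronglyMeasurable hle hsm
            ((integrable_const _).indicator (ha n))))
      have step4 : pf.E (n-1) (pf.M δ n (pf.E n F))
          =ᵐ[P] (a (n-1)).indicator (fun _ => x n * r n) := by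
        have hsub2 : a n ⊆ pf.part (n-1) (pf.idx (n-1) ω₀) := hanti (show n-1 ≤ n by omega)
        have h2 := pf.condexp_indicator_of_subset_atom (n-1) (pf.idx (n-1) ω₀)
          (hω₀ (n-1)) (ha n) hsub2 (x n)
        refine ((condExp_congr_ae (m := pf.filt (n-1)) (m₀ := m) (μ := P) step2).trans
          h2).trans (Filter.EventuallyEq.of_eq ?_)
        have hc : x n * (P (a n)).toReal / (P (pf.part (n-1) (pf.idx (n-1) ω₀))).toReal
            = x n * r n := by
          show x n * β n / β (n-1) = x n * r n
          rw [show r n = β n / β (n-1) from rfl]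
          ring
        rw [hc]
        rfl
      refine (step3.sub step4).trans (Filter.EventuallyEq.of_eq ?_)
      funext ω
      rw [Pi.sub_apply, aux_indicator_const_mul (a n) (x n) ω,
        aux_indicator_const_mul (a (n-1)) (x n * r n) ω]
      show x n * aI a n ω - (x n * r n) * aI a (n-1) ω
        = x n * aI a n ω - x n * r n * aI a (n-1) ω
      ring
    have hall : ∀ᵐ ω ∂P, ∀ n ∈ Finset.Icc 1 N,
        pf.E n (pf.M δ n (pf.E n F)) ω - pf.E (n - 1) (pf.M δ n (pf.E n F)) ω
          = x n * aI a n ω - x n * r n * aI a (n-1) ω := by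
      rw [Filter.eventually_all_finset]
      exact key
    refine hall.mono fun ω hω => ?_
    show (∑ n ∈ Finset.Icc 1 N,
        (pf.E n (pf.M δ n (pf.E n F)) ω - pf.E (n - 1) (pf.M δ n (pf.E n F)) ω))
      = ∑ n ∈ Finset.Icc 1 N, (x n * aI a n ω - x n * r n * aI a (n-1) ω)
    exact Finset.sum_congr rfl fun n hn => hω n hn
  -- apply the assumed bound
  have hC' := hC F hF_int N hN1
  rw [hF_norm, mul_one] at hC'
  have hGnorm : eLpNorm G (ENNReal.ofReal p) P ≤ ENNReal.ofReal C₀ := by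
    rw [← eLpNorm_congr_ae hAE, ← hCC₀]
    exact hC'
  -- the integral of G * h
  have KInt : ∫ ω, G ω * h ω ∂P
      = ∑ mm ∈ Finset.range (N+1), d mm * β mm * A mm := by
    have := aux_int_G_mul_h (P := P) ha hanti x r d N (fun n hn => hrβ n hn)
    exact this
  -- lower bound for the integral
  have KLB : (δ/2) * (Sg N - Sg M) ≤ ∫ ω, G ω * h ω ∂P := by
    rw [KInt]
    have hsub : Finset.Ioc M N ⊆ Finset.range (N+1) := by
      intro mm hmm
      simp only [Finset.mem_Ioc] at hmm
      simp only [Finset.mem_range]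
      omega
    have hterm_nonneg : ∀ mm ∈ Finset.range (N+1), 0 ≤ d mm * β mm * A mm := fun mm _ =>
      mul_nonneg (mul_nonneg (hd_nonneg mm) (hβpos mm).le) (hA_nonneg mm)
    have h1 : ∑ mm ∈ Finset.Ioc M N, (d mm * β mm * A mm)
        ≤ ∑ mm ∈ Finset.range (N+1), d mm * β mm * A mm :=
      Finset.sum_le_sum_of_subset_of_nonneg hsub (fun mm hmm _ => hterm_nonneg mm hmm)
    have h2 : ∀ mm ∈ Finset.Ioc M N, (δ/2) * (1 - r mm) ≤ d mm * β mm * A mm := by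
      intro mm hmm
      simp only [Finset.mem_Ioc] at hmm
      have hmm1 : 1 ≤ mm := by omega
      have hrmm : r mm = β mm / β (mm-1) := rfl
      have hdm : d mm = β mm ^ (-δ) - β (mm-1) ^ (-δ) := by rw [hd_eq, if_neg (by omega)]
      have hstep1 : d mm * β mm * (x mm - 1) ≤ d mm * β mm * A mm := by
        have hge := hA_ge mm
        have hnn : 0 ≤ d mm * β mm := mul_nonneg (hd_nonneg mm) (hβpos mm).le
        nlinarith
      have hident : d mm * β mm * (x mm - 1) = (1 - r mm ^ δ) * (1 - β mm ^ γ) := by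
        rw [hdm, hrmm]
        rw [show x mm = β mm ^ (-γ) from rfl]
        exact aux_term_lb (hβpos mm) (hβanti (show mm - 1 ≤ mm by omega)) (hβpos (mm-1)) hγδ
      have hb1 : δ * (1 - r mm) ≤ 1 - r mm ^ δ :=
        aux_bernoulli_s14 (hr_pos mm).le (hr_le1 mm hmm1) hδpos.le hδlt.le
      have hb2 : (1:ℝ)/2 ≤ 1 - β mm ^ γ := by
        have hmono : β mm ^ γ ≤ β M ^ γ :=
          Real.rpow_le_rpow (hβpos mm).le (hβanti (by omega)) hγpos.le
        linarith [hMγ]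
      have h0 : 0 ≤ δ * (1 - r mm) := mul_nonneg hδpos.le (by linarith [hr_le1 mm hmm1])
      have hprod : (δ * (1 - r mm)) * (1/2) ≤ (1 - r mm ^ δ) * (1 - β mm ^ γ) :=
        mul_le_mul hb1 hb2 (by norm_num) (by linarith)
      calc (δ/2) * (1 - r mm) = (δ * (1 - r mm)) * (1/2) := by ring
        _ ≤ (1 - r mm ^ δ) * (1 - β mm ^ γ) := hprod
        _ = d mm * β mm * (x mm - 1) := hident.symm
        _ ≤ d mm * β mm * A mm := hstep1
    have h3 : ∑ mm ∈ Finset.Ioc M N, (δ/2) * (1 - r mm)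
        ≤ ∑ mm ∈ Finset.Ioc M N, d mm * β mm * A mm := Finset.sum_le_sum h2
    have h4 : (δ/2) * (Sg N - Sg M) = ∑ mm ∈ Finset.Ioc M N, (δ/2) * (1 - r mm) := by
      have hsum : ∑ mm ∈ Finset.Ioc M N, (1 - r mm) = Sg N - Sg M := by
        linarith [hSg_split hMN]
      rw [← Finset.mul_sum, hsum]
    linarith [h1, h3, h4]
  -- the q-integral of h
  have hpowq : ∀ k, (β k ^ (-δ)) ^ q = (β k)⁻¹ := fun k => by
    rw [← Real.rpow_mul (hβpos k).le, neg_mul, hδq, Real.rpow_neg_one]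
  have hDpre : ∀ mm, (∑ i ∈ Finset.range (mm+1), d i) = β mm ^ (-δ) := by
    intro mm
    induction mm with
    | zero =>
      rw [Finset.sum_range_one, hd_eq, if_pos rfl, hβ0, Real.one_rpow]
    | succ mm ih =>
      rw [Finset.sum_range_succ, ih, hd_eq, if_neg (by omega)]
      have : (mm + 1 - 1) = mm := rfl
      rw [this]
      ring
  have Khq : ∫ ω, (h ω) ^ q ∂P = 1 + Sg N := by
    have hint := aux_int_hpow (P := P) ha hanti ha0 d (show q ≠ 0 from hq0.ne') N
    have hgoal : (∫ ω, (h ω) ^ q ∂P)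
        = ∫ ω, (∑ mm ∈ Finset.range (N+1), d mm * aI a mm ω) ^ q ∂P := rfl
    rw [hgoal, hint]
    have hterm : ∀ mm ∈ Finset.Icc 1 N,
        ((∑ i ∈ Finset.range (mm+1), d i) ^ q - (∑ i ∈ Finset.range mm, d i) ^ q)
          * (P (a mm)).toReal = 1 - r mm := by
      intro mm hmm
      simp only [Finset.mem_Icc] at hmm
      have hmm1 : 1 ≤ mm := hmm.1
      have e1 : (∑ i ∈ Finset.range mm, d i) = β (mm-1) ^ (-δ) := by
        have e0 := hDpre (mm-1)
        rwa [show mm - 1 + 1 = mm from by omega] at e0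
      rw [hDpre mm, e1, hpowq, hpowq]
      show ((β mm)⁻¹ - (β (mm-1))⁻¹) * β mm = 1 - β mm / β (mm-1)
      field_simp [(hβpos mm).ne', (hβpos (mm-1)).ne']
    have hsplit : Finset.range (N+1) = insert 0 (Finset.Icc 1 N) := by
      ext z
      simp only [Finset.mem_range, Finset.mem_insert, Finset.mem_Icc]
      omega
    rw [hsplit, Finset.sum_insert (by simp)]
    have hzero : ((∑ i ∈ Finset.range (0+1), d i) ^ q - (∑ i ∈ Finset.range 0, d i) ^ q)
        * (P (a 0)).toReal = 1 := by
      rw [hDpre 0, hβ0, Real.one_rpow, Finset.sum_range_zero, Real.one_rpow,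
        Real.zero_rpow hq0.ne']
      show (1 - 0) * β 0 = 1
      rw [hβ0]; ring
    rw [hzero, Finset.sum_congr rfl hterm]
  -- Hölder chain
  have KUB : ENNReal.ofReal (∫ ω, G ω * h ω ∂P)
      ≤ eLpNorm G (ENNReal.ofReal p) P * ENNReal.ofReal ((1 + Sg N) ^ δ) := by
    have s1 : ENNReal.ofReal (∫ ω, G ω * h ω ∂P)
        ≤ ∫⁻ ω, (‖G ω‖₊ : ℝ≥0∞) * ENNReal.ofReal (h ω) ∂P := by
      calc ENNReal.ofReal (∫ ω, G ω * h ω ∂P) ≤ (‖∫ ω, G ω * h ω ∂P‖₊ : ℝ≥0∞) :=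
            Real.ofReal_le_enorm _
      _ ≤ ∫⁻ ω, (‖G ω * h ω‖₊ : ℝ≥0∞) ∂P := enorm_integral_le_lintegral_enorm _
      _ = ∫⁻ ω, (‖G ω‖₊ : ℝ≥0∞) * ENNReal.ofReal (h ω) ∂P := by
          refine lintegral_congr fun ω => ?_
          rw [nnnorm_mul, ENNReal.coe_mul, ← enorm_eq_nnnorm (h ω), Real.enorm_eq_ofReal_abs (h ω),
            abs_of_nonneg (hh_nonneg ω)]
    have s2 : ∫⁻ ω, (‖G ω‖₊ : ℝ≥0∞) * ENNReal.ofReal (h ω) ∂P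
        ≤ (∫⁻ ω, (‖G ω‖₊ : ℝ≥0∞) ^ p ∂P) ^ (1/p)
          * (∫⁻ ω, (ENNReal.ofReal (h ω)) ^ q ∂P) ^ (1/q) := by
      have := ENNReal.lintegral_mul_le_Lp_mul_Lq P hpq
        (f := fun ω => (‖G ω‖₊ : ℝ≥0∞)) (g := fun ω => ENNReal.ofReal (h ω))
        hG_meas.enorm.aemeasurable
        (ENNReal.measurable_ofReal.comp hh_meas).aemeasurable
      simpa only [Pi.mul_apply] using this
    have s3 : (∫⁻ ω, (‖G ω‖₊ : ℝ≥0∞) ^ p ∂P) ^ (1/p) = eLpNorm G (ENNReal.ofReal p) P := by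
      rw [eLpNorm_eq_lintegral_rpow_enorm_toReal (by
          simp only [ne_eq, ENNReal.ofReal_eq_zero, not_le]; exact hp0)
        ENNReal.ofReal_ne_top, ENNReal.toReal_ofReal hp0.le]
      rfl
    have s4 : (∫⁻ ω, (ENNReal.ofReal (h ω)) ^ q ∂P) ^ (1/q)
        = ENNReal.ofReal ((1 + Sg N) ^ δ) := by
      have e1 : ∀ ω, (ENNReal.ofReal (h ω)) ^ q = ENNReal.ofReal ((h ω) ^ q) := fun ω =>
        ENNReal.ofReal_rpow_of_nonneg (hh_nonneg ω) hq0.le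
      rw [lintegral_congr e1]
      have hq_int : Integrable (fun ω => (h ω) ^ q) P :=
        aux_hpow_integrable ha hanti ha0 d hq0.ne' N
      rw [← MeasureTheory.ofReal_integral_eq_lintegral_ofReal hq_int
        (Filter.Eventually.of_forall fun ω => Real.rpow_nonneg (hh_nonneg ω) q)]
      rw [Khq]
      rw [ENNReal.ofReal_rpow_of_nonneg (by linarith [hSg_nonneg N])
        (one_div_nonneg.mpr hq0.le)]
      rw [show (1:ℝ)/q = δ from hδinvq.symm]
    calc ENNReal.ofReal (∫ ω, G ω * h ω ∂P)
        ≤ ∫⁻ ω, (‖G ω‖₊ : ℝ≥0∞) * ENNReal.ofReal (h ω) ∂P := s1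
    _ ≤ (∫⁻ ω, (‖G ω‖₊ : ℝ≥0∞) ^ p ∂P) ^ (1/p)
          * (∫⁻ ω, (ENNReal.ofReal (h ω)) ^ q ∂P) ^ (1/q) := s2
    _ = eLpNorm G (ENNReal.ofReal p) P * ENNReal.ofReal ((1 + Sg N) ^ δ) := by rw [s3, s4]
  -- combine to get the scalar inequality
  have Hmain : (δ/2) * (Sg N - Sg M) ≤ C₀ * (1 + Sg N) ^ δ := by
    have h1 : ENNReal.ofReal ((δ/2) * (Sg N - Sg M)) ≤ ENNReal.ofReal (C₀ * (1 + Sg N) ^ δ) := by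
      calc ENNReal.ofReal ((δ/2) * (Sg N - Sg M)) ≤ ENNReal.ofReal (∫ ω, G ω * h ω ∂P) :=
            ENNReal.ofReal_le_ofReal KLB
      _ ≤ eLpNorm G (ENNReal.ofReal p) P * ENNReal.ofReal ((1 + Sg N) ^ δ) := KUB
      _ ≤ ENNReal.ofReal C₀ * ENNReal.ofReal ((1 + Sg N) ^ δ) :=
            mul_le_mul_left hGnorm _
      _ = ENNReal.ofReal (C₀ * (1 + Sg N) ^ δ) :=
            (ENNReal.ofReal_mul hC₀nonneg).symm
    exact (ENNReal.ofReal_le_ofReal_iff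
      (mul_nonneg hC₀nonneg (Real.rpow_nonneg (by linarith [hSg_nonneg N]) δ))).mp h1
  -- final numeric contradiction
  have hTpos : 0 < 1 + Sg N := by have := hSg_nonneg N; linarith
  have hW : 0 < (1 + Sg N) ^ δ := Real.rpow_pos_of_pos hTpos δ
  have hV : 8 * C₀ / δ + 1 ≤ (1 + Sg N) ^ γ := by
    have hz : (0:ℝ) ≤ 8 * C₀ / δ + 1 := by
      have : (0:ℝ) ≤ 8 * C₀ / δ := div_nonneg (by linarith) hδpos.le
      linarith
    calc 8 * C₀ / δ + 1 = ((8 * C₀ / δ + 1) ^ p) ^ γ := by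
          rw [← Real.rpow_mul hz, hpγ, Real.rpow_one]
    _ ≤ (1 + Sg N) ^ γ := Real.rpow_le_rpow (Real.rpow_nonneg hz p) (by linarith) hγpos.le
  have hVW : (1 + Sg N) ^ γ * (1 + Sg N) ^ δ = 1 + Sg N := by
    rw [← Real.rpow_add hTpos, hγδ, Real.rpow_one]
  have h1 : (1 + Sg N) / 2 ≤ Sg N - Sg M := by linarith
  have h2 : (δ/4) * (1 + Sg N) ≤ C₀ * (1 + Sg N) ^ δ := by nlinarith
  have h3 : (8 * C₀ / δ + 1) * (1 + Sg N) ^ δ ≤ 1 + Sg N := by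
    calc (8 * C₀ / δ + 1) * (1 + Sg N) ^ δ ≤ (1 + Sg N) ^ γ * (1 + Sg N) ^ δ :=
          mul_le_mul_of_nonneg_right hV hW.le
    _ = 1 + Sg N := hVW
  have h4 : (δ/4) * ((8 * C₀ / δ + 1) * (1 + Sg N) ^ δ) ≤ C₀ * (1 + Sg N) ^ δ := by
    calc (δ/4) * ((8 * C₀ / δ + 1) * (1 + Sg N) ^ δ) ≤ (δ/4) * (1 + Sg N) :=
          mul_le_mul_of_nonneg_left h3 (by linarith)
    _ ≤ C₀ * (1 + Sg N) ^ δ := h2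
  have h5 : (δ/4) * ((8 * C₀ / δ + 1) * (1 + Sg N) ^ δ)
      = (2 * C₀ + δ/4) * (1 + Sg N) ^ δ := by
    field_simp
    ring
  rw [h5] at h4
  nlinarith [mul_pos (show (0:ℝ) < C₀ + δ/4 by linarith) hW]
end
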